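/- arXiv:2303.05842 — 11 statements merged into one kernel-verified Lean document; each statement's English description precedes it below -/
import Mathlib

section
/- The cohesive energy density Φ is nonnegative, bounded, and continuous on the whole of [0,∞)². More precisely, 0 ≤ Φ(y,z) ≤ sup_{s≥0} ψ(s) for all (y,z) ∈ [0,∞)². -/
set_option autoImplicit false

open Set

/-- The cohesive energy density `Φ` is nonnegative, bounded and continuous
on `[0,∞)²`; more precisely `0 ≤ Φ y z ≤ sup_{s ≥ 0} ψ s`. -/
theorem stmt_0 (ψ ψd ψdd : ℝ → ℝ) (lam : ℝ) (hlam : 0 < lam)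
    (hψmap : ∀ z ∈ Ici (0:ℝ), 0 ≤ ψ z)
    (hmono : StrictMonoOn ψ (Ici (0:ℝ)))
    (hbdd : BddAbove (ψ '' Ici (0:ℝ)))
    (hconc : ConcaveOn ℝ (Ici (0:ℝ)) ψ)
    (hd1 : ∀ z ∈ Ici (0:ℝ), HasDerivWithinAt ψ (ψd z) (Ici (0:ℝ)) z)
    (hd2 : ∀ z ∈ Ici (0:ℝ), HasDerivWithinAt ψd (ψdd z) (Ici (0:ℝ)) z)
    (hd2cont : ContinuousOn ψdd (Ici (0:ℝ)))
    (hψ0 : ψ 0 = 0) (hψd0 : 0 < ψd 0)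
    (hlow : ∀ z ∈ Ici (0:ℝ), -lam ≤ ψdd z)
    (Φ : ℝ → ℝ → ℝ)
    (hΦ : ∀ y ∈ Ici (0:ℝ), ∀ z ∈ Ici (0:ℝ),
      Φ y z = if y < z then ψd z / (2*z) * y^2 + ψ z - z * ψd z / 2 else ψ y) :
    (∀ y ∈ Ici (0:ℝ), ∀ z ∈ Ici (0:ℝ),
        0 ≤ Φ y z ∧ Φ y z ≤ sSup (ψ '' Ici (0:ℝ))) ∧
    ContinuousOn (Function.uncurry Φ) (Ici (0:ℝ) ×ˢ Ici (0:ℝ)) := by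
  -- Basic continuity of ψ and ψd on [0,∞)
  have hψcont : ContinuousOn ψ (Ici (0:ℝ)) := fun z hz => (hd1 z hz).continuousWithinAt
  have hψdcont : ContinuousOn ψd (Ici (0:ℝ)) := fun z hz => (hd2 z hz).continuousWithinAt
  -- ψd is nonnegative on [0,∞)
  have hψd_nonneg : ∀ z ∈ Ici (0:ℝ), 0 ≤ ψd z := by
    intro z hz
    have h1 : slope ψ z (z+1) ≤ ψd z :=
      hconc.slope_le_of_hasDerivWithinAt hz (by simp at hz ⊢; linarith) (by linarith) (hd1 z hz)
    have h2 : 0 ≤ slope ψ z (z+1) := by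
      rw [slope_def_field]
      have : ψ z ≤ ψ (z+1) := (hmono.monotoneOn) hz (by simp at hz ⊢; linarith) (by linarith)
      have hd : z + 1 - z = 1 := by ring
      rw [div_nonneg_iff]
      left; constructor <;> [linarith; linarith [hd]]
    linarith
  -- tangent line bound : z * ψd z ≤ ψ z
  have htan : ∀ z ∈ Ici (0:ℝ), z * ψd z ≤ ψ z := by
    intro z hz
    rcases eq_or_lt_of_le (mem_Ici.1 hz) with h | h
    · simp [← h, hψ0]
    · have h1 : ψd z ≤ slope ψ 0 z :=
        hconc.le_slope_of_hasDerivWithinAt (self_mem_Ici) hz h (hd1 z hz)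
      rw [slope_def_field, hψ0, sub_zero, sub_zero] at h1
      calc z * ψd z ≤ z * (ψ z / z) := by
            exact mul_le_mul_of_nonneg_left h1 (le_of_lt h)
        _ = ψ z := by field_simp
  -- the global formula
  set F : ℝ × ℝ → ℝ := fun p =>
    if p.1 < p.2 then ψd p.2 / (2*p.2) * p.1^2 + ψ p.2 - p.2 * ψd p.2 / 2 else ψ p.1 with hF
  have hFeq : ∀ p ∈ (Ici (0:ℝ) ×ˢ Ici (0:ℝ)), Function.uncurry Φ p = F p := by
    rintro ⟨y, z⟩ ⟨hy, hz⟩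
    simp only [Function.uncurry, hF]
    exact hΦ y hy z hz
  -- key bounds for F
  have hkey : ∀ p ∈ (Ici (0:ℝ) ×ˢ Ici (0:ℝ)), 0 ≤ F p ∧ F p ≤ ψ (max p.1 p.2) := by
    rintro ⟨y, z⟩ ⟨hy, hz⟩
    simp only [hF]
    by_cases hyz : y < z
    · simp only [if_pos hyz]
      have hz0 : 0 < z := lt_of_le_of_lt (mem_Ici.1 hy) hyz
      have hψdz : 0 ≤ ψd z := hψd_nonneg z hz
      have htz : z * ψd z ≤ ψ z := htan z hz
      have hψz : 0 ≤ ψ z := hψmap z hz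
      have h1 : 0 ≤ ψd z / (2*z) * y^2 := by positivity
      have h2 : ψd z / (2*z) * y^2 ≤ z * ψd z / 2 := by
        have : y^2 ≤ z^2 := by nlinarith [mem_Ici.1 hy]
        calc ψd z / (2*z) * y^2 ≤ ψd z / (2*z) * z^2 := by
              apply mul_le_mul_of_nonneg_left this (by positivity)
          _ = z * ψd z / 2 := by field_simp
      have hmax : max y z = z := max_eq_right hyz.le
      rw [hmax]
      constructor
      · nlinarith
      · linarith
    · simp only [if_neg hyz]
      have hmax : max y z = y := max_eq_left (not_lt.1 hyz)
      rw [hmax]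
      exact ⟨hψmap y hy, le_refl _⟩
  constructor
  · intro y hy z hz
    have h := hkey (y, z) ⟨hy, hz⟩
    have hPhiF : Φ y z = F (y, z) := by simp only [hF]; exact hΦ y hy z hz
    rw [← hPhiF] at h
    refine ⟨h.1, h.2.trans ?_⟩
    exact le_csSup hbdd ⟨max y z, mem_Ici.2 (le_max_of_le_left (mem_Ici.1 hy)), rfl⟩
  · -- continuity
    apply ContinuousOn.congr _ hFeq
    rintro ⟨y, z⟩ ⟨hy, hz⟩
    have hy' := mem_Ici.1 hy
    have hz' := mem_Ici.1 hz
    -- auxiliary: continuity of compositions within any subset T of the quadrant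
    have hsnd : ∀ (g : ℝ → ℝ), ContinuousOn g (Ici (0:ℝ)) → ∀ T ⊆ (Ici (0:ℝ) ×ˢ Ici (0:ℝ)),
        ContinuousWithinAt (fun p : ℝ × ℝ => g p.2) T (y, z) := by
      intro g hg T hT
      exact ContinuousWithinAt.comp (hg z hz) (continuousWithinAt_snd)
        (fun p hp => (hT hp).2)
    have hfst : ∀ (g : ℝ → ℝ), ContinuousOn g (Ici (0:ℝ)) → ∀ T ⊆ (Ici (0:ℝ) ×ˢ Ici (0:ℝ)),
        ContinuousWithinAt (fun p : ℝ × ℝ => g p.1) T (y, z) := by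
      intro g hg T hT
      exact ContinuousWithinAt.comp (hg y hy) (continuousWithinAt_fst)
        (fun p hp => (hT hp).1)
    -- the smooth branch, continuous when the second coordinate is positive
    have hbranch : 0 < z → ∀ T ⊆ (Ici (0:ℝ) ×ˢ Ici (0:ℝ)),
        ContinuousWithinAt
          (fun p : ℝ × ℝ => ψd p.2 / (2*p.2) * p.1^2 + ψ p.2 - p.2 * ψd p.2 / 2) T (y, z) := by
      intro hz0 T hT
      have h1 := hsnd ψd hψdcont T hT
      have h2 := hsnd ψ hψcont T hT
      have h3 : ContinuousWithinAt (fun p : ℝ × ℝ => (2:ℝ)*p.2) T (y, z) :=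
        (continuous_const.mul continuous_snd).continuousWithinAt
      have h4 : ContinuousWithinAt (fun p : ℝ × ℝ => p.1^2) T (y, z) :=
        ((continuous_fst.pow 2)).continuousWithinAt
      have h5 : ContinuousWithinAt (fun p : ℝ × ℝ => p.2) T (y, z) :=
        continuous_snd.continuousWithinAt
      exact (((h1.div h3 (by simp; linarith)).mul h4).add h2).sub ((h5.mul h1).div_const 2)
    rcases lt_trichotomy y z with hlt | heq | hgt
    · -- case y < z : F agrees with the smooth branch near (y,z)
      have hz0 : 0 < z := lt_of_le_of_lt hy' hlt
      have hU : {p : ℝ × ℝ | p.1 < p.2} ∈ nhds (y, z) :=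
        (isOpen_lt continuous_fst continuous_snd).mem_nhds hlt
      refine ContinuousWithinAt.congr_of_eventuallyEq
        (hbranch hz0 _ (Set.Subset.refl _)) ?_ (by simp only [hF]; exact if_pos hlt)
      filter_upwards [mem_nhdsWithin_of_mem_nhds hU] with p hp
      simp only [hF]; exact if_pos hp
    · -- case y = z
      subst heq
      rcases eq_or_lt_of_le hy' with h0 | h0
      · -- (0,0) : squeeze
        have h0 : y = 0 := h0.symm
        subst h0
        have hF0 : F (0, 0) = 0 := by simp [hF, hψ0]
        rw [ContinuousWithinAt, hF0]
        have hmaxt : Filter.Tendsto (fun p : ℝ × ℝ => max p.1 p.2)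
            (nhdsWithin (0,0) (Ici (0:ℝ) ×ˢ Ici (0:ℝ))) (nhdsWithin (0:ℝ) (Ici (0:ℝ))) := by
          apply tendsto_nhdsWithin_of_tendsto_nhds_of_eventually_within
          · have h1 : Filter.Tendsto (fun p : ℝ × ℝ => max p.1 p.2)
                (nhds ((0:ℝ),(0:ℝ))) (nhds (max 0 0)) :=
              ((continuous_fst.max continuous_snd).tendsto _)
            simpa using h1.mono_left nhdsWithin_le_nhds
          · filter_upwards [self_mem_nhdsWithin] with p hp
            exact mem_Ici.2 (le_max_of_le_left (mem_Ici.1 hp.1))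
        have hub : Filter.Tendsto (fun p : ℝ × ℝ => ψ (max p.1 p.2))
            (nhdsWithin (0,0) (Ici (0:ℝ) ×ˢ Ici (0:ℝ))) (nhds 0) := by
          have := (hψcont 0 (self_mem_Ici)).tendsto.comp hmaxt
          simpa [hψ0, Function.comp_def] using this
        refine tendsto_of_tendsto_of_tendsto_of_le_of_le' tendsto_const_nhds hub ?_ ?_
        · filter_upwards [self_mem_nhdsWithin] with p hp using (hkey p hp).1
        · filter_upwards [self_mem_nhdsWithin] with p hp using (hkey p hp).2
      · -- (y,y) with y > 0 : glue the two branches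
        have hSsub : (Ici (0:ℝ) ×ˢ Ici (0:ℝ)) ⊆
            ((Ici (0:ℝ) ×ˢ Ici (0:ℝ)) ∩ {p : ℝ × ℝ | p.1 < p.2}) ∪
            ((Ici (0:ℝ) ×ˢ Ici (0:ℝ)) ∩ {p : ℝ × ℝ | ¬ p.1 < p.2}) := by
          intro p hp
          by_cases h : p.1 < p.2
          · exact Or.inl ⟨hp, h⟩
          · exact Or.inr ⟨hp, h⟩
        have hFyy : F (y, y) = ψ y := by simp [hF]
        refine ContinuousWithinAt.mono ?_ hSsub
        apply ContinuousWithinAt.union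
        · -- on the strict region
          have hT : ((Ici (0:ℝ) ×ˢ Ici (0:ℝ)) ∩ {p : ℝ × ℝ | p.1 < p.2}) ⊆
              (Ici (0:ℝ) ×ˢ Ici (0:ℝ)) := inter_subset_left
          refine ContinuousWithinAt.congr (hbranch h0 _ hT) ?_ ?_
          · rintro p ⟨hp, hlt⟩
            simp only [hF]; exact if_pos hlt
          · rw [hFyy]
            field_simp
            ring
        · -- on the complement region
          have hT : ((Ici (0:ℝ) ×ˢ Ici (0:ℝ)) ∩ {p : ℝ × ℝ | ¬ p.1 < p.2}) ⊆
              (Ici (0:ℝ) ×ˢ Ici (0:ℝ)) := inter_subset_left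
          refine ContinuousWithinAt.congr (hfst ψ hψcont _ hT) ?_ ?_
          · rintro p ⟨hp, hge⟩
            simp only [hF]; exact if_neg hge
          · rw [hFyy]
    · -- case y > z : F agrees with ψ ∘ fst near (y,z)
      have hU : {p : ℝ × ℝ | p.2 < p.1} ∈ nhds (y, z) :=
        (isOpen_lt continuous_snd continuous_fst).mem_nhds hgt
      refine ContinuousWithinAt.congr_of_eventuallyEq
        (hfst ψ hψcont _ (Set.Subset.refl _)) ?_
        (by simp only [hF]; exact if_neg (not_lt.2 hgt.le))
      filter_upwards [mem_nhdsWithin_of_mem_nhds hU] with p hp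
      simp only [hF]; exact if_neg (not_lt.2 (le_of_lt hp))
end

section
/- For every z ≥ 0 the function y ↦ Φ(y,z) is nondecreasing, Lipschitz continuous and of class C¹ on [0,∞). Moreover 0 ≤ ∂_yΦ(y,z) ≤ ∂_yΦ(z,z) = ψ'(z) ≤ ψ'(0) for all y,z ≥ 0; if z > 0 then ∂_yΦ(0,z) = 0; and the function ∂_yΦ is continuous on [0,∞)² \ {(0,0)}. -/
set_option autoImplicit false

open Set Filter Topology

/-- The partial derivative `∂_yΦ`. -/
noncomputable def phiY (ψd : ℝ → ℝ) (y z : ℝ) : ℝ :=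
  if y < z then ψd z * y / z else ψd y

/-- properties of `y ↦ Φ(y,z)` and of the partial derivative `∂_yΦ`. -/
theorem stmt_1 (ψ ψd ψdd : ℝ → ℝ) (lam : ℝ) (hlam : 0 < lam)
    (hψmap : ∀ z ∈ Ici (0:ℝ), 0 ≤ ψ z)
    (hmono : StrictMonoOn ψ (Ici (0:ℝ)))
    (hbdd : BddAbove (ψ '' Ici (0:ℝ)))
    (hconc : ConcaveOn ℝ (Ici (0:ℝ)) ψ)
    (hd1 : ∀ z ∈ Ici (0:ℝ), HasDerivWithinAt ψ (ψd z) (Ici (0:ℝ)) z)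
    (hd2 : ∀ z ∈ Ici (0:ℝ), HasDerivWithinAt ψd (ψdd z) (Ici (0:ℝ)) z)
    (hd2cont : ContinuousOn ψdd (Ici (0:ℝ)))
    (hψ0 : ψ 0 = 0) (hψd0 : 0 < ψd 0)
    (hlow : ∀ z ∈ Ici (0:ℝ), -lam ≤ ψdd z)
    (Φ : ℝ → ℝ → ℝ)
    (hΦ : ∀ y ∈ Ici (0:ℝ), ∀ z ∈ Ici (0:ℝ),
      Φ y z = if y < z then ψd z / (2*z) * y^2 + ψ z - z * ψd z / 2 else ψ y) :
    ∃ Φy : ℝ → ℝ → ℝ,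
      (∀ z ∈ Ici (0:ℝ), MonotoneOn (fun y => Φ y z) (Ici (0:ℝ))) ∧
      (∀ z ∈ Ici (0:ℝ), ∃ K : NNReal, LipschitzOnWith K (fun y => Φ y z) (Ici (0:ℝ))) ∧
      (∀ z ∈ Ici (0:ℝ), ∀ y ∈ Ici (0:ℝ),
        HasDerivWithinAt (fun y' => Φ y' z) (Φy y z) (Ici (0:ℝ)) y) ∧
      (∀ z ∈ Ici (0:ℝ), ContinuousOn (fun y => Φy y z) (Ici (0:ℝ))) ∧
      (∀ y ∈ Ici (0:ℝ), ∀ z ∈ Ici (0:ℝ),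
        0 ≤ Φy y z ∧ Φy y z ≤ Φy z z ∧ Φy z z = ψd z ∧ ψd z ≤ ψd 0) ∧
      (∀ z : ℝ, 0 < z → Φy 0 z = 0) ∧
      ContinuousOn (Function.uncurry Φy) ((Ici (0:ℝ) ×ˢ Ici (0:ℝ)) \ {((0:ℝ), (0:ℝ))}) := by
  -- continuity of ψd
  have hψdcont : ContinuousOn ψd (Ici 0) := fun x hx => (hd2 x hx).continuousWithinAt
  -- positivity of ψd
  have hpos : ∀ x ∈ Ici (0:ℝ), 0 < ψd x := by
    intro x hx
    have hx' : (0:ℝ) ≤ x := hx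
    have hx1 : x + 1 ∈ Ici (0:ℝ) := by simp only [mem_Ici]; linarith
    have hs : slope ψ x (x+1) ≤ ψd x :=
      hconc.slope_le_of_hasDerivWithinAt hx hx1 (by linarith) (hd1 x hx)
    have hsl : 0 < slope ψ x (x+1) := by
      rw [slope_def_field]
      apply div_pos
      · exact sub_pos.2 (hmono hx hx1 (lt_add_one x))
      · linarith
    linarith
  -- antitonicity of ψd
  have hanti : ∀ x ∈ Ici (0:ℝ), ∀ y ∈ Ici (0:ℝ), x ≤ y → ψd y ≤ ψd x := by
    intro x hx y hy hxy
    rcases eq_or_lt_of_le hxy with rfl | h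
    · exact le_refl _
    exact (hconc.le_slope_of_hasDerivWithinAt hx hy h (hd1 y hy)).trans
      (hconc.slope_le_of_hasDerivWithinAt hx hy h (hd1 x hx))
  -- nonnegativity of phiY
  have hnn : ∀ y ∈ Ici (0:ℝ), ∀ z ∈ Ici (0:ℝ), 0 ≤ phiY ψd y z := by
    intro y hy z hz
    unfold phiY
    by_cases h : y < z
    · rw [if_pos h]
      exact div_nonneg (mul_nonneg (hpos z hz).le hy) hz
    · rw [if_neg h]
      exact (hpos y hy).le
  -- upper bound by ψd z
  have hub : ∀ y ∈ Ici (0:ℝ), ∀ z ∈ Ici (0:ℝ), phiY ψd y z ≤ ψd z := by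
    intro y hy z hz
    unfold phiY
    by_cases h : y < z
    · rw [if_pos h]
      have hzpos : (0:ℝ) < z := lt_of_le_of_lt hy h
      rw [div_le_iff₀ hzpos]
      exact mul_le_mul_of_nonneg_left h.le (hpos z hz).le
    · rw [if_neg h]
      exact hanti z hz y hy (not_lt.1 h)
  have hdiag : ∀ z : ℝ, phiY ψd z z = ψd z := fun z => if_neg (lt_irrefl z)
  -- the derivative statement
  have hderiv : ∀ z ∈ Ici (0:ℝ), ∀ y ∈ Ici (0:ℝ),
      HasDerivWithinAt (fun y' => Φ y' z) (phiY ψd y z) (Ici (0:ℝ)) y := by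
    intro z hz y hy
    rcases eq_or_lt_of_le (show (0:ℝ) ≤ z from hz) with hz0 | hzpos
    · -- z = 0
      subst hz0
      have hEq : ∀ u ∈ Ici (0:ℝ), Φ u 0 = ψ u := by
        intro u hu
        rw [hΦ u hu 0 self_mem_Ici, if_neg (not_lt.2 hu)]
      have hval : phiY ψd y 0 = ψd y := if_neg (not_lt.2 hy)
      rw [hval]
      exact (hd1 y hy).congr hEq (hEq y hy)
    · -- 0 < z
      have hzne : z ≠ 0 := ne_of_gt hzpos
      have hq : ∀ u : ℝ, HasDerivAt
          (fun v => ψd z / (2*z) * v^2 + ψ z - z * ψd z / 2) (ψd z * u / z) u := by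
        intro u
        have h1 : HasDerivAt (fun v : ℝ => ψd z / (2*z) * v^2 + ψ z - z * ψd z / 2)
            (ψd z / (2*z) * (↑2 * u ^ 1)) u :=
          (((hasDerivAt_pow 2 u).const_mul (ψd z / (2*z))).add_const (ψ z)).sub_const _
        convert h1 using 1
        field_simp
      have hEq1 : ∀ u ∈ Icc (0:ℝ) z, Φ u z = ψd z / (2*z) * u^2 + ψ z - z * ψd z / 2 := by
        intro u hu
        rw [hΦ u hu.1 z hz]
        rcases lt_or_eq_of_le hu.2 with h | h
        · rw [if_pos h]
        · subst h
          rw [if_neg (lt_irrefl u)]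
          field_simp
          ring
      have hA : ∀ u ∈ Icc (0:ℝ) z,
          HasDerivWithinAt (fun y' => Φ y' z) (ψd z * u / z) (Icc 0 z) u := by
        intro u hu
        exact ((hq u).hasDerivWithinAt).congr hEq1 (hEq1 u hu)
      have hEq2 : ∀ v ∈ Ici z, Φ v z = ψ v := by
        intro v hv
        rw [hΦ v (mem_Ici.2 (le_trans (mem_Ici.1 hz) (mem_Ici.1 hv))) z hz, if_neg (not_lt.2 hv)]
      have hB : ∀ u ∈ Ici z, HasDerivWithinAt (fun y' => Φ y' z) (ψd u) (Ici z) u := by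
        intro u hu
        exact ((hd1 u (mem_Ici.2 (le_trans (mem_Ici.1 hz) (mem_Ici.1 hu)))).mono (Ici_subset_Ici.2 hz)).congr hEq2 (hEq2 u hu)
      rcases lt_trichotomy y z with h | h | h
      · have hval : phiY ψd y z = ψd z * y / z := if_pos h
        rw [hval]
        exact (hA y ⟨hy, h.le⟩).mono_of_mem_nhdsWithin
          (mem_nhdsWithin.2 ⟨Iio z, isOpen_Iio, h, fun u hu => ⟨hu.2, hu.1.le⟩⟩)
      · subst h
        rw [hdiag y]
        have h2 := hA y ⟨hy, le_refl y⟩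
        rw [mul_div_assoc, div_self hzne, mul_one] at h2
        have h3 := h2.union (hB y (le_refl y))
        rwa [Icc_union_Ici_eq_Ici hy] at h3
      · have hval : phiY ψd y z = ψd y := if_neg (not_lt.2 h.le)
        rw [hval]
        exact (hB y h.le).mono_of_mem_nhdsWithin
          (mem_nhdsWithin.2 ⟨Ioi z, isOpen_Ioi, h, fun u hu => mem_Ici.2 (mem_Ioi.1 hu.1).le⟩)
  refine ⟨phiY ψd, ?_, ?_, hderiv, ?_, ?_, ?_, ?_⟩
  · -- monotone
    intro z hz
    apply monotoneOn_of_hasDerivWithinAt_nonneg (f' := fun y => phiY ψd y z) (convex_Ici 0)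
      (fun y hy => (hderiv z hz y hy).continuousWithinAt)
    · intro x hx
      rw [interior_Ici] at hx ⊢
      exact (hderiv z hz x (mem_Ici.2 (le_of_lt (mem_Ioi.1 hx)))).mono Ioi_subset_Ici_self
    · intro x hx
      rw [interior_Ici] at hx
      exact hnn x (mem_Ici.2 (le_of_lt (mem_Ioi.1 hx))) z hz
  · -- Lipschitz
    intro z hz
    refine ⟨⟨ψd 0, hψd0.le⟩, ?_⟩
    apply Convex.lipschitzOnWith_of_nnnorm_hasDerivWithin_le
      (f' := fun y => phiY ψd y z) (convex_Ici 0) (fun u hu => hderiv z hz u hu)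
    intro u hu
    change ((‖phiY ψd u z‖₊ : NNReal) : ℝ) ≤ ψd 0
    rw [coe_nnnorm, Real.norm_eq_abs,
      abs_of_nonneg (hnn u hu z hz)]
    exact (hub u hu z hz).trans (hanti 0 self_mem_Ici z hz hz)
  · -- slice continuity
    intro z hz
    rcases eq_or_lt_of_le (show (0:ℝ) ≤ z from hz) with hz0 | hzpos
    · subst hz0
      exact hψdcont.congr fun y hy => if_neg (not_lt.2 hy)
    · have hzne : z ≠ 0 := ne_of_gt hzpos
      unfold phiY
      apply ContinuousOn.if
      · rintro a ⟨-, ha⟩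
        have : a = z := by
          have := frontier_lt_subset_eq continuous_id continuous_const ha
          simpa using this
        subst this
        rw [mul_div_assoc, div_self hzne, mul_one]
      · exact ((continuous_const.mul continuous_id).div_const z).continuousOn
      · refine hψdcont.mono fun a ha => ha.1
  · -- bounds
    intro y hy z hz
    exact ⟨hnn y hy z hz, by rw [hdiag z]; exact hub y hy z hz, hdiag z,
      hanti 0 self_mem_Ici z hz hz⟩
  · -- phiY 0 z = 0 for z > 0
    intro z hz
    simp [phiY, hz]
  · -- joint continuity
    have heq : Function.uncurry (phiY ψd) =
        fun p : ℝ × ℝ => if p.1 < p.2 then ψd p.2 * p.1 / p.2 else ψd p.1 := rfl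
    rw [heq]
    set T : Set (ℝ × ℝ) := (Ici (0:ℝ) ×ˢ Ici (0:ℝ)) \ {((0:ℝ), (0:ℝ))} with hT
    have hmemT : ∀ p ∈ T, 0 ≤ p.1 ∧ 0 ≤ p.2 ∧ p ≠ ((0:ℝ), (0:ℝ)) := by
      rintro p ⟨hp1, hp2⟩
      exact ⟨hp1.1, hp1.2, fun h => hp2 (by simp [h])⟩
    apply ContinuousOn.if
    · rintro a ⟨haT, hafr⟩
      obtain ⟨h1, h2, h3⟩ := hmemT a haT
      have hae : a.1 = a.2 := frontier_lt_subset_eq continuous_fst continuous_snd hafr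
      have h2pos : a.2 ≠ 0 := by
        intro h0
        exact h3 (Prod.ext (by rw [hae, h0]) h0)
      rw [hae, mul_div_assoc, div_self h2pos, mul_one]
    · -- continuity of the quadratic part on T ∩ closure {p.1 < p.2}
      intro p hp
      obtain ⟨h1, h2, h3⟩ := hmemT p hp.1
      have hle : p.1 ≤ p.2 := closure_lt_subset_le continuous_fst continuous_snd hp.2
      have h2pos : p.2 ≠ 0 := by
        intro h0
        apply h3
        have : p.1 = 0 := le_antisymm (h0 ▸ hle) h1
        exact Prod.ext this h0
      have hsnd : ContinuousWithinAt (fun q : ℝ × ℝ => ψd q.2)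
          (T ∩ closure {p : ℝ × ℝ | p.1 < p.2}) p := by
        apply (hψdcont p.2 h2).comp continuous_snd.continuousWithinAt
        intro q hq
        exact (hmemT q hq.1).2.1
      exact (hsnd.mul continuousWithinAt_fst).div continuousWithinAt_snd h2pos
    · -- continuity of ψd ∘ fst on the other part
      intro p hp
      apply (hψdcont p.1 (hmemT p hp.1).1).comp continuous_fst.continuousWithinAt
      intro q hq
      exact (hmemT q hq.1).1
end

section
/- For every y ≥ 0 the function z ↦ Φ(y,z) is nondecreasing and of class C¹ on [0,∞), and it is strictly increasing on [y,∞). The partial derivative ∂_zΦ is given by ∂_zΦ(y,z) = 0 for z < y and ∂_zΦ(y,z) = ((ψ'(z) − zψ''(z))/2)·(1 − y²/z²) for z ≥ y, and ∂_zΦ is continuous and strictly positive on the set {(y,z) : z > y ≥ 0}. -/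
set_option autoImplicit false

open Set Filter Topology

set_option maxHeartbeats 1000000 in
/-- properties of `z ↦ Φ(y,z)` and the explicit form of `∂_zΦ`. -/
theorem stmt_2 (ψ ψd ψdd : ℝ → ℝ) (lam : ℝ) (hlam : 0 < lam)
    (hψmap : ∀ z ∈ Ici (0:ℝ), 0 ≤ ψ z)
    (hmono : StrictMonoOn ψ (Ici (0:ℝ)))
    (hbdd : BddAbove (ψ '' Ici (0:ℝ)))
    (hconc : ConcaveOn ℝ (Ici (0:ℝ)) ψ)
    (hd1 : ∀ z ∈ Ici (0:ℝ), HasDerivWithinAt ψ (ψd z) (Ici (0:ℝ)) z)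
    (hd2 : ∀ z ∈ Ici (0:ℝ), HasDerivWithinAt ψd (ψdd z) (Ici (0:ℝ)) z)
    (hd2cont : ContinuousOn ψdd (Ici (0:ℝ)))
    (hψ0 : ψ 0 = 0) (hψd0 : 0 < ψd 0)
    (hlow : ∀ z ∈ Ici (0:ℝ), -lam ≤ ψdd z)
    (Φ : ℝ → ℝ → ℝ)
    (hΦ : ∀ y ∈ Ici (0:ℝ), ∀ z ∈ Ici (0:ℝ),
      Φ y z = if y < z then ψd z / (2*z) * y^2 + ψ z - z * ψd z / 2 else ψ y) :
    ∃ Φz : ℝ → ℝ → ℝ,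
      (∀ y ∈ Ici (0:ℝ), ∀ z ∈ Ici (0:ℝ),
        Φz y z = if z < y then 0 else (ψd z - z * ψdd z) / 2 * (1 - y^2 / z^2)) ∧
      (∀ y ∈ Ici (0:ℝ), MonotoneOn (fun z => Φ y z) (Ici (0:ℝ))) ∧
      (∀ y ∈ Ici (0:ℝ), StrictMonoOn (fun z => Φ y z) (Ici y)) ∧
      (∀ y ∈ Ici (0:ℝ), ∀ z ∈ Ici (0:ℝ),
        HasDerivWithinAt (fun z' => Φ y z') (Φz y z) (Ici (0:ℝ)) z) ∧
      (∀ y ∈ Ici (0:ℝ), ContinuousOn (fun z => Φz y z) (Ici (0:ℝ))) ∧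
      ContinuousOn (Function.uncurry Φz) {p : ℝ × ℝ | 0 ≤ p.1 ∧ p.1 < p.2} ∧
      (∀ y z : ℝ, 0 ≤ y → y < z → 0 < Φz y z) := by
  classical
  -- positivity of ψd
  have hψdpos : ∀ z ∈ Ici (0:ℝ), 0 < ψd z := by
    intro z hz
    have hz1 : z + 1 ∈ Ici (0:ℝ) := by
      simp only [mem_Ici] at hz ⊢; linarith
    have h1 : slope ψ z (z+1) ≤ ψd z :=
      hconc.slope_le_of_hasDerivWithinAt hz hz1 (lt_add_one z) (hd1 z hz)
    have h2 : 0 < slope ψ z (z+1) := by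
      rw [slope_def_field]
      have hlt := hmono hz hz1 (lt_add_one z)
      have hd : z + 1 - z = 1 := by ring
      rw [hd, div_one]
      linarith
    linarith
  -- ψd is antitone
  have hanti : AntitoneOn ψd (Ici (0:ℝ)) := by
    intro a ha b hb hab
    rcases eq_or_lt_of_le hab with rfl | hab'
    · exact le_rfl
    have h1 : ψd b ≤ slope ψ a b :=
      hconc.le_slope_of_hasDerivWithinAt ha hb hab' (hd1 b hb)
    have h2 : slope ψ a b ≤ ψd a :=
      hconc.slope_le_of_hasDerivWithinAt ha hb hab' (hd1 a ha)
    linarith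
  -- ψdd nonpositive
  have hψdd : ∀ z ∈ Ici (0:ℝ), ψdd z ≤ 0 := by
    intro z hz
    have h := (hd2 z hz).mono (Ici_subset_Ici.mpr hz)
    rw [hasDerivWithinAt_iff_tendsto_slope, Ici_sdiff_left] at h
    refine le_of_tendsto h ?_
    filter_upwards [self_mem_nhdsWithin] with w hw
    have hwz : z < w := hw
    have hw0 : w ∈ Ici (0:ℝ) := le_trans hz hwz.le
    rw [slope_def_field]
    apply div_nonpos_of_nonpos_of_nonneg
    · have := hanti hz hw0 hwz.le
      linarith
    · linarith
  -- strict positivity of g z = ψd z - z * ψdd z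
  have hg : ∀ z ∈ Ici (0:ℝ), 0 < ψd z - z * ψdd z := by
    intro z hz
    have h1 := hψdpos z hz
    have h2 := mul_nonpos_of_nonneg_of_nonpos (hz : (0:ℝ) ≤ z) (hψdd z hz)
    linarith
  -- continuity of ψ and ψd
  have hψdc : ContinuousOn ψd (Ici (0:ℝ)) := fun z hz => (hd2 z hz).continuousWithinAt
  -- continuity of g
  have hgc : ContinuousOn (fun z => (ψd z - z * ψdd z) / 2) (Ici (0:ℝ)) :=
    (hψdc.sub (continuousOn_id.mul hd2cont)).div_const 2
  -- derivative of the smooth branch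
  have hF : ∀ y : ℝ, ∀ z ∈ Ici (0:ℝ), 0 < z →
      HasDerivWithinAt (fun z' => ψd z' / (2*z') * y^2 + ψ z' - z' * ψd z' / 2)
        ((ψd z - z * ψdd z) / 2 * (1 - y^2 / z^2)) (Ici (0:ℝ)) z := by
    intro y z hz hz0
    have h2z : (2:ℝ) * z ≠ 0 := by positivity
    have hdiv : HasDerivWithinAt (fun z' => ψd z' / (2*z'))
        ((ψdd z * (2*z) - ψd z * 2) / (2*z)^2) (Ici (0:ℝ)) z :=
      (hd2 z hz).div (by simpa using (hasDerivWithinAt_id z (Ici (0:ℝ))).const_mul 2) h2z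
    have hprod : HasDerivWithinAt (fun z' => z' * ψd z')
        (1 * ψd z + z * ψdd z) (Ici (0:ℝ)) z :=
      (hasDerivWithinAt_id z (Ici (0:ℝ))).mul (hd2 z hz)
    have := ((hdiv.mul_const (y^2)).add (hd1 z hz)).sub (hprod.div_const 2)
    refine this.congr_deriv ?_
    have hz2 : z^2 ≠ 0 := by positivity
    have hz0' : z ≠ 0 := hz0.ne'
    field_simp
    ring
  -- the main derivative claim
  have hderiv : ∀ y ∈ Ici (0:ℝ), ∀ z ∈ Ici (0:ℝ),
      HasDerivWithinAt (fun z' => Φ y z')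
        (if z < y then 0 else (ψd z - z * ψdd z) / 2 * (1 - y^2 / z^2)) (Ici (0:ℝ)) z := by
    intro y hy z hz
    rcases eq_or_lt_of_le (mem_Ici.mp hy) with hy0 | hy0
    · -- y = 0 : Φ 0 z' = ψ z' - z' * ψd z' / 2 on Ici 0
      subst hy0
      have heq : ∀ z' ∈ Ici (0:ℝ), Φ 0 z' = ψ z' - z' * ψd z' / 2 := by
        intro z' hz'
        rw [hΦ 0 self_mem_Ici z' hz']
        rcases eq_or_lt_of_le (mem_Ici.mp hz') with h | h
        · simp [← h, hψ0]
        · simp [h]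
      have hG : HasDerivWithinAt (fun z' => ψ z' - z' * ψd z' / 2)
          (ψd z - (1 * ψd z + z * ψdd z) / 2) (Ici (0:ℝ)) z :=
        (hd1 z hz).sub (((hasDerivWithinAt_id z (Ici (0:ℝ))).mul (hd2 z hz)).div_const 2)
      have := hG.congr heq (heq z hz)
      refine this.congr_deriv ?_
      have hzneg : ¬ (z < 0) := not_lt.mpr hz
      simp only [hzneg, if_false]
      rw [zero_pow (two_ne_zero), zero_div]
      ring
    · -- y > 0
      rcases lt_trichotomy z y with hzy | hzy | hzy
      · -- z < y : locally constant
        rw [if_pos hzy]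
        have hmem : Iio y ∈ 𝓝[Ici (0:ℝ)] z :=
          nhdsWithin_le_nhds (Iio_mem_nhds hzy)
        refine (hasDerivWithinAt_const z _ (ψ y)).congr_of_eventuallyEq ?_ ?_
        · filter_upwards [hmem, self_mem_nhdsWithin] with w hw hw'
          have hw2 : w < y := hw
          rw [hΦ y hy w hw', if_neg (not_lt.mpr hw2.le)]
        · rw [hΦ y hy z hz, if_neg (not_lt.mpr hzy.le)]
      · -- z = y : glue
        subst hzy
        rw [if_neg (lt_irrefl z)]
        have hval : (ψd z - z * ψdd z) / 2 * (1 - z^2 / z^2) = 0 := by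
          rw [div_self (by positivity : (z:ℝ)^2 ≠ 0)]; ring
        rw [hval]
        have hFz := hF z z hz hy0
        rw [hval] at hFz
        have hEq : ∀ w ∈ Ici z, Φ z w = ψd w / (2*w) * z^2 + ψ w - w * ψd w / 2 := by
          intro w hw
          have hw0 : w ∈ Ici (0:ℝ) := le_trans hy0.le hw
          rw [hΦ z hy w hw0]
          rcases eq_or_lt_of_le (mem_Ici.mp hw) with h | h
          · rw [if_neg (by rw [← h]; exact lt_irrefl z), ← h]
            field_simp
            ring
          · rw [if_pos h]
        have hright : HasDerivWithinAt (fun z' => Φ z z') 0 (Ici z) z :=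
          ((hFz.mono (Ici_subset_Ici.mpr hy0.le)).congr hEq (hEq z self_mem_Ici))
        have hleft : HasDerivWithinAt (fun z' => Φ z z') 0 (Iic z) z := by
          refine (hasDerivWithinAt_const z _ (ψ z)).congr_of_eventuallyEq ?_ ?_
          · have hmem : Ioi (0:ℝ) ∈ 𝓝[Iic z] z := nhdsWithin_le_nhds (Ioi_mem_nhds hy0)
            filter_upwards [hmem, self_mem_nhdsWithin] with w hw hw'
            rw [hΦ z hy w (mem_Ici.mpr (le_of_lt hw)), if_neg (not_lt.mpr hw')]
          · rw [hΦ z hy z hz, if_neg (lt_irrefl z)]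
        have := hleft.union hright
        rw [Iic_union_Ici] at this
        exact this.mono (subset_univ _)
      · -- y < z : agrees with smooth branch near z
        rw [if_neg (not_lt.mpr hzy.le)]
        have hz0 : 0 < z := lt_of_le_of_lt hy0.le hzy
        refine (hF y z hz hz0).congr_of_eventuallyEq ?_ ?_
        · have hmem : Ioi y ∈ 𝓝[Ici (0:ℝ)] z := nhdsWithin_le_nhds (Ioi_mem_nhds hzy)
          filter_upwards [hmem, self_mem_nhdsWithin] with w hw hw'
          have hw2 : y < w := hw
          rw [hΦ y hy w hw', if_pos hw2]
        · rw [hΦ y hy z hz, if_pos hzy]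
  have hΦcont : ∀ y ∈ Ici (0:ℝ), ContinuousOn (fun z => Φ y z) (Ici (0:ℝ)) :=
    fun y hy z hz => (hderiv y hy z hz).continuousWithinAt
  refine ⟨fun y z => if z < y then 0 else (ψd z - z * ψdd z) / 2 * (1 - y^2 / z^2),
    fun y _ z _ => rfl, ?_, ?_, ?_, ?_, ?_, ?_⟩
  · -- monotone
    intro y hy
    refine monotoneOn_of_hasDerivWithinAt_nonneg (convex_Ici 0) (hΦcont y hy)
      (f' := fun z => if z < y then 0 else (ψd z - z * ψdd z) / 2 * (1 - y^2 / z^2)) ?_ ?_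
    · intro x hx
      rw [interior_Ici] at hx
      exact (hderiv y hy x (mem_Ici.mpr (le_of_lt hx))).mono interior_subset
    · intro x hx
      rw [interior_Ici] at hx
      show (0:ℝ) ≤ if x < y then 0 else (ψd x - x * ψdd x) / 2 * (1 - y^2 / x^2)
      by_cases hxy : x < y
      · rw [if_pos hxy]
      · rw [if_neg hxy]
        push_neg at hxy
        have hxpos : (0:ℝ) < x := hx
        have h1 : 0 < ψd x - x * ψdd x := hg x (mem_Ici.mpr (le_of_lt hx))
        have h2 : (0:ℝ) ≤ 1 - y^2 / x^2 := by
          rw [sub_nonneg, div_le_one (by positivity)]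
          exact pow_le_pow_left₀ hy hxy 2
        have : (0:ℝ) < (ψd x - x * ψdd x) / 2 := by linarith
        exact mul_nonneg this.le h2
  · -- strict monotone on Ici y
    intro y hy
    have hsub : Ici y ⊆ Ici (0:ℝ) := Ici_subset_Ici.mpr hy
    refine strictMonoOn_of_hasDerivWithinAt_pos (convex_Ici y) ((hΦcont y hy).mono hsub)
      (f' := fun z => if z < y then 0 else (ψd z - z * ψdd z) / 2 * (1 - y^2 / z^2)) ?_ ?_
    · intro x hx
      rw [interior_Ici] at hx
      have hx0 : x ∈ Ici (0:ℝ) := mem_Ici.mpr (le_trans (mem_Ici.mp hy) (le_of_lt (mem_Ioi.mp hx)))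
      refine (hderiv y hy x hx0).mono ?_
      rw [interior_Ici]
      exact fun w hw => mem_Ici.mpr (le_trans (mem_Ici.mp hy) (le_of_lt (mem_Ioi.mp hw)))
    · intro x hx
      rw [interior_Ici] at hx
      have hx0 : (0:ℝ) ≤ x := le_trans hy hx.le
      have hxpos : (0:ℝ) < x := lt_of_le_of_lt hy hx
      show (0:ℝ) < if x < y then 0 else (ψd x - x * ψdd x) / 2 * (1 - y^2 / x^2)
      rw [if_neg (not_lt.mpr hx.le)]
      have h1 : 0 < ψd x - x * ψdd x := hg x hx0
      have h2 : (0:ℝ) < 1 - y^2 / x^2 := by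
        rw [sub_pos, div_lt_one (by positivity)]
        exact pow_lt_pow_left₀ hx hy two_ne_zero
      exact mul_pos (by linarith) h2
  · -- derivative
    exact fun y hy z hz => hderiv y hy z hz
  · -- continuity in z
    intro y hy
    rcases eq_or_lt_of_le (mem_Ici.mp hy) with hy0 | hy0
    · -- y = 0
      refine hgc.congr ?_
      intro z hz
      have h1 : ¬ (z < y) := by rw [← hy0]; exact not_lt.mpr hz
      show (if z < y then 0 else (ψd z - z * ψdd z) / 2 * (1 - y^2 / z^2))
        = (ψd z - z * ψdd z) / 2
      rw [if_neg h1, ← hy0]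
      rw [zero_pow two_ne_zero, zero_div, sub_zero, mul_one]
    · -- y > 0
      intro z hz
      rcases eq_or_lt_of_le (mem_Ici.mp hz) with hz0 | hz0
      · -- z = 0 : locally zero
        have hzy : z < y := by rw [← hz0]; exact hy0
        refine ContinuousWithinAt.congr_of_eventuallyEq
          (continuousWithinAt_const : ContinuousWithinAt (fun _ => (0:ℝ)) (Ici 0) z) ?_ ?_
        · filter_upwards [nhdsWithin_le_nhds (Iio_mem_nhds hzy)] with w hw
          show (if w < y then (0:ℝ) else (ψd w - w * ψdd w) / 2 * (1 - y^2 / w^2)) = 0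
          exact if_pos hw
        · show (if z < y then (0:ℝ) else (ψd z - z * ψdd z) / 2 * (1 - y^2 / z^2)) = 0
          exact if_pos hzy
      · -- z > 0 : max-formula
        have hM : ContinuousWithinAt
            (fun z' => (ψd z' - z' * ψdd z') / 2 * max 0 (1 - y^2 / z'^2)) (Ici (0:ℝ)) z := by
          have h1 : ContinuousWithinAt (fun z' : ℝ => 1 - y^2 / z'^2) (Ici (0:ℝ)) z := by
            refine continuousWithinAt_const.sub (continuousWithinAt_const.div ?_ ?_)
            · exact ((continuous_pow 2).continuousWithinAt :
                ContinuousWithinAt (fun z' : ℝ => z'^2) (Ici (0:ℝ)) z)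
            · positivity
          have h2 : ContinuousWithinAt (fun z' : ℝ => max 0 (1 - y^2 / z'^2)) (Ici (0:ℝ)) z :=
            continuousWithinAt_const.max h1
          exact (hgc z hz).mul h2
        have heq : ∀ w : ℝ, 0 < w →
            (if w < y then 0 else (ψd w - w * ψdd w) / 2 * (1 - y^2 / w^2))
              = (ψd w - w * ψdd w) / 2 * max 0 (1 - y^2 / w^2) := by
          intro w hw
          by_cases hwy : w < y
          · rw [if_pos hwy, max_eq_left, mul_zero]
            rw [sub_nonpos, le_div_iff₀ (by positivity), one_mul]
            exact pow_le_pow_left₀ hw.le hwy.le 2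
          · rw [if_neg hwy, max_eq_right]
            push_neg at hwy
            rw [sub_nonneg, div_le_one (by positivity)]
            exact pow_le_pow_left₀ hy0.le hwy 2
        refine hM.congr_of_eventuallyEq ?_ (heq z hz0)
        filter_upwards [nhdsWithin_le_nhds (Ioi_mem_nhds hz0)] with w hw
        show (if w < y then (0:ℝ) else (ψd w - w * ψdd w) / 2 * (1 - y^2 / w^2))
          = (ψd w - w * ψdd w) / 2 * max 0 (1 - y^2 / w^2)
        exact heq w hw
  · -- joint continuity
    have hq : ContinuousOn (fun p : ℝ × ℝ => (ψd p.2 - p.2 * ψdd p.2) / 2 * (1 - p.1^2 / p.2^2))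
        {p : ℝ × ℝ | 0 ≤ p.1 ∧ p.1 < p.2} := by
      refine ContinuousOn.mul ?_ ?_
      · exact hgc.comp continuous_snd.continuousOn
          (fun p hp => le_trans hp.1 hp.2.le)
      · refine continuousOn_const.sub (ContinuousOn.div ?_ ?_ ?_)
        · exact ((continuous_pow 2).comp continuous_fst).continuousOn
        · exact ((continuous_pow 2).comp continuous_snd).continuousOn
        · intro p hp
          have : (0:ℝ) < p.2 := lt_of_le_of_lt hp.1 hp.2
          positivity
    refine hq.congr ?_
    intro p hp
    simp only [Function.uncurry]
    rw [if_neg (not_lt.mpr hp.2.le)]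
  · -- positivity
    intro y z hy hyz
    have hz0 : (0:ℝ) < z := lt_of_le_of_lt hy hyz
    show (0:ℝ) < if z < y then 0 else (ψd z - z * ψdd z) / 2 * (1 - y^2 / z^2)
    rw [if_neg (not_lt.mpr hyz.le)]
    have h1 : 0 < ψd z - z * ψdd z := hg z hz0.le
    have h2 : (0:ℝ) < 1 - y^2 / z^2 := by
      rw [sub_pos, div_lt_one (by positivity)]
      exact pow_lt_pow_left₀ hyz hy two_ne_zero
    exact mul_pos (by linarith) h2
end

section
/- For every z ≥ 0 the function y ↦ Φ(y,z) is λ-convex on [0,∞): for all θ ∈ [0,1] and all y_a, y_b ∈ [0,∞) there holds Φ(θy_a + (1−θ)y_b, z) ≤ θΦ(y_a,z) + (1−θ)Φ(y_b,z) + (λ/2)·θ(1−θ)·|y_a − y_b|². -/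
set_option autoImplicit false

open Set Filter Topology

/-- for every `z ≥ 0` the function `y ↦ Φ(y,z)` is `λ`-convex on `[0,∞)`. -/
theorem stmt_3 (ψ ψd ψdd : ℝ → ℝ) (lam : ℝ) (hlam : 0 < lam)
    (hψmap : ∀ z ∈ Ici (0:ℝ), 0 ≤ ψ z)
    (hmono : StrictMonoOn ψ (Ici (0:ℝ)))
    (hbdd : BddAbove (ψ '' Ici (0:ℝ)))
    (hconc : ConcaveOn ℝ (Ici (0:ℝ)) ψ)
    (hd1 : ∀ z ∈ Ici (0:ℝ), HasDerivWithinAt ψ (ψd z) (Ici (0:ℝ)) z)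
    (hd2 : ∀ z ∈ Ici (0:ℝ), HasDerivWithinAt ψd (ψdd z) (Ici (0:ℝ)) z)
    (hd2cont : ContinuousOn ψdd (Ici (0:ℝ)))
    (hψ0 : ψ 0 = 0) (hψd0 : 0 < ψd 0)
    (hlow : ∀ z ∈ Ici (0:ℝ), -lam ≤ ψdd z)
    (Φ : ℝ → ℝ → ℝ)
    (hΦ : ∀ y ∈ Ici (0:ℝ), ∀ z ∈ Ici (0:ℝ),
      Φ y z = if y < z then ψd z / (2*z) * y^2 + ψ z - z * ψd z / 2 else ψ y) :
    ∀ z ∈ Ici (0:ℝ), ∀ θ ∈ Icc (0:ℝ) 1, ∀ ya ∈ Ici (0:ℝ), ∀ yb ∈ Ici (0:ℝ),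
      Φ (θ * ya + (1 - θ) * yb) z
        ≤ θ * Φ ya z + (1 - θ) * Φ yb z + lam / 2 * θ * (1 - θ) * |ya - yb|^2 := by
  -- ψd is nonnegative on [0,∞)
  have hψd_nonneg : ∀ x ∈ Ici (0:ℝ), 0 ≤ ψd x := by
    intro x hx
    have h1 : HasDerivWithinAt ψ (ψd x) (Ioi x) x :=
      (hd1 x hx).mono (fun y hy => mem_Ici.mpr (le_trans (mem_Ici.mp hx) (le_of_lt (mem_Ioi.mp hy))))
    have h2 : Tendsto (slope ψ x) (𝓝[Ioi x \ {x}] x) (𝓝 (ψd x)) :=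
      hasDerivWithinAt_iff_tendsto_slope.1 h1
    rw [diff_singleton_eq_self (by simp)] at h2
    refine ge_of_tendsto h2 ?_
    filter_upwards [self_mem_nhdsWithin] with y hy
    have hxy : x < y := hy
    have : ψ x ≤ ψ y := (hmono.monotoneOn) hx (le_trans hx hxy.le) hxy.le
    rw [slope_def_field]
    have : (0:ℝ) ≤ ψ y - ψ x := by linarith
    have hd : (0:ℝ) ≤ y - x := by linarith
    rw [div_eq_inv_mul]
    positivity
  -- monotonicity of y ↦ ψd y + lam * y on [0,∞)
  have hM : MonotoneOn (fun y => ψd y + lam * y) (Ici (0:ℝ)) := by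
    apply monotoneOn_of_deriv_nonneg (convex_Ici 0)
    · intro x hx
      exact ((hd2 x hx).continuousWithinAt).add
        ((continuous_const.mul continuous_id).continuousWithinAt)
    · rw [interior_Ici]
      intro x hx
      have hx0 : (0:ℝ) ≤ x := le_of_lt hx
      have h : HasDerivAt (fun y => ψd y + lam * y) (ψdd x + lam) x := by
        simpa [Pi.add_def] using ((hd2 x hx0).hasDerivAt (Ici_mem_nhds hx)).add
          ((hasDerivAt_id x).const_mul lam)
      exact h.differentiableAt.differentiableWithinAt
    · rw [interior_Ici]
      intro x hx
      have hx0 : (0:ℝ) ≤ x := le_of_lt hx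
      have h : HasDerivAt (fun y => ψd y + lam * y) (ψdd x + lam) x := by
        simpa [Pi.add_def] using ((hd2 x hx0).hasDerivAt (Ici_mem_nhds hx)).add
          ((hasDerivAt_id x).const_mul lam)
      rw [h.deriv]
      have := hlow x hx0
      linarith
  intro z hz θ hθ ya hya yb hyb
  have hz0 : (0:ℝ) ≤ z := hz
  set F : ℝ → ℝ := fun y => if y < z then ψd z / (2*z) * y^2 + ψ z - z * ψd z / 2 else ψ y
    with hF
  set g : ℝ → ℝ := fun y => F y + lam/2 * y^2 with hg
  set G : ℝ → ℝ := fun y => if y < z then (ψd z / z + lam) * y else ψd y + lam * y with hGdef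
  -- derivative of g on (0,∞)
  have hgd : ∀ y ∈ Ioi (0:ℝ), HasDerivAt g (G y) y := by
    intro y hy
    have hy0 : (0:ℝ) < y := hy
    rcases lt_trichotomy y z with hyz | hyz | hyz
    · -- quadratic branch
      have hz0' : (0:ℝ) < z := lt_trans hy0 hyz
      have hq : HasDerivAt (fun x => ψd z / (2*z) * x^2 + (ψ z - z * ψd z / 2) + lam/2 * x^2)
          ((ψd z / z + lam) * y) y := by
        have h1 := ((hasDerivAt_pow 2 y).const_mul (ψd z / (2*z))).add_const (ψ z - z * ψd z / 2)
        have h2 := (hasDerivAt_pow 2 y).const_mul (lam/2)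
        have h := h1.add h2
        refine h.congr_deriv ?_
        have hzne : z ≠ 0 := ne_of_gt hz0'
        field_simp
        try ring
      have heq : g =ᶠ[𝓝 y] (fun x => ψd z / (2*z) * x^2 + (ψ z - z * ψd z / 2) + lam/2 * x^2) := by
        filter_upwards [Iio_mem_nhds hyz] with x hx
        simp only [hg, hF, if_pos (show x < z from hx)]
        ring
      have := hq.congr_of_eventuallyEq heq
      simpa only [hGdef, if_pos hyz] using this
    · -- y = z
      rw [hyz]
      rw [hyz] at hy0
      have hz0' : (0:ℝ) < z := hy0
      have hzne : z ≠ 0 := ne_of_gt hz0'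
      have hFz : HasDerivAt F (ψd z) z := by
        have hleft : HasDerivWithinAt F (ψd z) (Iic z) z := by
          have hq : HasDerivAt (fun x => ψd z / (2*z) * x^2 + (ψ z - z * ψd z / 2)) (ψd z) z := by
            have h1 := ((hasDerivAt_pow 2 z).const_mul (ψd z / (2*z))).add_const
              (ψ z - z * ψd z / 2)
            refine h1.congr_deriv ?_
            field_simp
            try ring
          refine hq.hasDerivWithinAt.congr ?_ ?_
          · intro x hx
            rcases lt_or_eq_of_le (show x ≤ z from hx) with h | h
            · simp only [hF, if_pos h]; ring
            · subst h
              simp only [hF, if_neg (lt_irrefl x)]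
              field_simp
              try ring
          · simp only [hF, if_neg (lt_irrefl z)]
            field_simp
            try ring
        have hright : HasDerivWithinAt F (ψd z) (Ici z) z := by
          refine ((hd1 z hz0).mono (Ici_subset_Ici.mpr hz0)).congr ?_ ?_
          · intro x hx
            simp only [hF, if_neg (not_lt.mpr (show z ≤ x from hx))]
          · simp only [hF, if_neg (lt_irrefl z)]
        have := hleft.union hright
        rw [Iic_union_Ici] at this
        exact this.hasDerivAt univ_mem
      have hq2 : HasDerivAt (fun x => lam/2 * x^2) (lam * z) z := by
        have := (hasDerivAt_pow 2 z).const_mul (lam/2)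
        refine this.congr_deriv ?_
        ring
      have := hFz.add hq2
      simpa only [hGdef, if_neg (lt_irrefl z), Pi.add_def] using this
    · -- ψ branch
      have hψy : HasDerivAt ψ (ψd y) y := (hd1 y hy0.le).hasDerivAt (Ici_mem_nhds hy0)
      have hq2 : HasDerivAt (fun x => lam/2 * x^2) (lam * y) y := by
        have := (hasDerivAt_pow 2 y).const_mul (lam/2)
        refine this.congr_deriv ?_
        ring
      have hq := hψy.add hq2
      have heq : g =ᶠ[𝓝 y] (fun x => ψ x + lam/2 * x^2) := by
        filter_upwards [Ioi_mem_nhds hyz] with x hx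
        simp only [hg, hF, if_neg (not_lt.mpr (le_of_lt (show z < x from hx)))]
      have := hq.congr_of_eventuallyEq heq
      simpa only [hGdef, if_neg (not_lt.mpr hyz.le)] using this
  -- continuity of g on [0,∞)
  have hgcont : ContinuousOn g (Ici (0:ℝ)) := by
    intro x hx
    rcases eq_or_lt_of_le (show (0:ℝ) ≤ x from hx) with h0 | h0
    · -- x = 0
      subst h0
      rcases eq_or_lt_of_le hz0 with hz' | hz'
      · -- z = 0 : F = ψ on Ici 0
        subst hz'
        have hc0 : ContinuousWithinAt (fun y => ψ y + lam/2 * y^2) (Ici (0:ℝ)) 0 :=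
          (hd1 0 (mem_Ici.mpr le_rfl)).continuousWithinAt.add
            ((continuous_const.mul (continuous_pow 2)).continuousWithinAt)
        refine hc0.congr ?_ ?_
        · intro y hy
          simp only [hg, hF, if_neg (not_lt.mpr (show (0:ℝ) ≤ y from hy))]
        · simp only [hg, hF, if_neg (lt_irrefl (0:ℝ))]
      · -- z > 0 : g = quadratic near 0
        have : ContinuousAt (fun x => ψd z / (2*z) * x^2 + (ψ z - z * ψd z / 2) + lam/2 * x^2)
            (0:ℝ) := by fun_prop
        have heq : g =ᶠ[𝓝 (0:ℝ)]
            (fun x => ψd z / (2*z) * x^2 + (ψ z - z * ψd z / 2) + lam/2 * x^2) := by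
          filter_upwards [Iio_mem_nhds hz'] with x hx
          simp only [hg, hF, if_pos (show x < z from hx)]
          ring
        exact (this.congr heq.symm).continuousWithinAt
    · exact (hgd x h0).continuousAt.continuousWithinAt
  -- monotonicity of G on (0,∞)
  have hGmono : MonotoneOn G (Ioi (0:ℝ)) := by
    intro a ha b hb hab
    have ha0 : (0:ℝ) < a := ha
    have hb0 : (0:ℝ) < b := hb
    by_cases ha' : a < z
    · have hz0' : (0:ℝ) < z := lt_trans ha0 ha'
      have hc : (0:ℝ) ≤ ψd z / z + lam := by
        have := hψd_nonneg z hz0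
        positivity
      by_cases hb' : b < z
      · simp only [hGdef, if_pos ha', if_pos hb']
        exact mul_le_mul_of_nonneg_left hab hc
      · simp only [hGdef, if_pos ha', if_neg hb']
        have h1 : (ψd z / z + lam) * a ≤ (ψd z / z + lam) * z :=
          mul_le_mul_of_nonneg_left ha'.le hc
        have h2 : (ψd z / z + lam) * z = ψd z + lam * z := by
          field_simp
          try ring
        have h3 : ψd z + lam * z ≤ ψd b + lam * b :=
          hM hz0 hb0.le (not_lt.mp hb')
        linarith
    · have hb' : ¬ b < z := fun h => ha' (lt_of_le_of_lt hab h)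
      simp only [hGdef, if_neg ha', if_neg hb']
      exact hM ha0.le hb0.le hab
  -- convexity of g
  have hgconv : ConvexOn ℝ (Ici (0:ℝ)) g := by
    apply MonotoneOn.convexOn_of_deriv (convex_Ici 0) hgcont
    · rw [interior_Ici]
      exact fun x hx => (hgd x hx).differentiableAt.differentiableWithinAt
    · rw [interior_Ici]
      intro a ha b hb hab
      rw [(hgd a ha).deriv, (hgd b hb).deriv]
      exact hGmono ha hb hab
  -- conclude
  have hm : θ * ya + (1 - θ) * yb ∈ Ici (0:ℝ) := by
    have := mul_nonneg hθ.1 (show (0:ℝ) ≤ ya from hya)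
    have := mul_nonneg (by linarith [hθ.2] : (0:ℝ) ≤ 1 - θ) (show (0:ℝ) ≤ yb from hyb)
    simp only [mem_Ici]; linarith
  have key := hgconv.2 hya hyb hθ.1 (by linarith [hθ.2] : (0:ℝ) ≤ 1 - θ) (by ring)
  simp only [smul_eq_mul, hg] at key
  have hΦm := hΦ _ hm z hz
  have hΦa := hΦ ya hya z hz
  have hΦb := hΦ yb hyb z hz
  have hFm : Φ (θ * ya + (1 - θ) * yb) z = F (θ * ya + (1 - θ) * yb) := hΦm
  have hFa : Φ ya z = F ya := hΦa
  have hFb : Φ yb z = F yb := hΦb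
  rw [hFm, hFa, hFb, sq_abs]
  nlinarith [key]
end

section
/- The regularized function ψ_ε is of class C¹ on [0,∞) with ψ_ε'(z) = min(z/ε, ψ'(z)) for all z ≥ 0; moreover ψ_ε is nondecreasing, bounded, Lipschitz continuous with Lipschitz constant ψ'(0) (independent of ε), and satisfies ψ_ε'(0) = 0 = ψ_ε(0). -/
set_option autoImplicit false

open Set Filter Topology

/-- the regularized function `ψ_ε` is `C¹` on `[0,∞)` with
`ψ_ε'(z) = min(z/ε, ψ'(z))`; it is nondecreasing, bounded, Lipschitz with constant
`ψ'(0)`, and `ψ_ε'(0) = 0 = ψ_ε(0)`. -/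
theorem stmt_10 (ψ ψd ψdd : ℝ → ℝ) (lam : ℝ) (hlam : 0 < lam)
    (hψmap : ∀ z ∈ Ici (0:ℝ), 0 ≤ ψ z)
    (hmono : StrictMonoOn ψ (Ici (0:ℝ)))
    (hbdd : BddAbove (ψ '' Ici (0:ℝ)))
    (hconc : ConcaveOn ℝ (Ici (0:ℝ)) ψ)
    (hd1 : ∀ z ∈ Ici (0:ℝ), HasDerivWithinAt ψ (ψd z) (Ici (0:ℝ)) z)
    (hd2 : ∀ z ∈ Ici (0:ℝ), HasDerivWithinAt ψd (ψdd z) (Ici (0:ℝ)) z)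
    (hd2cont : ContinuousOn ψdd (Ici (0:ℝ)))
    (hψ0 : ψ 0 = 0) (hψd0 : 0 < ψd 0)
    (hlow : ∀ z ∈ Ici (0:ℝ), -lam ≤ ψdd z)
    (ε : ℝ) (hε : 0 < ε) (zε : ℝ) (hzε : 0 < zε)
    (hfix : ε * ψd zε = zε)
    (huniq : ∀ z : ℝ, 0 ≤ z → ε * ψd z = z → z = zε)
    (ψε : ℝ → ℝ)
    (hψε : ∀ z ∈ Ici (0:ℝ),
      ψε z = if z ≤ zε then z^2 / (2*ε) else ψ z - ψ zε + zε^2 / (2*ε)) :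
    ∃ ψεd : ℝ → ℝ,
      (∀ z ∈ Ici (0:ℝ), HasDerivWithinAt ψε (ψεd z) (Ici (0:ℝ)) z) ∧
      (∀ z ∈ Ici (0:ℝ), ψεd z = min (z / ε) (ψd z)) ∧
      ContinuousOn ψεd (Ici (0:ℝ)) ∧
      MonotoneOn ψε (Ici (0:ℝ)) ∧
      BddAbove (ψε '' Ici (0:ℝ)) ∧
      LipschitzOnWith (Real.toNNReal (ψd 0)) ψε (Ici (0:ℝ)) ∧
      ψεd 0 = 0 ∧ ψε 0 = 0 := by
  have hzε0 : zε ∈ Ici (0:ℝ) := le_of_lt hzε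
  -- ψd is antitone on [0,∞)
  have hanti : AntitoneOn ψd (Ici (0:ℝ)) := by
    intro x hx y hy hxy
    rcases eq_or_lt_of_le hxy with rfl | h
    · exact le_refl _
    · exact (hconc.le_slope_of_hasDerivWithinAt hx hy h (hd1 y hy)).trans
        (hconc.slope_le_of_hasDerivWithinAt hx hy h (hd1 x hx))
  -- ψd is nonnegative on [0,∞)
  have hψdnn : ∀ z ∈ Ici (0:ℝ), 0 ≤ ψd z := by
    intro z hz
    rw [mem_Ici] at hz
    have hz1 : z + 1 ∈ Ici (0:ℝ) := by rw [mem_Ici]; linarith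
    have h1 : slope ψ z (z+1) ≤ ψd z :=
      hconc.slope_le_of_hasDerivWithinAt (mem_Ici.mpr hz) hz1 (lt_add_one z)
        (hd1 z (mem_Ici.mpr hz))
    refine le_trans ?_ h1
    rw [slope_def_field]
    apply div_nonneg
    · have := hmono (mem_Ici.mpr hz) hz1 (lt_add_one z)
      linarith
    · linarith
  have hfix' : ψd zε = zε / ε := by
    field_simp
    linarith [hfix]
  -- key comparison
  have hkey1 : ∀ z : ℝ, 0 ≤ z → z ≤ zε → z / ε ≤ ψd z := by
    intro z hz0 hzle
    have h1 : ψd zε ≤ ψd z := hanti (mem_Ici.mpr hz0) hzε0 hzle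
    rw [hfix'] at h1
    calc z / ε ≤ zε / ε := by gcongr
    _ ≤ ψd z := h1
  have hkey2 : ∀ z : ℝ, zε ≤ z → ψd z ≤ z / ε := by
    intro z hzle
    have h1 : ψd z ≤ ψd zε := hanti hzε0 (mem_Ici.mpr (le_trans hzε.le hzle)) hzle
    rw [hfix'] at h1
    calc ψd z ≤ zε / ε := h1
    _ ≤ z / ε := by gcongr
  -- the derivative
  have hderiv : ∀ z ∈ Ici (0:ℝ),
      HasDerivWithinAt ψε (min (z / ε) (ψd z)) (Ici (0:ℝ)) z := by
    intro z hz
    rw [mem_Ici] at hz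
    rcases lt_trichotomy z zε with hlt | rfl | hgt
    · -- z < zε : quadratic branch
      have hq : HasDerivWithinAt (fun w : ℝ => w^2 / (2*ε)) (z / ε) (Ici (0:ℝ)) z := by
        have := ((hasDerivAt_pow 2 z).div_const (2*ε)).hasDerivWithinAt (s := Ici (0:ℝ))
        refine this.congr_deriv ?_
        ring
      rw [min_eq_left (hkey1 z hz hlt.le)]
      refine hq.congr_of_eventuallyEq ?_ ?_
      · filter_upwards [nhdsWithin_le_nhds (Iio_mem_nhds hlt), self_mem_nhdsWithin]
          with w hw1 hw2
        rw [hψε w hw2, if_pos (le_of_lt hw1)]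
      · rw [hψε z hz, if_pos hlt.le]
    · -- z = zε : glue
      rw [hfix', min_self]
      have h1 : HasDerivWithinAt ψε (z / ε) (Icc 0 z) z := by
        have hq : HasDerivWithinAt (fun w : ℝ => w^2 / (2*ε)) (z / ε) (Icc (0:ℝ) z) z := by
          have := ((hasDerivAt_pow 2 z).div_const (2*ε)).hasDerivWithinAt (s := Icc (0:ℝ) z)
          refine this.congr_deriv ?_
          ring
        refine hq.congr (fun w hw => ?_) ?_
        · rw [hψε w hw.1, if_pos hw.2]
        · rw [hψε z hz, if_pos le_rfl]
      have h2 : HasDerivWithinAt ψε (z / ε) (Ici z) z := by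
        have hψ' : HasDerivWithinAt (fun w => ψ w - ψ z + z^2 / (2*ε)) (z / ε) (Ici z) z := by
          have := (((hd1 z hz).mono (Ici_subset_Ici.mpr hz)).sub_const (ψ z)).add_const
            (z^2 / (2*ε))
          rwa [hfix'] at this
        refine hψ'.congr (fun w hw => ?_) ?_
        · rw [mem_Ici] at hw
          rw [hψε w (le_trans hz hw)]
          rcases eq_or_lt_of_le hw with rfl | hlt'
          · rw [if_pos le_rfl]; ring
          · rw [if_neg (not_le.mpr hlt')]
        · rw [hψε z hz, if_pos le_rfl]; ring
      exact (h1.union h2).mono (fun w hw => by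
        rcases le_total w z with h | h
        · exact Or.inl ⟨hw, h⟩
        · exact Or.inr h)
    · -- z > zε : ψ branch
      rw [min_eq_right (hkey2 z hgt.le)]
      have hψ' : HasDerivWithinAt (fun w => ψ w - ψ zε + zε^2 / (2*ε)) (ψd z) (Ici (0:ℝ)) z :=
        ((hd1 z hz).sub_const (ψ zε)).add_const (zε^2 / (2*ε))
      refine hψ'.congr_of_eventuallyEq ?_ ?_
      · filter_upwards [nhdsWithin_le_nhds (Ioi_mem_nhds hgt), self_mem_nhdsWithin]
          with w hw1 hw2
        rw [hψε w hw2, if_neg (not_le.mpr hw1)]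
      · rw [hψε z hz, if_neg (not_le.mpr hgt)]
  have hεdnn : ∀ z ∈ Ici (0:ℝ), 0 ≤ min (z / ε) (ψd z) := by
    intro z hz
    rw [mem_Ici] at hz
    exact le_min (div_nonneg hz hε.le) (hψdnn z hz)
  have hψεcont : ContinuousOn ψε (Ici (0:ℝ)) :=
    fun z hz => (hderiv z hz).continuousWithinAt
  refine ⟨fun z => min (z / ε) (ψd z), hderiv, fun z _ => rfl, ?_, ?_, ?_, ?_, ?_, ?_⟩
  · -- continuity of the derivative
    exact ContinuousOn.inf ((continuous_id.div_const ε).continuousOn)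
      (fun z hz => (hd2 z hz).continuousWithinAt)
  · -- monotone
    refine monotoneOn_of_hasDerivWithinAt_nonneg (convex_Ici 0) hψεcont
      (f' := fun z => min (z / ε) (ψd z)) (fun x hx => ?_) (fun x hx => ?_)
    · rw [interior_Ici] at hx ⊢
      exact (hderiv x (mem_Ici.mpr (le_of_lt hx))).mono Ioi_subset_Ici_self
    · rw [interior_Ici] at hx
      exact hεdnn x (mem_Ici.mpr (le_of_lt hx))
  · -- bounded above
    obtain ⟨M, hM⟩ := hbdd
    have hM0 : (0:ℝ) ≤ M := by
      have := hM ⟨0, mem_Ici.mpr le_rfl, hψ0⟩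
      linarith
    refine ⟨M + zε^2 / (2*ε), ?_⟩
    rintro _ ⟨z, hz, rfl⟩
    rw [hψε z hz]
    rw [mem_Ici] at hz
    split_ifs with h
    · have : z^2 ≤ zε^2 := by gcongr
      have h2 : zε^2 / (2*ε) ≤ M + zε^2 / (2*ε) := by linarith
      refine le_trans ?_ h2
      gcongr
    · have h1 : ψ z ≤ M := hM ⟨z, mem_Ici.mpr hz, rfl⟩
      have h2 : 0 ≤ ψ zε := hψmap zε hzε0
      linarith
  · -- Lipschitz
    refine Convex.lipschitzOnWith_of_nnnorm_hasDerivWithin_le (convex_Ici 0) hderiv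
      (fun x hx => ?_)
    have h0 : 0 ≤ min (x / ε) (ψd x) := hεdnn x hx
    have h1 : min (x / ε) (ψd x) ≤ ψd 0 :=
      le_trans (min_le_right _ _) (hanti (le_refl (0:ℝ)) hx hx)
    rw [← NNReal.coe_le_coe, coe_nnnorm, Real.coe_toNNReal _ hψd0.le,
      Real.norm_of_nonneg h0]
    exact h1
  · simp [min_eq_left hψd0.le]
  · rw [hψε 0 (mem_Ici.mpr le_rfl), if_pos hzε.le]
    norm_num
end

section
/- The regularized functions ψ_ε converge to ψ uniformly on [0,∞) as ε → 0⁺, i.e. sup_{z ≥ 0} |ψ_ε(z) − ψ(z)| → 0 as ε → 0⁺. -/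
set_option autoImplicit false

open Set Filter Topology

/-- the regularized functions `ψ_ε` converge to `ψ` uniformly on `[0,∞)`
as `ε → 0⁺`. -/
theorem stmt_12 (ψ ψd ψdd : ℝ → ℝ) (lam : ℝ) (hlam : 0 < lam)
    (hψmap : ∀ z ∈ Ici (0:ℝ), 0 ≤ ψ z)
    (hmono : StrictMonoOn ψ (Ici (0:ℝ)))
    (hbdd : BddAbove (ψ '' Ici (0:ℝ)))
    (hconc : ConcaveOn ℝ (Ici (0:ℝ)) ψ)
    (hd1 : ∀ z ∈ Ici (0:ℝ), HasDerivWithinAt ψ (ψd z) (Ici (0:ℝ)) z)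
    (hd2 : ∀ z ∈ Ici (0:ℝ), HasDerivWithinAt ψd (ψdd z) (Ici (0:ℝ)) z)
    (hd2cont : ContinuousOn ψdd (Ici (0:ℝ)))
    (hψ0 : ψ 0 = 0) (hψd0 : 0 < ψd 0)
    (hlow : ∀ z ∈ Ici (0:ℝ), -lam ≤ ψdd z)
    (zfun : ℝ → ℝ)
    (hz : ∀ ε > (0:ℝ), 0 < zfun ε ∧ ε * ψd (zfun ε) = zfun ε ∧
      ∀ z : ℝ, 0 ≤ z → ε * ψd z = z → z = zfun ε)
    (Ψ : ℝ → ℝ → ℝ)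
    (hΨ : ∀ ε > (0:ℝ), ∀ z ∈ Ici (0:ℝ),
      Ψ ε z = if z ≤ zfun ε then z^2 / (2*ε)
        else ψ z - ψ (zfun ε) + (zfun ε)^2 / (2*ε)) :
    TendstoUniformlyOn Ψ ψ (𝓝[>] 0) (Ici (0:ℝ)) := by

  -- tangent line bound: ψ z ≤ ψd 0 * z on [0,∞)
  have htang : ∀ z ∈ Ici (0:ℝ), ψ z ≤ ψd 0 * z := by
    intro z hz0
    rcases eq_or_lt_of_le (mem_Ici.mp hz0) with h | h
    · simp [← h, hψ0]
    · have hs := hconc.slope_le_of_hasDerivWithinAt (self_mem_Ici) hz0 h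
        (hd1 0 self_mem_Ici)
      rw [slope_def_field] at hs
      rw [hψ0] at hs
      have hs' : ψ z / z ≤ ψd 0 := by simpa using hs
      have := (div_le_iff₀ h).mp hs'
      linarith
  -- antitonicity of ψd on [0,∞)
  have hanti : ∀ a ∈ Ici (0:ℝ), ∀ b ∈ Ici (0:ℝ), a < b → ψd b ≤ ψd a := by
    intro a ha b hb hab
    have h1 := hconc.le_slope_of_hasDerivWithinAt ha hb hab (hd1 b hb)
    have h2 := hconc.slope_le_of_hasDerivWithinAt ha hb hab (hd1 a ha)
    exact h1.trans h2
  rw [Metric.tendstoUniformlyOn_iff]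
  intro δ hδ
  have hC : (0:ℝ) < ψd 0 ^ 2 := by positivity
  filter_upwards [Ioo_mem_nhdsGT_of_mem
    (show (0:ℝ) ∈ Ico 0 (δ / ψd 0 ^ 2) from ⟨le_rfl, by positivity⟩)] with ε hε
  obtain ⟨hε0, hεδ⟩ := hε
  obtain ⟨hzpos, hzfix, -⟩ := hz ε hε0
  set w := zfun ε with hw
  have hwmem : w ∈ Ici (0:ℝ) := le_of_lt hzpos
  have hψdw : ψd w ≤ ψd 0 := by
    rcases eq_or_lt_of_le (mem_Ici.mp hwmem) with h | h
    · rw [← h]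
    · exact hanti 0 self_mem_Ici w hwmem h
  have hψdwpos : 0 < ψd w := by
    have : ε * ψd w = w := hzfix
    nlinarith
  have hwle : w ≤ ε * ψd 0 := by nlinarith
  -- the key bound B = ε * ψd 0 ^ 2
  have hBlt : ε * ψd 0 ^ 2 < δ := by
    rw [lt_div_iff₀ hC] at hεδ
    linarith
  have hsq : w ^ 2 / (2 * ε) ≤ ε * ψd 0 ^ 2 := by
    rw [div_le_iff₀ (by linarith)]
    nlinarith
  have hψwB : ψ w ≤ ε * ψd 0 ^ 2 := by
    have := htang w hwmem
    nlinarith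
  intro z hz0
  rw [Real.dist_eq, hΨ ε hε0 z hz0]
  have hz0' : (0:ℝ) ≤ z := hz0
  split_ifs with hcase
  · -- z ≤ w : both ψ z and z²/(2ε) lie in [0, B]
    have hψz : ψ z ≤ ε * ψd 0 ^ 2 := by
      have h1 := htang z hz0
      nlinarith
    have hψznn : 0 ≤ ψ z := hψmap z hz0
    have hsqz : z ^ 2 / (2 * ε) ≤ ε * ψd 0 ^ 2 := by
      rw [div_le_iff₀ (by linarith)]
      nlinarith
    have hsqznn : 0 ≤ z ^ 2 / (2 * ε) := by positivity
    rw [abs_lt]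
    constructor <;> nlinarith
  · -- z > w : difference is ψ w - w²/(2ε), both in [0, B]
    have hψwnn : 0 ≤ ψ w := hψmap w hwmem
    have hsqnn : 0 ≤ w ^ 2 / (2 * ε) := by positivity
    have : ψ z - (ψ z - ψ w + w ^ 2 / (2 * ε)) = ψ w - w ^ 2 / (2 * ε) := by ring
    rw [this, abs_lt]
    constructor <;> nlinarith
end

section
/- For every ε > 0 and all s, z ≥ 0 there holds |∂_yΦ_ε(s,z) − ∂_yΦ(s,z)| ≤ ψ'(0)·χ_{[0,z_ε]}(max(s,z)). -/
set_option autoImplicit false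

open Set Filter Topology


/-- Derivative of the cohesive energy in the region `s < z` (quadratic region). -/
lemma aux_lt (f fd : ℝ → ℝ) (F Fy : ℝ → ℝ → ℝ)
    (hF : ∀ y ∈ Ici (0:ℝ), ∀ z ∈ Ici (0:ℝ),
      F y z = if y < z then fd z / (2*z) * y^2 + f z - z * fd z / 2 else f y)
    (hFy : ∀ z ∈ Ici (0:ℝ), ∀ s ∈ Ici (0:ℝ),
      HasDerivWithinAt (fun y => F y z) (Fy s z) (Ici (0:ℝ)) s) :
    ∀ z : ℝ, 0 < z → ∀ s : ℝ, 0 ≤ s → s < z → Fy s z = fd z / z * s := by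
  intro z hz s hs hsz
  have hzz : (0:ℝ) ≤ z := le_of_lt hz
  have h1 : HasDerivAt (fun y : ℝ => y ^ 2) (2 * s) s := by
    simpa using hasDerivAt_pow 2 s
  have hQ : HasDerivAt (fun y : ℝ => fd z / (2*z) * y^2 + f z - z * fd z / 2)
      (fd z / (2*z) * (2 * s)) s :=
    ((h1.const_mul (fd z / (2*z))).add_const (f z)).sub_const (z * fd z / 2)
  have hev : (fun y => F y z) =ᶠ[𝓝[Ici (0:ℝ)] s]
      (fun y : ℝ => fd z / (2*z) * y^2 + f z - z * fd z / 2) := by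
    filter_upwards [self_mem_nhdsWithin, mem_nhdsWithin_of_mem_nhds (Iio_mem_nhds hsz)]
      with t ht1 ht2
    rw [hF t ht1 z hzz, if_pos (mem_Iio.1 ht2)]
  have hD : HasDerivWithinAt (fun y => F y z) (fd z / (2*z) * (2 * s)) (Ici (0:ℝ)) s :=
    hQ.hasDerivWithinAt.congr_of_eventuallyEq hev
      (by rw [hF s hs z hzz, if_pos hsz])
  have huq := (hFy z hzz s hs).derivWithin (uniqueDiffOn_Ici 0 s hs)
  have huq2 := hD.derivWithin (uniqueDiffOn_Ici 0 s hs)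
  rw [← huq, huq2]
  field_simp

/-- Derivative of the cohesive energy in the region `s ≥ z`. -/
lemma aux_ge (f fd : ℝ → ℝ) (F Fy : ℝ → ℝ → ℝ)
    (hf1 : ∀ z ∈ Ici (0:ℝ), HasDerivWithinAt f (fd z) (Ici (0:ℝ)) z)
    (hF : ∀ y ∈ Ici (0:ℝ), ∀ z ∈ Ici (0:ℝ),
      F y z = if y < z then fd z / (2*z) * y^2 + f z - z * fd z / 2 else f y)
    (hFy : ∀ z ∈ Ici (0:ℝ), ∀ s ∈ Ici (0:ℝ),
      HasDerivWithinAt (fun y => F y z) (Fy s z) (Ici (0:ℝ)) s) :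
    ∀ z : ℝ, 0 ≤ z → ∀ s : ℝ, z ≤ s → Fy s z = fd s := by
  intro z hz s hzs
  have hs : (0:ℝ) ≤ s := le_trans hz hzs
  have key : HasDerivWithinAt (fun y => F y z) (fd s) (Ici (0:ℝ)) s := by
    rcases eq_or_lt_of_le hzs with rfl | hlt
    · -- s = z
      rcases eq_or_lt_of_le hz with hz0 | hz0
      · -- z = 0
        refine (hf1 z hz).congr (fun t ht => ?_) ?_
        · rw [hF t ht z hz, if_neg (by rw [← hz0]; exact not_lt.2 ht)]
        · rw [hF z hz z hz, if_neg (lt_irrefl z)]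
      · -- z > 0 : glue at z
        have hzne : z ≠ 0 := ne_of_gt hz0
        have h1 : HasDerivAt (fun y : ℝ => y ^ 2) (2 * z) z := by
          simpa using hasDerivAt_pow 2 z
        have hQ : HasDerivAt (fun y : ℝ => fd z / (2*z) * y^2 + f z - z * fd z / 2)
            (fd z / (2*z) * (2 * z)) z :=
          ((h1.const_mul (fd z / (2*z))).add_const (f z)).sub_const (z * fd z / 2)
        have hc : fd z / (2*z) * (2 * z) = fd z := by field_simp
        rw [hc] at hQ
        have hQz : fd z / (2*z) * z^2 + f z - z * fd z / 2 = f z := by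
          field_simp; ring
        have hleft : HasDerivWithinAt (fun y => F y z) (fd z) (Icc (0:ℝ) z) z := by
          refine hQ.hasDerivWithinAt.congr (fun t ht => ?_) ?_
          · rcases lt_or_eq_of_le ht.2 with h | h
            · rw [hF t ht.1 z hz, if_pos h]
            · subst h; rw [hF t ht.1 t ht.1, if_neg (lt_irrefl t), hQz]
          · rw [hF z hz z hz, if_neg (lt_irrefl z), hQz]
        have hright : HasDerivWithinAt (fun y => F y z) (fd z) (Ici z) z := by
          refine ((hf1 z hz).mono (Ici_subset_Ici.2 hz)).congr (fun t ht => ?_) ?_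
          · rw [hF t (le_trans hz ht) z hz, if_neg (not_lt.2 ht)]
          · rw [hF z hz z hz, if_neg (lt_irrefl z)]
        have := hleft.union hright
        rwa [Icc_union_Ici_eq_Ici hz] at this
    · -- z < s
      have hev : (fun y => F y z) =ᶠ[𝓝[Ici (0:ℝ)] s] f := by
        filter_upwards [self_mem_nhdsWithin, mem_nhdsWithin_of_mem_nhds (Ioi_mem_nhds hlt)]
          with t ht1 ht2
        rw [hF t ht1 z hz, if_neg (not_lt.2 (le_of_lt (mem_Ioi.1 ht2)))]
      exact (hf1 s hs).congr_of_eventuallyEq hev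
        (by rw [hF s hs z hz, if_neg (not_lt.2 hzs)])
  have huq := (hFy z hz s hs).derivWithin (uniqueDiffOn_Ici 0 s hs)
  have huq2 := key.derivWithin (uniqueDiffOn_Ici 0 s hs)
  rw [← huq, huq2]

/-- `|∂_yΦ_ε(s,z) - ∂_yΦ(s,z)| ≤ ψ'(0)·χ_[0,z_ε](max s z)` for all
`s, z ≥ 0`. -/
theorem stmt_14 (ψ ψd ψdd : ℝ → ℝ) (lam : ℝ) (hlam : 0 < lam)
    (hψmap : ∀ z ∈ Ici (0:ℝ), 0 ≤ ψ z)
    (hmono : StrictMonoOn ψ (Ici (0:ℝ)))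
    (hbdd : BddAbove (ψ '' Ici (0:ℝ)))
    (hconc : ConcaveOn ℝ (Ici (0:ℝ)) ψ)
    (hd1 : ∀ z ∈ Ici (0:ℝ), HasDerivWithinAt ψ (ψd z) (Ici (0:ℝ)) z)
    (hd2 : ∀ z ∈ Ici (0:ℝ), HasDerivWithinAt ψd (ψdd z) (Ici (0:ℝ)) z)
    (hd2cont : ContinuousOn ψdd (Ici (0:ℝ)))
    (hψ0 : ψ 0 = 0) (hψd0 : 0 < ψd 0)
    (hlow : ∀ z ∈ Ici (0:ℝ), -lam ≤ ψdd z)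
    (Φ : ℝ → ℝ → ℝ)
    (hΦ : ∀ y ∈ Ici (0:ℝ), ∀ z ∈ Ici (0:ℝ),
      Φ y z = if y < z then ψd z / (2*z) * y^2 + ψ z - z * ψd z / 2 else ψ y)
    (ε : ℝ) (hε : 0 < ε) (zε : ℝ) (hzε : 0 < zε)
    (hfix : ε * ψd zε = zε)
    (huniq : ∀ z : ℝ, 0 ≤ z → ε * ψd z = z → z = zε)
    (ψε ψεd : ℝ → ℝ)
    (hψε : ∀ z ∈ Ici (0:ℝ),
      ψε z = if z ≤ zε then z^2 / (2*ε) else ψ z - ψ zε + zε^2 / (2*ε))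
    (hψεd : ∀ z ∈ Ici (0:ℝ), HasDerivWithinAt ψε (ψεd z) (Ici (0:ℝ)) z)
    (Φε : ℝ → ℝ → ℝ)
    (hΦε : ∀ y ∈ Ici (0:ℝ), ∀ z ∈ Ici (0:ℝ),
      Φε y z = if y < z then ψεd z / (2*z) * y^2 + ψε z - z * ψεd z / 2 else ψε y)
    (Φy Φεy : ℝ → ℝ → ℝ)
    (hΦy : ∀ z ∈ Ici (0:ℝ), ∀ s ∈ Ici (0:ℝ),
      HasDerivWithinAt (fun y => Φ y z) (Φy s z) (Ici (0:ℝ)) s)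
    (hΦεy : ∀ z ∈ Ici (0:ℝ), ∀ s ∈ Ici (0:ℝ),
      HasDerivWithinAt (fun y => Φε y z) (Φεy s z) (Ici (0:ℝ)) s) :
    ∀ s ∈ Ici (0:ℝ), ∀ z ∈ Ici (0:ℝ),
      |Φεy s z - Φy s z|
        ≤ ψd 0 * Set.indicator (Icc 0 zε) (fun _ => (1:ℝ)) (max s z) := by
  have hzε0 : (0:ℝ) ≤ zε := le_of_lt hzε
  have hεne : ε ≠ 0 := ne_of_gt hε
  -- ψd is antitone on [0,∞)
  have hdiff : DifferentiableOn ℝ ψ (Ici 0) := fun x hx => (hd1 x hx).differentiableWithinAt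
  have hanti : ∀ a : ℝ, 0 ≤ a → ∀ b : ℝ, a ≤ b → ψd b ≤ ψd a := by
    intro a ha b hab
    have hb : (0:ℝ) ≤ b := le_trans ha hab
    have := hconc.antitoneOn_derivWithin hdiff ha hb hab
    rwa [(hd1 a ha).derivWithin (uniqueDiffOn_Ici 0 a ha),
      (hd1 b hb).derivWithin (uniqueDiffOn_Ici 0 b hb)] at this
  -- ψd continuity
  have hψdc : ContinuousOn ψd (Ici (0:ℝ)) := fun x hx => (hd2 x hx).continuousWithinAt
  -- below the fixed point, z ≤ ε ψd z
  have hfixle : ∀ x : ℝ, 0 ≤ x → x ≤ zε → x ≤ ε * ψd x := by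
    intro x hx hxz
    by_contra hcon
    push_neg at hcon
    have hgc : ContinuousOn (fun t => ε * ψd t - t) (Icc 0 x) :=
      ((continuousOn_const.mul (hψdc.mono (Icc_subset_Ici_self))).sub continuousOn_id)
    have hmem : (0:ℝ) ∈ Icc (ε * ψd x - x) (ε * ψd 0 - 0) :=
      ⟨by linarith, by nlinarith⟩
    obtain ⟨c, hc, hc0⟩ := intermediate_value_Icc' hx hgc hmem
    have hcz : c = zε := huniq c hc.1 (by simpa using sub_eq_zero.1 hc0)
    have : x = zε := le_antisymm hxz (hcz ▸ hc.2)
    rw [this] at hcon; linarith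
  -- ψεd on [0, zε]
  have keyuniq : ∀ (g : ℝ → ℝ) (d₁ d₂ : ℝ) (x : ℝ), 0 ≤ x →
      HasDerivWithinAt g d₁ (Ici (0:ℝ)) x → HasDerivWithinAt g d₂ (Ici (0:ℝ)) x → d₁ = d₂ := by
    intro g d₁ d₂ x hx h1 h2
    rw [← h1.derivWithin (uniqueDiffOn_Ici 0 x hx), h2.derivWithin (uniqueDiffOn_Ici 0 x hx)]
  have hquad : ∀ x : ℝ, HasDerivAt (fun t : ℝ => t^2 / (2*ε)) (x / ε) x := by
    intro x
    have h := (hasDerivAt_pow 2 x).div_const (2*ε)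
    refine h.congr_deriv ?_
    norm_num
    field_simp
  have hψεd_lo : ∀ x : ℝ, 0 ≤ x → x ≤ zε → ψεd x = x / ε := by
    intro x hx hxz
    rcases lt_or_eq_of_le hxz with hlt | heq
    · refine keyuniq ψε (ψεd x) (x / ε) x hx (hψεd x hx) ?_
      refine (hquad x).hasDerivWithinAt.congr_of_eventuallyEq ?_
        (by rw [hψε x hx, if_pos hxz])
      filter_upwards [self_mem_nhdsWithin, mem_nhdsWithin_of_mem_nhds (Iio_mem_nhds hlt)]
        with t ht1 ht2
      rw [hψε t ht1, if_pos (le_of_lt (mem_Iio.1 ht2))]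
    · subst heq
      refine keyuniq ψε (ψεd x) (x / ε) x hx (hψεd x hx) ?_
      have hψdx : ψd x = x / ε := by rw [eq_div_iff hεne]; linarith [hfix]
      have hleft : HasDerivWithinAt ψε (x / ε) (Icc (0:ℝ) x) x := by
        refine (hquad x).hasDerivWithinAt.congr (fun t ht => ?_) ?_
        · rw [hψε t ht.1, if_pos ht.2]
        · rw [hψε x hx, if_pos le_rfl]
      have hright : HasDerivWithinAt ψε (x / ε) (Ici x) x := by
        have hg : HasDerivWithinAt (fun t => ψ t - ψ x + x^2/(2*ε)) (ψd x) (Ici (0:ℝ)) x :=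
          ((hd1 x hx).sub_const (ψ x)).add_const (x^2/(2*ε))
        rw [hψdx] at hg
        refine (hg.mono (Ici_subset_Ici.2 hx)).congr (fun t ht => ?_) ?_
        · rcases eq_or_lt_of_le (mem_Ici.1 ht) with h | h
          · rw [hψε t (le_trans hx ht), ← h, if_pos le_rfl]; ring
          · rw [hψε t (le_trans hx ht), if_neg (not_le.2 h)]
        · rw [hψε x hx, if_pos le_rfl]; ring
      have := hleft.union hright
      rwa [Icc_union_Ici_eq_Ici hx] at this
  -- ψεd above zε
  have hψεd_hi : ∀ x : ℝ, zε < x → ψεd x = ψd x := by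
    intro x hx
    have hx0 : (0:ℝ) ≤ x := le_trans hzε0 (le_of_lt hx)
    refine keyuniq ψε (ψεd x) (ψd x) x hx0 (hψεd x hx0) ?_
    have hg : HasDerivWithinAt (fun t => ψ t - ψ zε + zε^2/(2*ε)) (ψd x) (Ici (0:ℝ)) x :=
      ((hd1 x hx0).sub_const (ψ zε)).add_const (zε^2/(2*ε))
    refine hg.congr_of_eventuallyEq ?_ (by rw [hψε x hx0, if_neg (not_le.2 hx)])
    filter_upwards [self_mem_nhdsWithin, mem_nhdsWithin_of_mem_nhds (Ioi_mem_nhds hx)]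
      with t ht1 ht2
    rw [hψε t ht1, if_neg (not_le.2 (mem_Ioi.1 ht2))]
  -- derivative formulas
  have hΦlt := aux_lt ψ ψd Φ Φy hΦ hΦy
  have hΦge := aux_ge ψ ψd Φ Φy hd1 hΦ hΦy
  have hΦεlt := aux_lt ψε ψεd Φε Φεy hΦε hΦεy
  have hΦεge := aux_ge ψε ψεd Φε Φεy hψεd hΦε hΦεy
  intro s hs z hz
  have hs' : (0:ℝ) ≤ s := hs
  have hz' : (0:ℝ) ≤ z := hz
  rcases lt_or_ge s z with hsz | hzs
  · -- s < z
    have hz0 : 0 < z := lt_of_le_of_lt hs' hsz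
    have h1 : Φy s z = ψd z / z * s := hΦlt z hz0 s hs' hsz
    have h2 : Φεy s z = ψεd z / z * s := hΦεlt z hz0 s hs' hsz
    have hmax : max s z = z := max_eq_right (le_of_lt hsz)
    rcases le_or_gt z zε with hle | hgt
    · have hm : z ∈ Icc (0:ℝ) zε := mem_Icc.2 ⟨hz', hle⟩
      rw [h1, h2, hψεd_lo z hz' hle, hmax, indicator_of_mem hm]
      have key1 : z / ε ≤ ψd z := by
        rw [div_le_iff₀ hε]; nlinarith [hfixle z hz' hle]
      have key2 : ψd z ≤ ψd 0 := hanti 0 le_rfl z hz'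
      have hsz1 : s / z ≤ 1 := by rw [div_le_one hz0]; exact le_of_lt hsz
      have hsz0 : 0 ≤ s / z := div_nonneg hs' (le_of_lt hz0)
      have e : z / ε / z * s - ψd z / z * s = -((ψd z - z / ε) * (s / z)) := by
        field_simp; ring
      rw [e, abs_neg, abs_of_nonneg (mul_nonneg (by linarith) hsz0), mul_one]
      have hz_ε : 0 ≤ z / ε := div_nonneg hz' (le_of_lt hε)
      nlinarith
    · rw [h1, h2, hψεd_hi z hgt, hmax,
        indicator_of_notMem (fun h => absurd h.2 (not_le.2 hgt))]
      simp
  · -- z ≤ s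
    have h1 : Φy s z = ψd s := hΦge z hz' s hzs
    have h2 : Φεy s z = ψεd s := hΦεge z hz' s hzs
    have hmax : max s z = s := max_eq_left hzs
    rcases le_or_gt s zε with hle | hgt
    · have hm : s ∈ Icc (0:ℝ) zε := mem_Icc.2 ⟨hs', hle⟩
      rw [h1, h2, hψεd_lo s hs' hle, hmax, indicator_of_mem hm]
      have key1 : s / ε ≤ ψd s := by
        rw [div_le_iff₀ hε]; nlinarith [hfixle s hs' hle]
      have key2 : ψd s ≤ ψd 0 := hanti 0 le_rfl s hs'
      have hs_ε : 0 ≤ s / ε := div_nonneg hs' (le_of_lt hε)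
      rw [abs_of_nonpos (by linarith), mul_one]
      linarith
    · rw [h1, h2, hψεd_hi s hgt, hmax,
        indicator_of_notMem (fun h => absurd h.2 (not_le.2 hgt))]
      simp
end

section
/- The regularized density Φ_ε is nonnegative and continuous on [0,∞)², and it is bounded uniformly in ε: there is a constant M > 0 depending only on ψ such that 0 ≤ Φ_ε(y,z) ≤ M for all (y,z) ∈ [0,∞)² and all ε ∈ (0,1]. Moreover, for every z ≥ 0 the function y ↦ Φ_ε(y,z) is nondecreasing, Lipschitz continuous and of class C¹ on [0,∞), with 0 ≤ ∂_yΦ_ε(y,z) ≤ ψ'(0) for all y,z ≥ 0 and ∂_yΦ_ε(0,z) = 0 for all z ≥ 0. -/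
set_option autoImplicit false
set_option maxHeartbeats 1000000

open Set Filter Topology

/-- the regularized density `Φ_ε` is nonnegative and continuous on
`[0,∞)²` and bounded uniformly in `ε ∈ (0,1]`; moreover for every `z ≥ 0` the map
`y ↦ Φ_ε(y,z)` is nondecreasing, Lipschitz and `C¹` with `0 ≤ ∂_yΦ_ε ≤ ψ'(0)` and
`∂_yΦ_ε(0,z) = 0`. -/
theorem stmt_15 (ψ ψd ψdd : ℝ → ℝ) (lam : ℝ) (hlam : 0 < lam)
    (hψmap : ∀ z ∈ Ici (0:ℝ), 0 ≤ ψ z)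
    (hmono : StrictMonoOn ψ (Ici (0:ℝ)))
    (hbdd : BddAbove (ψ '' Ici (0:ℝ)))
    (hconc : ConcaveOn ℝ (Ici (0:ℝ)) ψ)
    (hd1 : ∀ z ∈ Ici (0:ℝ), HasDerivWithinAt ψ (ψd z) (Ici (0:ℝ)) z)
    (hd2 : ∀ z ∈ Ici (0:ℝ), HasDerivWithinAt ψd (ψdd z) (Ici (0:ℝ)) z)
    (hd2cont : ContinuousOn ψdd (Ici (0:ℝ)))
    (hψ0 : ψ 0 = 0) (hψd0 : 0 < ψd 0)
    (hlow : ∀ z ∈ Ici (0:ℝ), -lam ≤ ψdd z)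
    (zfun : ℝ → ℝ)
    (hz : ∀ ε > (0:ℝ), 0 < zfun ε ∧ ε * ψd (zfun ε) = zfun ε ∧
      ∀ z : ℝ, 0 ≤ z → ε * ψd z = z → z = zfun ε)
    (Ψ Ψd : ℝ → ℝ → ℝ)
    (hΨ : ∀ ε > (0:ℝ), ∀ z ∈ Ici (0:ℝ),
      Ψ ε z = if z ≤ zfun ε then z^2 / (2*ε)
        else ψ z - ψ (zfun ε) + (zfun ε)^2 / (2*ε))
    (hΨd : ∀ ε > (0:ℝ), ∀ z ∈ Ici (0:ℝ), HasDerivWithinAt (Ψ ε) (Ψd ε z) (Ici (0:ℝ)) z)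
    (Φε : ℝ → ℝ → ℝ → ℝ)
    (hΦε : ∀ ε > (0:ℝ), ∀ y ∈ Ici (0:ℝ), ∀ z ∈ Ici (0:ℝ),
      Φε ε y z = if y < z then Ψd ε z / (2*z) * y^2 + Ψ ε z - z * Ψd ε z / 2
        else Ψ ε y) :
    (∀ ε > (0:ℝ), ∀ y ∈ Ici (0:ℝ), ∀ z ∈ Ici (0:ℝ), 0 ≤ Φε ε y z) ∧
    (∀ ε > (0:ℝ), ContinuousOn (Function.uncurry (Φε ε)) (Ici (0:ℝ) ×ˢ Ici (0:ℝ))) ∧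
    (∃ M > (0:ℝ), ∀ ε ∈ Ioc (0:ℝ) 1, ∀ y ∈ Ici (0:ℝ), ∀ z ∈ Ici (0:ℝ),
      Φε ε y z ≤ M) ∧
    (∀ ε > (0:ℝ), ∀ z ∈ Ici (0:ℝ),
      MonotoneOn (fun y => Φε ε y z) (Ici (0:ℝ)) ∧
      (∃ K : NNReal, LipschitzOnWith K (fun y => Φε ε y z) (Ici (0:ℝ))) ∧
      ∃ Φεy : ℝ → ℝ,
        (∀ y ∈ Ici (0:ℝ), HasDerivWithinAt (fun y' => Φε ε y' z) (Φεy y) (Ici (0:ℝ)) y) ∧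
        ContinuousOn Φεy (Ici (0:ℝ)) ∧
        (∀ y ∈ Ici (0:ℝ), 0 ≤ Φεy y ∧ Φεy y ≤ ψd 0) ∧
        Φεy 0 = 0) := by
  -- slope inequalities for the concave function ψ
  have hslope_ub : ∀ a b : ℝ, 0 ≤ a → a < b → ψ b - ψ a ≤ ψd a * (b - a) := by
    intro a b ha hab
    have hb : (0:ℝ) ≤ b := ha.trans hab.le
    have h := hconc.slope_le_of_hasDerivWithinAt (mem_Ici.2 ha) (mem_Ici.2 hb) hab (hd1 a ha)
    rw [slope_def_field] at h
    have hba : (0:ℝ) < b - a := by linarith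
    rw [div_le_iff₀ (by linarith : (0:ℝ) < b - a)] at h
    · linarith
  have hslope_lb : ∀ a b : ℝ, 0 ≤ a → a < b → ψd b * (b - a) ≤ ψ b - ψ a := by
    intro a b ha hab
    have hb : (0:ℝ) ≤ b := ha.trans hab.le
    have h := hconc.le_slope_of_hasDerivWithinAt (mem_Ici.2 ha) (mem_Ici.2 hb) hab (hd1 b hb)
    rw [slope_def_field] at h
    rw [le_div_iff₀ (by linarith : (0:ℝ) < b - a)] at h
    linarith
  have hψd_pos : ∀ x : ℝ, 0 ≤ x → 0 < ψd x := by
    intro x hx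
    have h := hslope_ub x (x+1) hx (by linarith)
    have h2 : ψ x < ψ (x+1) := hmono (mem_Ici.2 hx) (mem_Ici.2 (by linarith)) (by linarith)
    nlinarith
  have hψd_anti : ∀ a b : ℝ, 0 ≤ a → a ≤ b → ψd b ≤ ψd a := by
    intro a b ha hab
    rcases eq_or_lt_of_le hab with rfl | hab
    · exact le_rfl
    have h1 := hslope_ub a b ha hab
    have h2 := hslope_lb a b ha hab
    nlinarith
  have hfix : ∀ ε : ℝ, 0 < ε → ψd (zfun ε) = zfun ε / ε := by
    intro ε hε
    obtain ⟨hzp, hzf, -⟩ := hz ε hε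
    field_simp
    linarith
  have hΨd_eq : ∀ ε : ℝ, 0 < ε → ∀ w : ℝ, 0 ≤ w →
      Ψd ε w = if w ≤ zfun ε then w / ε else ψd w := by
    intro ε hε w hw
    obtain ⟨hzp, hzf, -⟩ := hz ε hε
    set c := zfun ε with hc
    have hc0 : (0:ℝ) ≤ c := hzp.le
    have hεne : (2:ℝ) * ε ≠ 0 := by positivity
    have hF : HasDerivWithinAt (Ψ ε) (if w ≤ c then w / ε else ψd w) (Ici (0:ℝ)) w := by
      rcases lt_trichotomy w c with hwc | rfl | hcw
      · rw [if_pos hwc.le]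
        have hq : HasDerivWithinAt (fun t : ℝ => t^2 / (2*ε)) (w / ε) (Ici (0:ℝ)) w := by
          have := ((hasDerivAt_pow 2 w).div_const (2*ε)).hasDerivWithinAt (s := Ici (0:ℝ))
          refine this.congr_deriv ?_
          field_simp
          ring
        refine hq.congr_of_eventuallyEq ?_ ?_
        · filter_upwards [eventually_mem_nhdsWithin,
            ((eventually_lt_nhds hwc).filter_mono nhdsWithin_le_nhds)] with t ht htc
          rw [hΨ ε hε t ht, if_pos htc.le]
        · rw [hΨ ε hε w hw, if_pos hwc.le]
      · rw [if_pos le_rfl]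
        rw [show Ici (0:ℝ) = Icc 0 c ∪ Ici c from (Icc_union_Ici_eq_Ici hc0).symm]
        apply HasDerivWithinAt.union
        · have hq : HasDerivWithinAt (fun t : ℝ => t^2 / (2*ε)) (c / ε) (Icc (0:ℝ) c) c := by
            have := ((hasDerivAt_pow 2 c).div_const (2*ε)).hasDerivWithinAt (s := Icc (0:ℝ) c)
            refine this.congr_deriv ?_
            field_simp
            ring
          refine hq.congr ?_ ?_
          · intro t ht
            rw [hΨ ε hε t (ht.1), if_pos ht.2]
          · rw [hΨ ε hε c hc0, if_pos le_rfl]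
        · have hq : HasDerivWithinAt (fun t : ℝ => ψ t - ψ c + c^2/(2*ε)) (c / ε) (Ici c) c := by
            have := (((hd1 c hc0).mono (Ici_subset_Ici.2 hc0)).sub_const (ψ c)).add_const
              (c^2/(2*ε))
            rwa [hfix ε hε, ← hc] at this
          refine hq.congr ?_ ?_
          · intro t ht
            rcases eq_or_lt_of_le (mem_Ici.1 ht) with heq | htc
            · rw [← heq, hΨ ε hε c hc0, if_pos le_rfl]; ring
            · rw [hΨ ε hε t (hc0.trans htc.le), if_neg (not_le.2 htc)]
          · rw [hΨ ε hε c hc0, if_pos le_rfl]; ring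
      · rw [if_neg (not_le.2 hcw)]
        have hq : HasDerivWithinAt (fun t : ℝ => ψ t - ψ c + c^2/(2*ε)) (ψd w) (Ici (0:ℝ)) w :=
          ((hd1 w hw).sub_const (ψ c)).add_const (c^2/(2*ε))
        refine hq.congr_of_eventuallyEq ?_ ?_
        · filter_upwards [eventually_mem_nhdsWithin,
            (eventually_gt_nhds hcw).filter_mono nhdsWithin_le_nhds]
            with t ht htc
          rw [hΨ ε hε t ht, if_neg (not_le.2 htc)]
        · rw [hΨ ε hε w hw, if_neg (not_le.2 hcw)]
    exact (uniqueDiffOn_Ici 0 w hw).eq_deriv _ (hΨd ε hε w hw) hF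
  have hΨd_nonneg : ∀ ε : ℝ, 0 < ε → ∀ w : ℝ, 0 ≤ w → 0 ≤ Ψd ε w := by
    intro ε hε w hw
    rw [hΨd_eq ε hε w hw]
    split_ifs with h
    · positivity
    · exact (hψd_pos w hw).le
  have hΨd_le : ∀ ε : ℝ, 0 < ε → ∀ w : ℝ, 0 ≤ w → Ψd ε w ≤ ψd 0 := by
    intro ε hε w hw
    obtain ⟨hzp, hzf, -⟩ := hz ε hε
    rw [hΨd_eq ε hε w hw]
    split_ifs with h
    · calc w / ε ≤ zfun ε / ε := by gcongr
        _ = ψd (zfun ε) := (hfix ε hε).symm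
        _ ≤ ψd 0 := hψd_anti 0 (zfun ε) le_rfl hzp.le
    · exact hψd_anti 0 w le_rfl hw
  have hΨnonneg : ∀ ε : ℝ, 0 < ε → ∀ w : ℝ, 0 ≤ w → 0 ≤ Ψ ε w := by
    intro ε hε w hw
    obtain ⟨hzp, -, -⟩ := hz ε hε
    rw [hΨ ε hε w hw]
    split_ifs with h
    · positivity
    · have h1 : ψ (zfun ε) ≤ ψ w :=
        hmono.monotoneOn (mem_Ici.2 hzp.le) (mem_Ici.2 hw) (not_le.1 h).le
      have h2 : (0:ℝ) ≤ (zfun ε)^2/(2*ε) := by positivity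
      linarith
  have hΨ0 : ∀ ε : ℝ, 0 < ε → Ψ ε 0 = 0 := by
    intro ε hε
    obtain ⟨hzp, -, -⟩ := hz ε hε
    rw [hΨ ε hε 0 self_mem_Ici, if_pos hzp.le]
    norm_num
  have hkey : ∀ ε : ℝ, 0 < ε → ∀ w : ℝ, 0 ≤ w → w * Ψd ε w / 2 ≤ Ψ ε w := by
    intro ε hε w hw
    obtain ⟨hzp, hzf, -⟩ := hz ε hε
    rw [hΨd_eq ε hε w hw, hΨ ε hε w hw]
    split_ifs with h
    · have heq : w * (w/ε)/2 = w^2/(2*ε) := by field_simp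
      linarith [heq.le]
    · push_neg at h
      have h1 := hslope_lb (zfun ε) w hzp.le h
      have h2 : ψd (zfun ε) = zfun ε / ε := hfix ε hε
      have h3 : ψd w ≤ ψd (zfun ε) := hψd_anti (zfun ε) w hzp.le h.le
      have h4 : 0 ≤ ψd w := (hψd_pos w hw).le
      have h5 : (zfun ε)^2/(2*ε) = zfun ε * ψd (zfun ε)/2 := by rw [h2]; field_simp
      nlinarith [hzp.le]
  have hΦ_le : ∀ ε : ℝ, 0 < ε → ∀ y : ℝ, 0 ≤ y → ∀ w : ℝ, 0 ≤ w →
      Φε ε y w ≤ Ψ ε (max y w) := by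
    intro ε hε y hy w hw
    rw [hΦε ε hε y hy w hw]
    split_ifs with h
    · rw [max_eq_right h.le]
      have hw0 : (0:ℝ) < w := lt_of_le_of_lt hy h
      have h1 : Ψd ε w / (2*w) * y^2 ≤ Ψd ε w / (2*w) * w^2 := by
        have hcoef : (0:ℝ) ≤ Ψd ε w / (2*w) :=
          div_nonneg (hΨd_nonneg ε hε w hw) (by positivity)
        have hysq : y^2 ≤ w^2 := by nlinarith
        exact mul_le_mul_of_nonneg_left hysq hcoef
      have h2 : Ψd ε w / (2*w) * w^2 = w * Ψd ε w / 2 := by field_simp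
      linarith
    · rw [max_eq_left (not_lt.1 h)]
  have hΦnonneg : ∀ ε : ℝ, 0 < ε → ∀ y : ℝ, 0 ≤ y → ∀ w : ℝ, 0 ≤ w → 0 ≤ Φε ε y w := by
    intro ε hε y hy w hw
    rw [hΦε ε hε y hy w hw]
    split_ifs with h
    · have hw0 : (0:ℝ) < w := lt_of_le_of_lt hy h
      have h1 : (0:ℝ) ≤ Ψd ε w / (2*w) * y^2 := by
        apply mul_nonneg (div_nonneg (hΨd_nonneg ε hε w hw) (by positivity)) (by positivity)
      have h2 := hkey ε hε w hw
      linarith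
    · exact hΨnonneg ε hε y hy
  have hΨcont : ∀ ε : ℝ, 0 < ε → ContinuousOn (Ψ ε) (Ici (0:ℝ)) :=
    fun ε hε w hw => (hΨd ε hε w hw).continuousWithinAt
  have hψdcont : ContinuousOn ψd (Ici (0:ℝ)) :=
    fun w hw => (hd2 w hw).continuousWithinAt
  have hΨdcont : ∀ ε : ℝ, 0 < ε → ContinuousOn (Ψd ε) (Ici (0:ℝ)) := by
    intro ε hε
    obtain ⟨hzp, -, -⟩ := hz ε hε
    have hcont : Continuous (fun v : ℝ => if v ≤ zfun ε then v / ε else ψd v) := by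
      apply continuous_if_le continuous_id continuous_const
        (continuous_id.div_const ε).continuousOn
        (hψdcont.mono (fun v hv => hzp.le.trans hv))
      intro v hv
      have hv' : v = zfun ε := hv
      subst hv'
      exact (hfix ε hε).symm
    exact hcont.continuousOn.congr (fun v hv => hΨd_eq ε hε v hv)
  have hΨd00 : ∀ ε : ℝ, 0 < ε → Ψd ε 0 = 0 := by
    intro ε hε
    obtain ⟨hzp, -, -⟩ := hz ε hε
    rw [hΨd_eq ε hε 0 le_rfl, if_pos hzp.le]
    norm_num
  refine ⟨fun ε hε y hy w hw => hΦnonneg ε hε y hy w hw, ?_, ?_, ?_⟩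
  · -- joint continuity
    intro ε hε p hp
    obtain ⟨hp1, hp2⟩ := mem_prod.1 hp
    rw [mem_Ici] at hp1 hp2
    rcases lt_or_eq_of_le hp2 with hz2 | hz2
    · -- p.2 > 0
      have hO : {q : ℝ × ℝ | 0 < q.2} ∈ 𝓝 p :=
        (isOpen_lt continuous_const continuous_snd).mem_nhds hz2
      rw [← continuousWithinAt_inter hO]
      have hmaps : ∀ q : ℝ × ℝ, q ∈ (Ici (0:ℝ) ×ˢ Ici (0:ℝ)) ∩ {q : ℝ × ℝ | 0 < q.2} →
          max q.1 q.2 ∈ Ici (0:ℝ) :=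
        fun q hq => mem_Ici.2 (le_max_of_le_left (mem_Ici.1 (mem_prod.1 hq.1).1))
      have hGcont : ContinuousOn
          (fun q : ℝ × ℝ => Ψ ε (max q.1 q.2) + Ψd ε q.2 * ((min q.1 q.2)^2 - q.2^2) / (2*q.2))
          ((Ici (0:ℝ) ×ˢ Ici (0:ℝ)) ∩ {q : ℝ × ℝ | 0 < q.2}) := by
        apply ContinuousOn.add
        · exact (hΨcont ε hε).comp ((continuous_fst.max continuous_snd).continuousOn) hmaps
        · apply ContinuousOn.div
          · apply ContinuousOn.mul
            · exact (hΨdcont ε hε).comp continuous_snd.continuousOn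
                (fun q hq => mem_Ici.2 (mem_prod.1 hq.1).2)
            · exact (((continuous_fst.min continuous_snd).pow 2).sub
                (continuous_snd.pow 2)).continuousOn
          · exact (continuous_const.mul continuous_snd).continuousOn
          · intro q hq
            have h2 : (0:ℝ) < q.2 := hq.2
            positivity
      refine (hGcont.congr ?_) p ⟨hp, hz2⟩
      intro q hq
      obtain ⟨hq', hq2⟩ := hq
      obtain ⟨hq1, hq2'⟩ := mem_prod.1 hq'
      rw [mem_Ici] at hq1 hq2'
      have hq2pos : (0:ℝ) < q.2 := hq2
      show Φε ε q.1 q.2 =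
        Ψ ε (max q.1 q.2) + Ψd ε q.2 * ((min q.1 q.2)^2 - q.2^2) / (2*q.2)
      rw [hΦε ε hε q.1 hq1 q.2 hq2']
      split_ifs with h
      · rw [max_eq_right h.le, min_eq_left h.le]
        field_simp
        ring
      · rw [max_eq_left (not_lt.1 h), min_eq_right (not_lt.1 h)]
        ring
    · -- p.2 = 0
      rcases lt_or_eq_of_le hp1 with hy1 | hy1
      · -- p.1 > 0
        have hO : {q : ℝ × ℝ | q.2 < q.1} ∈ 𝓝 p := by
          apply (isOpen_lt continuous_snd continuous_fst).mem_nhds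
          show p.2 < p.1
          rw [← hz2]; exact hy1
        rw [← continuousWithinAt_inter hO]
        have hcont : ContinuousOn (fun q : ℝ × ℝ => Ψ ε q.1)
            ((Ici (0:ℝ) ×ˢ Ici (0:ℝ)) ∩ {q : ℝ × ℝ | q.2 < q.1}) :=
          (hΨcont ε hε).comp continuous_fst.continuousOn
            (fun q hq => (mem_prod.1 hq.1).1)
        refine (hcont.congr ?_) p ⟨hp, by show p.2 < p.1; rw [← hz2]; exact hy1⟩
        intro q hq
        obtain ⟨hq', hq2⟩ := hq
        obtain ⟨hq1, hq2'⟩ := mem_prod.1 hq'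
        show Φε ε q.1 q.2 = Ψ ε q.1
        rw [hΦε ε hε q.1 hq1 q.2 hq2', if_neg (not_lt.2 (le_of_lt hq2))]
      · -- p = (0,0)
        have hval : Function.uncurry (Φε ε) p = 0 := by
          show Φε ε p.1 p.2 = 0
          rw [hΦε ε hε p.1 hp1 p.2 hp2, if_neg (by rw [← hy1, ← hz2]; exact lt_irrefl 0),
            ← hy1, hΨ0 ε hε]
        rw [ContinuousWithinAt, hval]
        have hmax0 : max p.1 p.2 = 0 := by rw [← hy1, ← hz2]; exact max_self 0
        have hcw : ContinuousWithinAt (fun q : ℝ × ℝ => Ψ ε (max q.1 q.2))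
            (Ici (0:ℝ) ×ˢ Ici (0:ℝ)) p := by
          apply ContinuousWithinAt.comp (f := fun q : ℝ × ℝ => max q.1 q.2)
            (by rw [hmax0]; exact (hΨcont ε hε) 0 self_mem_Ici)
            ((continuous_fst.max continuous_snd).continuousWithinAt)
          intro q hq
          exact mem_Ici.2 (le_max_of_le_left (mem_prod.1 hq).1)
        have hh : Tendsto (fun q : ℝ × ℝ => Ψ ε (max q.1 q.2))
            (𝓝[Ici (0:ℝ) ×ˢ Ici (0:ℝ)] p) (𝓝 0) := by
          have := hcw
          rw [ContinuousWithinAt, hmax0, hΨ0 ε hε] at this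
          exact this
        refine tendsto_of_tendsto_of_tendsto_of_le_of_le' tendsto_const_nhds hh ?_ ?_
        · filter_upwards [eventually_mem_nhdsWithin] with q hq
          exact hΦnonneg ε hε q.1 (mem_prod.1 hq).1 q.2 (mem_prod.1 hq).2
        · filter_upwards [eventually_mem_nhdsWithin] with q hq
          exact hΦ_le ε hε q.1 (mem_prod.1 hq).1 q.2 (mem_prod.1 hq).2
  · -- uniform bound
    obtain ⟨B, hB⟩ := hbdd
    have hB0 : (0:ℝ) ≤ B := by
      have h := hB ⟨0, self_mem_Ici, rfl⟩
      rw [hψ0] at h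
      exact h
    refine ⟨B + (ψd 0)^2/2 + 1, by nlinarith [sq_nonneg (ψd 0)], ?_⟩
    intro ε hε y hy w hw
    rw [mem_Ici] at hy hw
    obtain ⟨hε0, hε1⟩ := hε
    obtain ⟨hzp, hzf, -⟩ := hz ε hε0
    have hcle : zfun ε ≤ ε * ψd 0 := by
      have h := hψd_anti 0 (zfun ε) le_rfl hzp.le
      nlinarith
    have hΨle : ∀ v : ℝ, 0 ≤ v → Ψ ε v ≤ B + (ψd 0)^2/2 := by
      intro v hv
      rw [hΨ ε hε0 v hv]
      have hc2 : (zfun ε)^2/(2*ε) ≤ (ψd 0)^2/2 := by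
        rw [div_le_div_iff₀ (by positivity) (by norm_num)]
        nlinarith [hzp.le, sq_nonneg (ψd 0)]
      split_ifs with h
      · have h1 : v^2/(2*ε) ≤ (zfun ε)^2/(2*ε) := by gcongr
        linarith
      · have h1 : ψ v ≤ B := hB ⟨v, mem_Ici.2 hv, rfl⟩
        have h2 : (0:ℝ) ≤ ψ (zfun ε) := hψmap (zfun ε) (mem_Ici.2 hzp.le)
        linarith
    calc Φε ε y w ≤ Ψ ε (max y w) := hΦ_le ε hε0 y hy w hw
      _ ≤ B + (ψd 0)^2/2 := hΨle _ (le_max_of_le_left hy)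
      _ ≤ B + (ψd 0)^2/2 + 1 := by linarith
  · -- fixed z properties
    intro ε hε w hw
    rw [mem_Ici] at hw
    set Φy : ℝ → ℝ := fun y => if y < w then Ψd ε w * y / w else Ψd ε y with hΦy
    have hder : ∀ y ∈ Ici (0:ℝ), HasDerivWithinAt (fun y' => Φε ε y' w) (Φy y) (Ici (0:ℝ)) y := by
      intro y hy
      rw [mem_Ici] at hy
      rcases lt_trichotomy y w with hyw | rfl | hwy
      · -- y < w, so w > 0
        have hw0 : (0:ℝ) < w := lt_of_le_of_lt hy hyw
        have hΦyy : Φy y = Ψd ε w / (2*w) * (2*y) := by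
          simp only [hΦy, if_pos hyw]
          field_simp
        rw [hΦyy]
        have hq : HasDerivWithinAt
            (fun y' : ℝ => Ψd ε w / (2*w) * y'^2 + Ψ ε w - w * Ψd ε w / 2)
            (Ψd ε w / (2*w) * (2*y)) (Ici (0:ℝ)) y := by
          have := ((((hasDerivAt_pow 2 y).const_mul (Ψd ε w / (2*w))).add_const
            (Ψ ε w)).sub_const (w * Ψd ε w / 2)).hasDerivWithinAt (s := Ici (0:ℝ))
          refine this.congr_deriv ?_
          push_cast
          ring
        refine hq.congr_of_eventuallyEq ?_ ?_
        · filter_upwards [eventually_mem_nhdsWithin,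
            (eventually_lt_nhds hyw).filter_mono nhdsWithin_le_nhds] with t ht htw
          rw [hΦε ε hε t ht w hw, if_pos htw]
        · rw [hΦε ε hε y hy w hw, if_pos hyw]
      · -- y = w (w substituted to y)
        have hΦyy : Φy y = Ψd ε y := by simp only [hΦy, lt_irrefl, if_false]
        rcases eq_or_lt_of_le hw with hw0 | hw0
        · -- y = 0
          have hEq : ∀ t ∈ Ici (0:ℝ), Φε ε t y = Ψ ε t := by
            intro t ht
            rw [hΦε ε hε t ht y hw, if_neg (not_lt.2 (by rw [← hw0]; exact ht))]
          rw [hΦyy]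
          exact (hΨd ε hε y hw).congr hEq (hEq y hw)
        · -- y > 0
          rw [hΦyy, show Ici (0:ℝ) = Icc 0 y ∪ Ici y from (Icc_union_Ici_eq_Ici hw).symm]
          apply HasDerivWithinAt.union
          · have hq : HasDerivWithinAt
                (fun y' : ℝ => Ψd ε y / (2*y) * y'^2 + Ψ ε y - y * Ψd ε y / 2)
                (Ψd ε y) (Icc (0:ℝ) y) y := by
              have := ((((hasDerivAt_pow 2 y).const_mul (Ψd ε y / (2*y))).add_const
                (Ψ ε y)).sub_const (y * Ψd ε y / 2)).hasDerivWithinAt (s := Icc (0:ℝ) y)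
              refine this.congr_deriv ?_
              push_cast
              field_simp
            refine hq.congr ?_ ?_
            · intro t ht
              rcases lt_or_eq_of_le ht.2 with htw | htw
              · rw [hΦε ε hε t ht.1 y hw, if_pos htw]
              · rw [htw, hΦε ε hε y hw y hw, if_neg (lt_irrefl y)]
                field_simp
                ring
            · rw [hΦε ε hε y hw y hw, if_neg (lt_irrefl y)]
              field_simp
              ring
          · have hq := (hΨd ε hε y hw).mono (Ici_subset_Ici.2 hw)
            refine hq.congr ?_ ?_
            · intro t ht
              rw [hΦε ε hε t (le_trans hw ht) y hw, if_neg (not_lt.2 ht)]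
            · rw [hΦε ε hε y hw y hw, if_neg (lt_irrefl y)]
      · -- y > w
        have hΦyy : Φy y = Ψd ε y := by simp only [hΦy, if_neg (not_lt.2 hwy.le)]
        rw [hΦyy]
        refine (hΨd ε hε y hy).congr_of_eventuallyEq ?_ ?_
        · filter_upwards [eventually_mem_nhdsWithin,
            (eventually_gt_nhds hwy).filter_mono nhdsWithin_le_nhds] with t ht htw
          rw [hΦε ε hε t ht w hw, if_neg (not_lt.2 htw.le)]
        · rw [hΦε ε hε y hy w hw, if_neg (not_lt.2 hwy.le)]
    have hbound : ∀ y ∈ Ici (0:ℝ), 0 ≤ Φy y ∧ Φy y ≤ ψd 0 := by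
      intro y hy
      rw [mem_Ici] at hy
      simp only [hΦy]
      split_ifs with h
      · have hw0 : (0:ℝ) < w := lt_of_le_of_lt hy h
        have hn : (0:ℝ) ≤ Ψd ε w := hΨd_nonneg ε hε w hw
        constructor
        · exact div_nonneg (mul_nonneg hn hy) hw0.le
        · calc Ψd ε w * y / w ≤ Ψd ε w * w / w := by gcongr
            _ = Ψd ε w := by field_simp
            _ ≤ ψd 0 := hΨd_le ε hε w hw
      · exact ⟨hΨd_nonneg ε hε y hy, hΨd_le ε hε y hy⟩
    have hΦycont : ContinuousOn Φy (Ici (0:ℝ)) := by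
      have hcont : Continuous (fun y : ℝ => if y ≤ w then Ψd ε w * y / w else Ψd ε y) := by
        apply continuous_if_le continuous_id continuous_const
          ((continuous_const.mul continuous_id).div_const w).continuousOn
          ((hΨdcont ε hε).mono (fun v hv => le_trans hw hv))
        intro t ht
        have ht' : t = w := ht
        subst ht'
        rcases eq_or_lt_of_le hw with hw0 | hw0
        · rw [← hw0, hΨd00 ε hε]
          norm_num
        · field_simp
          simp [mul_comm]
      refine hcont.continuousOn.congr ?_
      intro t ht
      simp only [hΦy]
      rcases lt_trichotomy t w with h | h | h
      · rw [if_pos h, if_pos h.le]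
      · subst h
        rw [if_neg (lt_irrefl t), if_pos le_rfl]
        rcases eq_or_lt_of_le hw with hw0 | hw0
        · rw [← hw0, hΨd00 ε hε]
          norm_num
        · field_simp
      · rw [if_neg (not_lt.2 h.le), if_neg (not_le.2 h)]
    refine ⟨?_, ⟨⟨ψd 0, hψd0.le⟩, ?_⟩, Φy, hder, hΦycont, hbound, ?_⟩
    · exact monotoneOn_of_hasDerivWithinAt_nonneg (convex_Ici 0)
        (fun y hy => (hder y hy).continuousWithinAt)
        (fun y hy => (hder y (interior_subset hy)).mono interior_subset)
        (fun y hy => (hbound y (interior_subset hy)).1)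
    · apply (convex_Ici (0:ℝ)).lipschitzOnWith_of_nnnorm_hasDerivWithin_le hder
      intro y hy
      apply NNReal.coe_le_coe.1
      rw [coe_nnnorm, Real.norm_eq_abs, abs_of_nonneg (hbound y hy).1]
      exact (hbound y hy).2
    · simp only [hΦy]
      rcases eq_or_lt_of_le hw with hw0 | hw0
      · rw [if_neg (by rw [← hw0]; exact lt_irrefl 0), hΨd00 ε hε]
      · rw [if_pos hw0]
        simp
end

section
/- The regularized densities Φ_ε converge to Φ uniformly on [0,∞)² as ε → 0⁺, i.e. sup_{(y,z) ∈ [0,∞)²} |Φ_ε(y,z) − Φ(y,z)| → 0 as ε → 0⁺. -/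
set_option autoImplicit false
set_option maxHeartbeats 1000000
open Set Filter Topology

lemma concave_secant_anti {ψ : ℝ → ℝ} (hconc : ConcaveOn ℝ (Ici (0:ℝ)) ψ)
    {a x y : ℝ} (ha : a ∈ Ici (0:ℝ)) (hx : x ∈ Ici (0:ℝ)) (hy : y ∈ Ici (0:ℝ))
    (hxa : x ≠ a) (hya : y ≠ a) (hxy : x ≤ y) :
    (ψ y - ψ a) / (y - a) ≤ (ψ x - ψ a) / (x - a) := by
  have h := hconc.neg.secant_mono ha hx hy hxa hya hxy
  simp only [Pi.neg_apply] at h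
  have h1 : (-ψ x - -ψ a) / (x - a) = -((ψ x - ψ a) / (x - a)) := by ring
  have h2 : (-ψ y - -ψ a) / (y - a) = -((ψ y - ψ a) / (y - a)) := by ring
  rw [h1, h2] at h
  linarith

lemma slope_nebot {z : ℝ} (hz : 0 ≤ z) : (𝓝[Ici (0:ℝ) \ {z}] z).NeBot := by
  refine (nhdsGT_neBot z).mono (nhdsWithin_mono _ ?_)
  intro w hw
  exact ⟨le_trans hz (le_of_lt hw), ne_of_gt hw⟩

lemma deriv_nonneg_of_strictMonoOn {ψ ψd : ℝ → ℝ}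
    (hmono : StrictMonoOn ψ (Ici (0:ℝ)))
    (hd1 : ∀ z ∈ Ici (0:ℝ), HasDerivWithinAt ψ (ψd z) (Ici (0:ℝ)) z) :
    ∀ z ∈ Ici (0:ℝ), 0 ≤ ψd z := by
  intro z hz
  have h := hasDerivWithinAt_iff_tendsto_slope.1 (hd1 z hz)
  haveI := slope_nebot (mem_Ici.mp hz)
  refine ge_of_tendsto h ?_
  filter_upwards [self_mem_nhdsWithin] with w hw
  obtain ⟨hw0, hwz⟩ := hw
  rw [slope_def_field]
  rcases lt_or_gt_of_ne (by simpa using hwz : w ≠ z) with h' | h'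
  · have := hmono hw0 hz h'
    apply div_nonneg_of_nonpos <;> linarith
  · have := hmono hz hw0 h'
    apply div_nonneg <;> linarith

lemma derivAtPoint_le_slope {ψ ψd : ℝ → ℝ} (hconc : ConcaveOn ℝ (Ici (0:ℝ)) ψ)
    (hd1 : ∀ z ∈ Ici (0:ℝ), HasDerivWithinAt ψ (ψd z) (Ici (0:ℝ)) z)
    {z : ℝ} (hz : 0 < z) : ψd z ≤ (ψ z - ψ 0) / z := by
  have h := hasDerivWithinAt_iff_tendsto_slope.1 (hd1 z (le_of_lt hz))
  haveI := slope_nebot (le_of_lt hz)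
  refine le_of_tendsto h ?_
  have hpos : ∀ᶠ w in 𝓝[Ici (0:ℝ) \ {z}] z, 0 < w :=
    nhdsWithin_le_nhds (eventually_gt_nhds hz)
  filter_upwards [self_mem_nhdsWithin, hpos] with w hw hw0
  obtain ⟨hwI, hwz⟩ := hw
  rw [slope_def_field]
  have h2 := concave_secant_anti hconc (le_of_lt hz : (0:ℝ) ≤ z) (le_refl (0:ℝ)) hwI
    (ne_of_lt hz) (by simpa using hwz) (le_of_lt hw0)
  calc (ψ w - ψ z) / (w - z) ≤ (ψ 0 - ψ z) / (0 - z) := h2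
    _ = (ψ z - ψ 0) / z := by rw [div_eq_div_iff] <;> [ring; linarith; linarith]

lemma slope_le_deriv0 {ψ ψd : ℝ → ℝ} (hconc : ConcaveOn ℝ (Ici (0:ℝ)) ψ)
    (hd1 : ∀ z ∈ Ici (0:ℝ), HasDerivWithinAt ψ (ψd z) (Ici (0:ℝ)) z)
    {z : ℝ} (hz : 0 < z) : (ψ z - ψ 0) / z ≤ ψd 0 := by
  have h := hasDerivWithinAt_iff_tendsto_slope.1 (hd1 0 (mem_Ici.mpr (le_refl 0)))
  haveI := slope_nebot (le_refl (0:ℝ))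
  refine ge_of_tendsto h ?_
  have hlt : ∀ᶠ w in 𝓝[Ici (0:ℝ) \ {0}] (0:ℝ), w < z :=
    nhdsWithin_le_nhds (eventually_lt_nhds hz)
  filter_upwards [self_mem_nhdsWithin, hlt] with w hw hwz
  obtain ⟨hwI, hw0⟩ := hw
  rw [slope_def_field]
  have h2 := concave_secant_anti hconc (le_refl (0:ℝ)) hwI (le_of_lt hz : (0:ℝ) ≤ z)
    (by simpa using hw0) (ne_of_gt hz) (le_of_lt hwz)
  calc (ψ w - ψ 0) / (w - 0) = (ψ w - ψ 0) / w := by rw [sub_zero]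
    _ ≥ (ψ z - ψ 0) / z := by
        have := h2
        rw [sub_zero, sub_zero] at this
        exact this
/-- the regularized densities `Φ_ε` converge to `Φ` uniformly on
`[0,∞)²` as `ε → 0⁺`. -/
theorem stmt_16 (ψ ψd ψdd : ℝ → ℝ) (lam : ℝ) (hlam : 0 < lam)
    (hψmap : ∀ z ∈ Ici (0:ℝ), 0 ≤ ψ z)
    (hmono : StrictMonoOn ψ (Ici (0:ℝ)))
    (hbdd : BddAbove (ψ '' Ici (0:ℝ)))
    (hconc : ConcaveOn ℝ (Ici (0:ℝ)) ψ)
    (hd1 : ∀ z ∈ Ici (0:ℝ), HasDerivWithinAt ψ (ψd z) (Ici (0:ℝ)) z)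
    (hd2 : ∀ z ∈ Ici (0:ℝ), HasDerivWithinAt ψd (ψdd z) (Ici (0:ℝ)) z)
    (hd2cont : ContinuousOn ψdd (Ici (0:ℝ)))
    (hψ0 : ψ 0 = 0) (hψd0 : 0 < ψd 0)
    (hlow : ∀ z ∈ Ici (0:ℝ), -lam ≤ ψdd z)
    (Φ : ℝ → ℝ → ℝ)
    (hΦ : ∀ y ∈ Ici (0:ℝ), ∀ z ∈ Ici (0:ℝ),
      Φ y z = if y < z then ψd z / (2*z) * y^2 + ψ z - z * ψd z / 2 else ψ y)
    (zfun : ℝ → ℝ)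
    (hz : ∀ ε > (0:ℝ), 0 < zfun ε ∧ ε * ψd (zfun ε) = zfun ε ∧
      ∀ z : ℝ, 0 ≤ z → ε * ψd z = z → z = zfun ε)
    (Ψ Ψd : ℝ → ℝ → ℝ)
    (hΨ : ∀ ε > (0:ℝ), ∀ z ∈ Ici (0:ℝ),
      Ψ ε z = if z ≤ zfun ε then z^2 / (2*ε)
        else ψ z - ψ (zfun ε) + (zfun ε)^2 / (2*ε))
    (hΨd : ∀ ε > (0:ℝ), ∀ z ∈ Ici (0:ℝ), HasDerivWithinAt (Ψ ε) (Ψd ε z) (Ici (0:ℝ)) z)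
    (Φε : ℝ → ℝ → ℝ → ℝ)
    (hΦε : ∀ ε > (0:ℝ), ∀ y ∈ Ici (0:ℝ), ∀ z ∈ Ici (0:ℝ),
      Φε ε y z = if y < z then Ψd ε z / (2*z) * y^2 + Ψ ε z - z * Ψd ε z / 2
        else Ψ ε y) :
    TendstoUniformlyOn (fun ε p => Φε ε p.1 p.2) (fun p : ℝ × ℝ => Φ p.1 p.2)
      (𝓝[>] 0) (Ici (0:ℝ) ×ˢ Ici (0:ℝ)) := by
  set M := ψd 0 with hMdef
  have hMpos : 0 < M := hψd0
  have hψd_nonneg := deriv_nonneg_of_strictMonoOn hmono hd1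
  have hψd_le : ∀ z ∈ Ici (0:ℝ), ψd z ≤ M := by
    intro z hzm
    rcases eq_or_lt_of_le (mem_Ici.mp hzm) with h | h
    · rw [← h]
    · have h1 := derivAtPoint_le_slope hconc hd1 h
      have h2 := slope_le_deriv0 hconc hd1 h
      linarith
  have hψ_le : ∀ z ∈ Ici (0:ℝ), ψ z ≤ M * z := by
    intro z hzm
    rcases eq_or_lt_of_le (mem_Ici.mp hzm) with h | h
    · rw [← h]; simp [hψ0]
    · have h2 := slope_le_deriv0 hconc hd1 h
      rw [hψ0, sub_zero, div_le_iff₀ h] at h2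
      linarith [h2]
  -- main uniform estimate
  have hmain : ∀ ε ∈ Ioi (0:ℝ), ∀ y ∈ Ici (0:ℝ), ∀ z ∈ Ici (0:ℝ),
      |Φε ε y z - Φ y z| ≤ 2 * M * M * ε := by
    intro ε hεm y hym z hzm
    have hεpos : (0:ℝ) < ε := hεm
    obtain ⟨ht0, htfix, -⟩ := hz ε hεpos
    set t := zfun ε with htdef
    have htm : t ∈ Ici (0:ℝ) := le_of_lt ht0
    have hψdt : ψd t = t / ε := by
      field_simp
      linarith [htfix]
    have htle : t ≤ ε * M := by
      have h1 := hψd_le t htm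
      nlinarith [htfix]
    have hΨlo : ∀ w ∈ Ici (0:ℝ), w ≤ t → Ψ ε w = w^2/(2*ε) := by
      intro w hwm hle
      rw [hΨ ε hεpos w hwm, if_pos hle]
    have hΨhi : ∀ w ∈ Ici (0:ℝ), t < w → Ψ ε w = ψ w - ψ t + t^2/(2*ε) := by
      intro w hwm hlt
      rw [hΨ ε hεpos w hwm, if_neg (not_le.mpr hlt)]
    have ht2 : t^2/(2*ε) = ψd t * t / 2 := by
      rw [hψdt]; field_simp
    have hψdt_le : ψd t ≤ M := hψd_le t htm
    have hψdt_nn : 0 ≤ ψd t := hψd_nonneg t htm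
    -- sup-norm estimate on Ψ ε - ψ
    have hδ : ∀ w ∈ Ici (0:ℝ), |Ψ ε w - ψ w| ≤ M * t := by
      intro w hwm
      have hw0 : (0:ℝ) ≤ w := hwm
      rcases le_or_gt w t with hle | hlt
      · rw [hΨlo w hwm hle]
        have h1 : 0 ≤ ψ w := hψmap w hwm
        have h2 : ψ w ≤ M * w := hψ_le w hwm
        have h3 : w^2/(2*ε) ≤ t^2/(2*ε) := by
          gcongr
          all_goals nlinarith
        have h0 : 0 ≤ w^2/(2*ε) := by positivity
        rw [abs_le]
        constructor <;> nlinarith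
      · rw [hΨhi w hwm hlt]
        have h1 : 0 ≤ ψ t := hψmap t htm
        have h2 : ψ t ≤ M * t := hψ_le t htm
        have key : ψ w - ψ t + t^2/(2*ε) - ψ w = t^2/(2*ε) - ψ t := by ring
        rw [key, abs_le]
        constructor <;> nlinarith
    -- identification of Ψd
    have huniq : ∀ w ∈ Ici (0:ℝ), ∀ d : ℝ,
        HasDerivWithinAt (Ψ ε) d (Ici (0:ℝ)) w → Ψd ε w = d := by
      intro w hwm d hd
      have h1 := (hΨd ε hεpos w hwm).derivWithin (uniqueDiffOn_Ici 0 w hwm)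
      have h2 := hd.derivWithin (uniqueDiffOn_Ici 0 w hwm)
      rw [← h1, ← h2]
    have hqd : ∀ w : ℝ, HasDerivAt (fun u : ℝ => u^2/(2*ε)) (w/ε) w := by
      intro w
      have h := (hasDerivAt_pow 2 w).div_const (2*ε)
      refine h.congr_deriv ?_
      field_simp
      ring
    have hΨd_lo : ∀ w ∈ Ici (0:ℝ), w < t → Ψd ε w = w/ε := by
      intro w hwm hwt
      apply huniq w hwm
      refine ((hqd w).hasDerivWithinAt).congr_of_eventuallyEq ?_ ?_
      · filter_upwards [self_mem_nhdsWithin,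
          nhdsWithin_le_nhds (eventually_lt_nhds hwt)] with u hu hut
        exact hΨlo u hu (le_of_lt hut)
      · exact hΨlo w hwm (le_of_lt hwt)
    have hg : HasDerivWithinAt (fun u => ψ u - ψ t + t^2/(2*ε)) (ψd t) (Ici (0:ℝ)) t :=
      ((hd1 t htm).sub_const _).add_const _
    have hΨd_hi : ∀ w ∈ Ici (0:ℝ), t ≤ w → Ψd ε w = ψd w := by
      intro w hwm htw
      rcases eq_or_lt_of_le htw with heq | hlt
      · obtain rfl : w = t := heq.symm
        apply huniq t hwm
        have h1 : HasDerivWithinAt (Ψ ε) (ψd t) (Iic t ∩ Ici 0) t := by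
          have hq : HasDerivWithinAt (fun u : ℝ => u^2/(2*ε)) (ψd t) (Iic t ∩ Ici 0) t := by
            rw [hψdt]
            exact (hqd t).hasDerivWithinAt.mono inter_subset_right
          refine hq.congr ?_ ?_
          · intro u hu
            exact hΨlo u hu.2 hu.1
          · exact hΨlo t htm le_rfl
        have h2 : HasDerivWithinAt (Ψ ε) (ψd t) (Ici t ∩ Ici 0) t := by
          refine (hg.mono inter_subset_right).congr ?_ ?_
          · intro u hu
            rcases eq_or_lt_of_le (mem_Ici.mp hu.1 : t ≤ u) with h | h
            · rw [← h, hΨlo t htm le_rfl]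
              ring
            · exact hΨhi u hu.2 h
          · rw [hΨlo t htm le_rfl]
            ring
        have h3 := h1.union h2
        have hset : (Iic t ∩ Ici 0) ∪ (Ici t ∩ Ici (0:ℝ)) = Ici (0:ℝ) := by
          rw [← union_inter_distrib_right, Iic_union_Ici, univ_inter]
        rwa [hset] at h3
      · apply huniq w hwm
        have hgw : HasDerivWithinAt (fun u => ψ u - ψ t + t^2/(2*ε)) (ψd w) (Ici (0:ℝ)) w :=
          ((hd1 w hwm).sub_const _).add_const _
        refine hgw.congr_of_eventuallyEq ?_ ?_
        · filter_upwards [self_mem_nhdsWithin,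
            nhdsWithin_le_nhds (eventually_gt_nhds hlt)] with u hu hut
          exact hΨhi u hu hut
        · exact hΨhi w hwm hlt
    -- the pointwise estimate
    rw [hΦε ε hεpos y hym z hzm, hΦ y hym z hzm]
    have hδz := hδ z hzm
    have hMtle : M * t ≤ 2 * M * M * ε := by nlinarith
    by_cases hyz : y < z
    · rw [if_pos hyz, if_pos hyz]
      have hy0 : (0:ℝ) ≤ y := hym
      have hz0 : (0:ℝ) < z := lt_of_le_of_lt hy0 hyz
      rcases lt_or_ge z t with hzt | htz
      · rw [hΨd_lo z hzm hzt]
        have key : z/ε/(2*z)*y^2 + Ψ ε z - z*(z/ε)/2 - (ψd z/(2*z)*y^2 + ψ z - z*ψd z/2)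
            = (z/ε - ψd z) * ((y^2 - z^2)/(2*z)) + (Ψ ε z - ψ z) := by
          field_simp
          ring
        rw [key]
        have hA : |z/ε - ψd z| ≤ M := by
          have h1 : 0 ≤ z/ε := by positivity
          have h2 : z/ε ≤ M := by
            have : z/ε ≤ t/ε := by
              gcongr
              all_goals exact le_of_lt hzt
            rw [← hψdt] at this
            linarith
          have h3 : 0 ≤ ψd z := hψd_nonneg z hzm
          have h4 : ψd z ≤ M := hψd_le z hzm
          rw [abs_le]; constructor <;> linarith
        have hB : |(y^2 - z^2)/(2*z)| ≤ t/2 := by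
          have h1 : y^2 ≤ z^2 := by nlinarith
          rw [abs_le]
          constructor
          · rw [le_div_iff₀ (by linarith : (0:ℝ) < 2*z)]
            nlinarith
          · rw [div_le_iff₀ (by linarith : (0:ℝ) < 2*z)]
            nlinarith
        calc |(z/ε - ψd z) * ((y^2 - z^2)/(2*z)) + (Ψ ε z - ψ z)|
            ≤ |(z/ε - ψd z) * ((y^2 - z^2)/(2*z))| + |Ψ ε z - ψ z| := abs_add_le _ _
          _ ≤ M * (t/2) + M * t := by
              rw [abs_mul]
              gcongr <;> first | exact abs_nonneg _ | assumption
          _ ≤ 2 * M * M * ε := by nlinarith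
      · rw [hΨd_hi z hzm htz]
        have key : ψd z/(2*z)*y^2 + Ψ ε z - z*ψd z/2 - (ψd z/(2*z)*y^2 + ψ z - z*ψd z/2)
            = Ψ ε z - ψ z := by ring
        rw [key]
        linarith
    · rw [if_neg hyz, if_neg hyz]
      have := hδ y hym
      linarith
  -- conclusion
  rw [Metric.tendstoUniformlyOn_iff]
  intro η hη
  have hmem : Ioo (0:ℝ) (η / (2*M*M+1)) ∈ 𝓝[>] (0:ℝ) :=
    Ioo_mem_nhdsGT_of_mem ⟨le_refl 0, by positivity⟩
  filter_upwards [hmem] with ε hε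
  rintro ⟨y, z⟩ ⟨hym, hzm⟩
  have hb := hmain ε hε.1 y hym z hzm
  rw [Real.dist_eq, abs_sub_comm]
  have h1 : ε < η / (2*M*M+1) := hε.2
  have h2 : (0:ℝ) < 2*M*M+1 := by positivity
  rw [lt_div_iff₀ h2] at h1
  calc |Φε ε y z - Φ y z| ≤ 2*M*M*ε := hb
    _ < η := by nlinarith [hε.1]
end

section
/- (Helly-type selection theorem.) Let Ω ⊆ ℝⁿ be open, T > 0, and let {f_n}_{n∈ℕ} be a sequence of nondecreasing functions from [0,T] to C⁰(Ω) such that: (a) the families {f_n(0)}_{n∈ℕ} and {f_n(T)}_{n∈ℕ} are locally equibounded; (b) the family {f_n(t)}_{n∈ℕ, t∈[0,T]} is locally equicontinuous, uniformly with respect to t ∈ [0,T]. Then there exist a subsequence (not relabelled) and a nondecreasing function f : [0,T] → C⁰(Ω) such that for every t ∈ [0,T] the functions f_n(t) converge to f(t) locally uniformly on Ω as n → +∞. Moreover, for every t ∈ [0,T] the one-sided limits f⁺(t) and f⁻(t), which are pointwise well defined by monotonicity, belong to C⁰(Ω), and f(t+h) converges to f^±(t) locally uniformly in Ω as h → 0^±.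 -/
set_option autoImplicit false

open Set Filter Topology

open Metric

set_option maxHeartbeats 2000000

lemma diagonal_extract {C : Type} [Countable C] (a : ℕ → C → ℝ)
    (hb : ∀ c, ∃ B : ℝ, ∀ m, |a m c| ≤ B) :
    ∃ ψ : ℕ → ℕ, StrictMono ψ ∧ ∀ c, ∃ L, Tendsto (fun m => a (ψ m) c) atTop (𝓝 L) := by
  choose B hB using hb
  have hcpt : IsCompact (Set.pi univ fun c : C => Icc (-(B c)) (B c)) :=
    isCompact_univ_pi fun c => isCompact_Icc
  have hmem : ∀ m, a m ∈ Set.pi univ fun c => Icc (-(B c)) (B c) := by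
    intro m c _
    exact abs_le.1 (hB c m)
  obtain ⟨L, -, ψ, hψ, hL⟩ := hcpt.isSeqCompact hmem
  exact ⟨ψ, hψ, fun c => ⟨L c, ((continuous_apply c).tendsto L).comp hL⟩⟩

lemma exists_countable_dense_in {n : ℕ} (Ω : Set (EuclideanSpace ℝ (Fin n))) :
    ∃ E ⊆ Ω, E.Countable ∧ ∀ x ∈ Ω, ∀ ε > (0:ℝ), ∃ e ∈ E, dist x e < ε := by
  obtain ⟨s, hsc, hsd⟩ := TopologicalSpace.exists_countable_dense ↥Ω
  refine ⟨Subtype.val '' s, by rintro _ ⟨y, -, rfl⟩; exact y.2, hsc.image _, ?_⟩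
  intro x hx ε hε
  obtain ⟨y, hy, hys⟩ := Metric.dense_iff.1 hsd ⟨x, hx⟩ ε hε
  exact ⟨y.1, ⟨y, hys, rfl⟩, by simpa [Subtype.dist_eq] using mem_ball'.1 hy⟩

/-- Helly-type selection theorem: a sequence of nondecreasing maps
`[0,T] → C⁰(Ω)` which is locally equibounded at `t = 0, T` and locally equicontinuous
uniformly in `t` admits a subsequence converging locally uniformly at every time to a
nondecreasing limit `g`; moreover the one-sided limits `g⁺(t)`, `g⁻(t)` are continuous
on `Ω` and `g(t+h) → g^±(t)` locally uniformly as `h → 0^±`. -/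
theorem stmt_17 (n : ℕ) (Ω : Set (EuclideanSpace ℝ (Fin n))) (hΩ : IsOpen Ω)
    (T : ℝ) (hT : 0 < T) (f : ℕ → ℝ → EuclideanSpace ℝ (Fin n) → ℝ)
    (hcont : ∀ m : ℕ, ∀ t ∈ Icc 0 T, ContinuousOn (f m t) Ω)
    (hmono : ∀ m : ℕ, ∀ s t : ℝ, 0 ≤ s → s ≤ t → t ≤ T → ∀ x ∈ Ω, f m s x ≤ f m t x)
    (hbound : ∀ K : Set (EuclideanSpace ℝ (Fin n)), K ⊆ Ω → IsCompact K →
      ∃ C : ℝ, ∀ m : ℕ, ∀ x ∈ K, |f m 0 x| ≤ C ∧ |f m T x| ≤ C)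
    (hequi : ∀ K : Set (EuclideanSpace ℝ (Fin n)), K ⊆ Ω → IsCompact K →
      ∀ η > (0:ℝ), ∃ δ > (0:ℝ), ∀ m : ℕ, ∀ t ∈ Icc 0 T, ∀ x ∈ K, ∀ y ∈ K,
        dist x y ≤ δ → |f m t x - f m t y| ≤ η) :
    ∃ φ : ℕ → ℕ, StrictMono φ ∧
    ∃ g : ℝ → EuclideanSpace ℝ (Fin n) → ℝ,
      (∀ t ∈ Icc 0 T, ContinuousOn (g t) Ω) ∧
      (∀ s t : ℝ, 0 ≤ s → s ≤ t → t ≤ T → ∀ x ∈ Ω, g s x ≤ g t x) ∧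
      (∀ t ∈ Icc 0 T, ∀ K : Set (EuclideanSpace ℝ (Fin n)), K ⊆ Ω → IsCompact K →
        TendstoUniformlyOn (fun m => f (φ m) t) (g t) atTop K) ∧
      ∃ gp gm : ℝ → EuclideanSpace ℝ (Fin n) → ℝ,
        (∀ t ∈ Icc 0 T, ContinuousOn (gp t) Ω ∧ ContinuousOn (gm t) Ω) ∧
        (∀ t ∈ Ico 0 T, ∀ K : Set (EuclideanSpace ℝ (Fin n)), K ⊆ Ω → IsCompact K →
          TendstoUniformlyOn (fun s => g s) (gp t) (𝓝[>] t) K) ∧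
        (∀ t ∈ Ioc 0 T, ∀ K : Set (EuclideanSpace ℝ (Fin n)), K ⊆ Ω → IsCompact K →
          TendstoUniformlyOn (fun s => g s) (gm t) (𝓝[<] t) K) := by
  classical
  obtain ⟨E, hEΩ, hEc, hEd⟩ := exists_countable_dense_in Ω
  -- uniform bound over all t ∈ [0,T]
  have hbd : ∀ K : Set (EuclideanSpace ℝ (Fin n)), K ⊆ Ω → IsCompact K →
      ∃ C : ℝ, ∀ m : ℕ, ∀ t ∈ Icc 0 T, ∀ x ∈ K, |f m t x| ≤ C := by
    intro K hKΩ hK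
    obtain ⟨C, hC⟩ := hbound K hKΩ hK
    refine ⟨C, fun m t ht x hx => ?_⟩
    have h1 := abs_le.1 (hC m x hx).1
    have h2 := abs_le.1 (hC m x hx).2
    have l1 : f m 0 x ≤ f m t x := hmono m 0 t le_rfl ht.1 ht.2 x (hKΩ hx)
    have l2 : f m t x ≤ f m T x := hmono m t T ht.1 ht.2 le_rfl x (hKΩ hx)
    exact abs_le.2 ⟨by linarith, by linarith⟩
  -- the countable dense set of times
  set D0 : Set ℝ := insert 0 (insert T (Icc 0 T ∩ Set.range ((↑) : ℚ → ℝ))) with hD0def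
  have hD0c : D0.Countable :=
    ((Set.countable_range _).mono inter_subset_right).insert T |>.insert 0
  have h0D : (0:ℝ) ∈ D0 := mem_insert _ _
  have hTD : T ∈ D0 := mem_insert_of_mem _ (mem_insert _ _)
  have hD0sub : D0 ⊆ Icc 0 T := by
    intro s hs
    rcases hs with rfl | hs
    · exact ⟨le_rfl, hT.le⟩
    rcases hs with rfl | hs
    · exact ⟨hT.le, le_rfl⟩
    exact hs.1
  have hD0r : ∀ t ∈ Ico 0 T, ∀ δ > (0:ℝ), ∃ s ∈ D0, t < s ∧ s - t < δ ∧ s ≤ T := by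
    intro t ht δ hδ
    obtain ⟨q, hq1, hq2⟩ := exists_rat_btwn (show t < min (t + δ) T from lt_min (by linarith) ht.2)
    have hq2' := lt_min_iff.1 hq2
    refine ⟨(q:ℝ), mem_insert_of_mem _ (mem_insert_of_mem _
      ⟨⟨le_trans ht.1 hq1.le, hq2'.2.le⟩, ⟨q, rfl⟩⟩), hq1, by linarith [hq2'.1], hq2'.2.le⟩
  have hD0l : ∀ t ∈ Ioc 0 T, ∀ δ > (0:ℝ), ∃ s ∈ D0, s < t ∧ t - s < δ ∧ 0 ≤ s := by
    intro t ht δ hδ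
    obtain ⟨q, hq1, hq2⟩ := exists_rat_btwn (show max (t - δ) 0 < t from max_lt (by linarith) ht.1)
    have hq1' := max_lt_iff.1 hq1
    refine ⟨(q:ℝ), mem_insert_of_mem _ (mem_insert_of_mem _
      ⟨⟨hq1'.2.le, hq2.le.trans ht.2⟩, ⟨q, rfl⟩⟩), hq2, by linarith [hq1'.1], hq1'.2.le⟩
  -- singleton bound for diagonal extraction
  have hsing : ∀ t ∈ Icc 0 T, ∀ x ∈ E, ∃ B : ℝ, ∀ m, |f m t x| ≤ B := by
    intro t ht x hx
    obtain ⟨C, hC⟩ := hbd {x} (singleton_subset_iff.2 (hEΩ hx)) isCompact_singleton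
    exact ⟨C, fun m => hC m t ht x rfl⟩
  -- first extraction
  haveI := hD0c.to_subtype
  haveI := hEc.to_subtype
  obtain ⟨φ₁, hφ₁, hc₁⟩ := diagonal_extract (C := ↥D0 × ↥E)
    (fun m c => f m c.1.1 c.2.1)
    (fun c => hsing c.1.1 (hD0sub c.1.2) c.2.1 c.2.2)
  have hc₁' : ∀ s ∈ D0, ∀ x ∈ E, ∃ L, Tendsto (fun m => f (φ₁ m) s x) atTop (𝓝 L) :=
    fun s hs x hx => hc₁ ⟨⟨s, hs⟩, ⟨x, hx⟩⟩
  choose! h hh using hc₁'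
  -- monotonicity of h on D0
  have hhmono : ∀ s ∈ D0, ∀ s' ∈ D0, s ≤ s' → ∀ x ∈ E, h s x ≤ h s' x := by
    intro s hs s' hs' hss' x hx
    refine le_of_tendsto_of_tendsto (hh s hs x hx) (hh s' hs' x hx)
      (Eventually.of_forall fun m => ?_)
    exact hmono _ s s' (hD0sub hs).1 hss' (hD0sub hs').2 x (hEΩ hx)
  -- the monotone envelope
  set H : EuclideanSpace ℝ (Fin n) → ℝ → ℝ :=
    fun x t => sSup ((fun s => h s x) '' (D0 ∩ Iic (max t 0))) with hHdef
  have hHbdd : ∀ x ∈ E, ∀ t : ℝ, BddAbove ((fun s => h s x) '' (D0 ∩ Iic (max t 0))) := by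
    intro x hx t
    refine ⟨h T x, ?_⟩
    rintro _ ⟨s, ⟨hsD, -⟩, rfl⟩
    exact hhmono s hsD T hTD (hD0sub hsD).2 x hx
  have hHne : ∀ x, ∀ t : ℝ, ((fun s => h s x) '' (D0 ∩ Iic (max t 0))).Nonempty :=
    fun x t => ⟨h 0 x, 0, ⟨h0D, mem_Iic.2 (le_max_right _ _)⟩, rfl⟩
  have hHmono : ∀ x ∈ E, Monotone (H x) := by
    intro x hx a b hab
    refine csSup_le_csSup (hHbdd x hx b) (hHne x a) ?_
    exact image_mono (inter_subset_inter_right _ (Iic_subset_Iic.2 (max_le_max hab le_rfl)))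
  have hHD0 : ∀ s ∈ D0, ∀ x ∈ E, H x s = h s x := by
    intro s hs x hx
    apply le_antisymm
    · refine csSup_le (hHne x s) ?_
      rintro _ ⟨s', ⟨hs'D, hs'le⟩, rfl⟩
      have hs' : s' ≤ s := by
        have := mem_Iic.1 hs'le
        rwa [max_eq_left (hD0sub hs).1] at this
      exact hhmono s' hs'D s hs hs' x hx
    · exact le_csSup (hHbdd x hx s) ⟨s, ⟨hs, mem_Iic.2 (le_max_left _ _)⟩, rfl⟩
  -- countable set of bad times
  set N : Set ℝ := Icc 0 T ∩ ⋃ x ∈ E, {t | ¬ContinuousAt (H x) t} with hNdef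
  have hNc : N.Countable := by
    refine Set.Countable.mono inter_subset_right ?_
    exact Set.Countable.biUnion hEc fun x hx => (hHmono x hx).countable_not_continuousAt
  have hNsub : N ⊆ Icc 0 T := inter_subset_left
  -- second extraction
  haveI := hNc.to_subtype
  obtain ⟨φ₂, hφ₂, hc₂⟩ := diagonal_extract (C := ↥N × ↥E)
    (fun m c => f (φ₁ m) c.1.1 c.2.1)
    (fun c => by
      obtain ⟨B, hB⟩ := hsing c.1.1 (hNsub c.1.2) c.2.1 c.2.2
      exact ⟨B, fun m => hB (φ₁ m)⟩)
  set φ : ℕ → ℕ := φ₁ ∘ φ₂ with hφdef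
  have hφm : StrictMono φ := hφ₁.comp hφ₂
  -- pointwise convergence on E at all times
  have key : ∀ t ∈ Icc 0 T, ∀ x ∈ E, ∃ L, Tendsto (fun m => f (φ m) t x) atTop (𝓝 L) := by
    intro t ht x hx
    by_cases hD : t ∈ D0
    · exact ⟨h t x, (hh t hD x hx).comp hφ₂.tendsto_atTop⟩
    by_cases hN' : t ∈ N
    · exact hc₂ ⟨⟨t, hN'⟩, ⟨x, hx⟩⟩
    have hcont' : ContinuousAt (H x) t := by
      by_contra hcontra
      exact hN' ⟨ht, mem_biUnion hx hcontra⟩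
    have ht0 : 0 < t := lt_of_le_of_ne ht.1 (fun e => hD (e ▸ h0D))
    have htT : t < T := lt_of_le_of_ne ht.2 (fun e => hD (e.symm ▸ hTD))
    refine ⟨H x t, Metric.tendsto_nhds.2 fun ε hε => ?_⟩
    obtain ⟨δ, hδ, hδc⟩ := Metric.continuousAt_iff.1 hcont' (ε/4) (by linarith)
    obtain ⟨s1, hs1D, hs1lt, hs1d, hs10⟩ := hD0l t ⟨ht0, ht.2⟩ δ hδ
    obtain ⟨s2, hs2D, hs2gt, hs2d, hs2T⟩ := hD0r t ⟨ht.1, htT⟩ δ hδ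
    have T1 : Tendsto (fun m => f (φ m) s1 x) atTop (𝓝 (h s1 x)) :=
      (hh s1 hs1D x hx).comp hφ₂.tendsto_atTop
    have T2 : Tendsto (fun m => f (φ m) s2 x) atTop (𝓝 (h s2 x)) :=
      (hh s2 hs2D x hx).comp hφ₂.tendsto_atTop
    have e1 := Metric.tendsto_nhds.1 T1 (ε/4) (by linarith)
    have e2 := Metric.tendsto_nhds.1 T2 (ε/4) (by linarith)
    have B1 : |h s1 x - H x t| < ε/4 := by
      have := hδc (show dist s1 t < δ by rw [Real.dist_eq, abs_of_neg (by linarith)]; linarith)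
      rwa [Real.dist_eq, hHD0 s1 hs1D x hx] at this
    have B2 : |h s2 x - H x t| < ε/4 := by
      have := hδc (show dist s2 t < δ by rw [Real.dist_eq, abs_of_pos (by linarith)]; linarith)
      rwa [Real.dist_eq, hHD0 s2 hs2D x hx] at this
    filter_upwards [e1, e2] with m d1 d2
    rw [Real.dist_eq] at d1 d2 ⊢
    have m1 : f (φ m) s1 x ≤ f (φ m) t x := hmono _ s1 t hs10 hs1lt.le ht.2 x (hEΩ hx)
    have m2 : f (φ m) t x ≤ f (φ m) s2 x := hmono _ t s2 ht.1 hs2gt.le hs2T x (hEΩ hx)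
    have d1' := abs_lt.1 d1
    have d2' := abs_lt.1 d2
    have B1' := abs_lt.1 B1
    have B2' := abs_lt.1 B2
    exact abs_lt.2 ⟨by linarith, by linarith⟩
  -- uniform Cauchy on compacts
  have hUC : ∀ t ∈ Icc 0 T, ∀ K : Set (EuclideanSpace ℝ (Fin n)), K ⊆ Ω → IsCompact K →
      UniformCauchySeqOn (fun m => f (φ m) t) atTop K := by
    intro t ht K hKΩ hK
    rw [Metric.uniformCauchySeqOn_iff]
    intro ε hε
    obtain ⟨r, hr, hrK⟩ := hK.exists_cthickening_subset_open hΩ hKΩ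
    have hK' : IsCompact (cthickening r K) := hK.cthickening
    obtain ⟨δ, hδ, hδe⟩ := hequi _ hrK hK' (ε/4) (by linarith)
    set ρ : ℝ := min δ r / 2 with hρdef
    have hρ : 0 < ρ := by positivity
    have hcov : K ⊆ ⋃ y : K, Metric.ball (y : EuclideanSpace ℝ (Fin n)) ρ :=
      fun y hy => mem_iUnion.2 ⟨⟨y, hy⟩, Metric.mem_ball_self hρ⟩
    obtain ⟨tfin, htfin⟩ := hK.elim_finite_subcover
      (fun y : K => Metric.ball (y : EuclideanSpace ℝ (Fin n)) ρ)
      (fun y => Metric.isOpen_ball) hcov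
    have hnet : ∀ i : K, ∃ e ∈ E, dist (i : EuclideanSpace ℝ (Fin n)) e < ρ :=
      fun i => hEd i (hKΩ i.2) ρ hρ
    choose e he hede using hnet
    have hcau : ∀ i : K, ∃ M : ℕ, ∀ m ≥ M, ∀ m' ≥ M,
        |f (φ m) t (e i) - f (φ m') t (e i)| < ε/4 := by
      intro i
      obtain ⟨L, hL⟩ := key t ht (e i) (he i)
      obtain ⟨M, hM⟩ := Metric.cauchySeq_iff.1 hL.cauchySeq (ε/4) (by linarith)
      exact ⟨M, fun m hm m' hm' => by have := hM m hm m' hm'; rwa [Real.dist_eq] at this⟩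
    choose M hM using hcau
    refine ⟨tfin.sup M, fun m hm m' hm' y hy => ?_⟩
    obtain ⟨i, hi, hyi⟩ : ∃ i ∈ tfin, y ∈ Metric.ball (i : EuclideanSpace ℝ (Fin n)) ρ := by
      simpa using htfin hy
    have hyK' : y ∈ cthickening r K := self_subset_cthickening _ hy
    have heiK' : e i ∈ cthickening r K := by
      refine mem_cthickening_of_dist_le (e i) i r K i.2 ?_
      have h1 : dist (e i) (i : EuclideanSpace ℝ (Fin n)) < ρ := by
        rw [dist_comm]; exact hede i
      have h2 : ρ ≤ r := by
        rw [hρdef]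
        have := min_le_right δ r
        linarith
      linarith
    have hdyei : dist y (e i) ≤ δ := by
      have h1 : dist y (i : EuclideanSpace ℝ (Fin n)) < ρ := mem_ball.1 hyi
      have h2 : dist (i : EuclideanSpace ℝ (Fin n)) (e i) < ρ := hede i
      have h3 := dist_triangle y (i : EuclideanSpace ℝ (Fin n)) (e i)
      have h4 : 2 * ρ ≤ δ := by
        rw [hρdef]
        have := min_le_left δ r
        linarith
      linarith
    have d1 := hδe (φ m) t ht y hyK' (e i) heiK' hdyei
    have d2 := hδe (φ m') t ht y hyK' (e i) heiK' hdyei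
    have d3 := hM i m (le_trans (Finset.le_sup hi) hm) m' (le_trans (Finset.le_sup hi) hm')
    rw [Real.dist_eq]
    have a1 := abs_le.1 d1
    have a2 := abs_le.1 d2
    have a3 := abs_lt.1 d3
    exact abs_lt.2 ⟨by linarith, by linarith⟩
  -- pointwise limits everywhere on Ω
  have glim : ∀ t x, t ∈ Icc 0 T → x ∈ Ω → ∃ L, Tendsto (fun m => f (φ m) t x) atTop (𝓝 L) := by
    intro t x ht hx
    have hc := hUC t ht {x} (singleton_subset_iff.2 hx) isCompact_singleton
    rw [Metric.uniformCauchySeqOn_iff] at hc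
    have hcs : CauchySeq (fun m => f (φ m) t x) := by
      rw [Metric.cauchySeq_iff]
      intro ε hε
      obtain ⟨Mm, hMm⟩ := hc ε hε
      exact ⟨Mm, fun m hm m' hm' => hMm m hm m' hm' x rfl⟩
    exact cauchySeq_tendsto_of_complete hcs
  choose! g hg using glim
  -- uniform convergence on compacts
  have hUconv : ∀ t ∈ Icc 0 T, ∀ K : Set (EuclideanSpace ℝ (Fin n)), K ⊆ Ω → IsCompact K →
      TendstoUniformlyOn (fun m => f (φ m) t) (g t) atTop K :=
    fun t ht K hKΩ hK => (hUC t ht K hKΩ hK).tendstoUniformlyOn_of_tendsto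
      (fun x hx => hg t x ht (hKΩ hx))
  -- monotonicity of the limit
  have hgmono : ∀ s t' : ℝ, 0 ≤ s → s ≤ t' → t' ≤ T → ∀ x ∈ Ω, g s x ≤ g t' x := by
    intro s t' hs hst htT' x hx
    exact le_of_tendsto_of_tendsto (hg s x ⟨hs, hst.trans htT'⟩ hx)
      (hg t' x ⟨hs.trans hst, htT'⟩ hx)
      (Eventually.of_forall fun m => hmono _ s t' hs hst htT' x hx)
  -- equicontinuity of the limit
  have hgequi : ∀ K : Set (EuclideanSpace ℝ (Fin n)), K ⊆ Ω → IsCompact K →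
      ∀ η > (0:ℝ), ∃ δ > (0:ℝ), ∀ t ∈ Icc 0 T, ∀ x ∈ K, ∀ y ∈ K,
        dist x y ≤ δ → |g t x - g t y| ≤ η := by
    intro K hKΩ hK η hη
    obtain ⟨δ, hδ, hδe⟩ := hequi K hKΩ hK η hη
    refine ⟨δ, hδ, fun t ht x hx y hy hxy => ?_⟩
    have Tx := hg t x ht (hKΩ hx)
    have Ty := hg t y ht (hKΩ hy)
    exact le_of_tendsto (Tx.sub Ty).abs
      (Eventually.of_forall fun m => hδe (φ m) t ht x hx y hy hxy)
  -- continuity from one-sided equicontinuity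
  have contOfEqui : ∀ u : EuclideanSpace ℝ (Fin n) → ℝ,
      (∀ K : Set (EuclideanSpace ℝ (Fin n)), K ⊆ Ω → IsCompact K → ∀ η > (0:ℝ),
        ∃ δ > (0:ℝ), ∀ x ∈ K, ∀ y ∈ K, dist x y ≤ δ → u x ≤ u y + η) →
      ContinuousOn u Ω := by
    intro u hu x hx
    rw [Metric.continuousWithinAt_iff]
    intro ε hε
    obtain ⟨r, hr, hrx⟩ := isCompact_singleton.exists_cthickening_subset_open hΩ
      (singleton_subset_iff.2 hx)
    obtain ⟨δ, hδ, hδ'⟩ := hu _ hrx isCompact_singleton.cthickening (ε/2) (by linarith)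
    refine ⟨min δ r, lt_min hδ hr, fun y hy hyx => ?_⟩
    have hyK : y ∈ cthickening r {x} :=
      mem_cthickening_of_dist_le y x r {x} (mem_singleton x) (hyx.le.trans (min_le_right _ _))
    have hxK : x ∈ cthickening r {x} := self_subset_cthickening _ (mem_singleton x)
    have h1 := hδ' y hyK x hxK (hyx.le.trans (min_le_left _ _))
    have h2 := hδ' x hxK y hyK (by rw [dist_comm]; exact hyx.le.trans (min_le_left _ _))
    rw [Real.dist_eq]
    exact abs_lt.2 ⟨by linarith, by linarith⟩
  -- continuity of g t
  have hgcont : ∀ t ∈ Icc 0 T, ContinuousOn (g t) Ω := by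
    intro t ht
    refine contOfEqui _ fun K hKΩ hK η hη => ?_
    obtain ⟨δ, hδ, hδ'⟩ := hgequi K hKΩ hK η hη
    exact ⟨δ, hδ, fun x hx y hy hxy => by linarith [(abs_le.1 (hδ' t ht x hx y hy hxy)).2]⟩
  -- one-sided limit candidates
  set gp : ℝ → EuclideanSpace ℝ (Fin n) → ℝ :=
    fun t x => sInf ((fun s => g s x) '' Ioc t T) with hgpdef
  set gm : ℝ → EuclideanSpace ℝ (Fin n) → ℝ :=
    fun t x => sSup ((fun s => g s x) '' Ico 0 t) with hgmdef
  have hIocne : ∀ t ∈ Ico 0 T, ∀ x : EuclideanSpace ℝ (Fin n),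
      ((fun s => g s x) '' Ioc t T).Nonempty :=
    fun t ht x => ⟨g T x, T, ⟨ht.2, le_rfl⟩, rfl⟩
  have hIocbdd : ∀ t ∈ Ico 0 T, ∀ x ∈ Ω, BddBelow ((fun s => g s x) '' Ioc t T) := by
    intro t ht x hx
    refine ⟨g t x, ?_⟩
    rintro _ ⟨s, hs, rfl⟩
    exact hgmono t s ht.1 hs.1.le hs.2 x hx
  have hIcone : ∀ t ∈ Ioc 0 T, ∀ x : EuclideanSpace ℝ (Fin n),
      ((fun s => g s x) '' Ico 0 t).Nonempty :=
    fun t ht x => ⟨g 0 x, 0, ⟨le_rfl, ht.1⟩, rfl⟩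
  have hIcobdd : ∀ t ∈ Ioc 0 T, ∀ x ∈ Ω, BddAbove ((fun s => g s x) '' Ico 0 t) := by
    intro t ht x hx
    refine ⟨g t x, ?_⟩
    rintro _ ⟨s, hs, rfl⟩
    exact hgmono s t hs.1 hs.2.le ht.2 x hx
  have gp_le : ∀ t ∈ Ico 0 T, ∀ x ∈ Ω, ∀ s ∈ Ioc t T, gp t x ≤ g s x := by
    intro t ht x hx s hs
    rw [hgpdef]
    exact csInf_le (hIocbdd t ht x hx) ⟨s, hs, rfl⟩
  have le_gp : ∀ t ∈ Ico 0 T, ∀ x : EuclideanSpace ℝ (Fin n), ∀ b : ℝ,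
      (∀ s ∈ Ioc t T, b ≤ g s x) → b ≤ gp t x := by
    intro t ht x b hb
    rw [hgpdef]
    refine le_csInf (hIocne t ht x) ?_
    rintro _ ⟨s, hs, rfl⟩
    exact hb s hs
  have gp_lt : ∀ t ∈ Ico 0 T, ∀ x : EuclideanSpace ℝ (Fin n), ∀ b : ℝ,
      gp t x < b → ∃ s ∈ Ioc t T, g s x < b := by
    intro t ht x b hb
    rw [hgpdef] at hb
    obtain ⟨a, ⟨s, hs, rfl⟩, ha⟩ := exists_lt_of_csInf_lt (hIocne t ht x) hb
    exact ⟨s, hs, ha⟩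
  have gm_le : ∀ t ∈ Ioc 0 T, ∀ x : EuclideanSpace ℝ (Fin n), ∀ b : ℝ,
      (∀ s ∈ Ico 0 t, g s x ≤ b) → gm t x ≤ b := by
    intro t ht x b hb
    rw [hgmdef]
    refine csSup_le (hIcone t ht x) ?_
    rintro _ ⟨s, hs, rfl⟩
    exact hb s hs
  have le_gm : ∀ t ∈ Ioc 0 T, ∀ x ∈ Ω, ∀ s ∈ Ico 0 t, g s x ≤ gm t x := by
    intro t ht x hx s hs
    rw [hgmdef]
    exact le_csSup (hIcobdd t ht x hx) ⟨s, hs, rfl⟩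
  have gm_gt : ∀ t ∈ Ioc 0 T, ∀ x : EuclideanSpace ℝ (Fin n), ∀ b : ℝ,
      b < gm t x → ∃ s ∈ Ico 0 t, b < g s x := by
    intro t ht x b hb
    rw [hgmdef] at hb
    obtain ⟨a, ⟨s, hs, rfl⟩, ha⟩ := exists_lt_of_lt_csSup (hIcone t ht x) hb
    exact ⟨s, hs, ha⟩
  -- one-sided equicontinuity of gp and gm
  have hgpK : ∀ t ∈ Ico 0 T, ∀ K : Set (EuclideanSpace ℝ (Fin n)), K ⊆ Ω → IsCompact K →
      ∀ η > (0:ℝ), ∃ δ > (0:ℝ), ∀ x ∈ K, ∀ y ∈ K, dist x y ≤ δ → gp t x ≤ gp t y + η := by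
    intro t ht K hKΩ hK η hη
    obtain ⟨δ, hδ, hδ'⟩ := hgequi K hKΩ hK η hη
    refine ⟨δ, hδ, fun x hx y hy hxy => ?_⟩
    have hb : gp t x - η ≤ gp t y := by
      refine le_gp t ht y _ fun s hs => ?_
      have h1 : gp t x ≤ g s x := gp_le t ht x (hKΩ hx) s hs
      have h2 := (abs_le.1 (hδ' s ⟨ht.1.trans hs.1.le, hs.2⟩ x hx y hy hxy)).2
      linarith
    linarith
  have hgmK : ∀ t ∈ Ioc 0 T, ∀ K : Set (EuclideanSpace ℝ (Fin n)), K ⊆ Ω → IsCompact K →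
      ∀ η > (0:ℝ), ∃ δ > (0:ℝ), ∀ x ∈ K, ∀ y ∈ K, dist x y ≤ δ → gm t x ≤ gm t y + η := by
    intro t ht K hKΩ hK η hη
    obtain ⟨δ, hδ, hδ'⟩ := hgequi K hKΩ hK η hη
    refine ⟨δ, hδ, fun x hx y hy hxy => ?_⟩
    refine gm_le t ht x _ fun s hs => ?_
    have h1 : g s y ≤ gm t y := le_gm t ht y (hKΩ hy) s hs
    have h2 := (abs_le.1 (hδ' s ⟨hs.1, hs.2.le.trans ht.2⟩ x hx y hy hxy)).2
    linarith
  -- continuity of gp and gm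
  have hgpcont : ∀ t ∈ Icc 0 T, ContinuousOn (gp t) Ω := by
    intro t ht
    rcases eq_or_lt_of_le ht.2 with heq | htT
    · have hz : ∀ x, gp t x = 0 := by
        intro x
        rw [hgpdef]
        simp [heq, Real.sInf_empty]
      exact (continuousOn_const (c := (0:ℝ))).congr fun x _ => hz x
    · exact contOfEqui _ fun K hKΩ hK η hη => hgpK t ⟨ht.1, htT⟩ K hKΩ hK η hη
  have hgmcont : ∀ t ∈ Icc 0 T, ContinuousOn (gm t) Ω := by
    intro t ht
    rcases eq_or_lt_of_le ht.1 with heq | ht0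
    · have hz : ∀ x, gm t x = 0 := by
        intro x
        rw [hgmdef]
        simp [← heq, Real.sSup_empty]
      exact (continuousOn_const (c := (0:ℝ))).congr fun x _ => hz x
    · exact contOfEqui _ fun K hKΩ hK η hη => hgmK t ⟨ht0, ht.2⟩ K hKΩ hK η hη
  -- uniform one-sided convergence: right limits
  have hgpU : ∀ t ∈ Ico 0 T, ∀ K : Set (EuclideanSpace ℝ (Fin n)), K ⊆ Ω → IsCompact K →
      TendstoUniformlyOn (fun s => g s) (gp t) (𝓝[>] t) K := by
    intro t ht K hKΩ hK
    rcases K.eq_empty_or_nonempty with rfl | ⟨x0, hx0⟩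
    · exact tendstoUniformlyOn_empty
    rw [Metric.tendstoUniformlyOn_iff]
    intro ε hε
    obtain ⟨r, hr, hrK⟩ := hK.exists_cthickening_subset_open hΩ hKΩ
    have hK' : IsCompact (cthickening r K) := hK.cthickening
    obtain ⟨δ1, hδ1, hδ1'⟩ := hgequi _ hrK hK' (ε/8) (by linarith)
    obtain ⟨δ2, hδ2, hδ2'⟩ := hgpK t ht _ hrK hK' (ε/8) (by linarith)
    set δ : ℝ := min δ1 δ2 with hδdef
    have hδ : 0 < δ := lt_min hδ1 hδ2
    set ρ : ℝ := min δ r / 2 with hρdef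
    have hρ : 0 < ρ := by positivity
    obtain ⟨tfin, htfin⟩ := hK.elim_finite_subcover
      (fun y : K => Metric.ball (y : EuclideanSpace ℝ (Fin n)) ρ)
      (fun y => Metric.isOpen_ball)
      (fun y hy => mem_iUnion.2 ⟨⟨y, hy⟩, Metric.mem_ball_self hρ⟩)
    have hsel : ∀ i : K, ∃ s ∈ Ioc t T,
        g s (i : EuclideanSpace ℝ (Fin n)) < gp t (i : EuclideanSpace ℝ (Fin n)) + ε/4 :=
      fun i => gp_lt t ht (i : EuclideanSpace ℝ (Fin n))
        (gp t (i : EuclideanSpace ℝ (Fin n)) + ε/4) (by linarith)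
    choose sel hsel1 hsel2 using hsel
    obtain ⟨i0, hi0, -⟩ : ∃ i ∈ tfin, x0 ∈ Metric.ball (i : EuclideanSpace ℝ (Fin n)) ρ := by
      simpa using htfin hx0
    have htne : tfin.Nonempty := ⟨i0, hi0⟩
    have hts : t < tfin.inf' htne sel := (Finset.lt_inf'_iff htne).2 fun i hi => (hsel1 i).1
    have hsT : tfin.inf' htne sel ≤ T := le_trans (Finset.inf'_le sel hi0) (hsel1 i0).2
    filter_upwards [Ioc_mem_nhdsGT hts] with s hs x hx
    obtain ⟨i, hi, hxi⟩ : ∃ i ∈ tfin, x ∈ Metric.ball (i : EuclideanSpace ℝ (Fin n)) ρ := by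
      simpa using htfin hx
    have hsIoc : s ∈ Ioc t T := ⟨hs.1, hs.2.trans hsT⟩
    have hsIcc : s ∈ Icc 0 T := ⟨ht.1.trans hsIoc.1.le, hsIoc.2⟩
    have h1 : gp t x ≤ g s x := gp_le t ht x (hKΩ hx) s hsIoc
    have hxK' : x ∈ cthickening r K := self_subset_cthickening _ hx
    have hiK' : (i : EuclideanSpace ℝ (Fin n)) ∈ cthickening r K :=
      self_subset_cthickening _ i.2
    have hdist : dist x (i : EuclideanSpace ℝ (Fin n)) ≤ δ := by
      have hb := mem_ball.1 hxi
      have hρδ : ρ ≤ δ / 2 := by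
        rw [hρdef]
        have := min_le_left δ r
        linarith
      linarith
    have h2 : g s x ≤ g s (i : EuclideanSpace ℝ (Fin n)) + ε/8 := by
      have := (abs_le.1 (hδ1' s hsIcc x hxK' (i : EuclideanSpace ℝ (Fin n)) hiK'
        (hdist.trans (min_le_left _ _)))).2
      linarith
    have h3 : g s (i : EuclideanSpace ℝ (Fin n)) ≤ g (sel i) (i : EuclideanSpace ℝ (Fin n)) :=
      hgmono s (sel i) hsIcc.1 (hs.2.trans (Finset.inf'_le sel hi)) (hsel1 i).2 _ (hKΩ i.2)
    have h4 := hsel2 i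
    have h5 : gp t (i : EuclideanSpace ℝ (Fin n)) ≤ gp t x + ε/8 :=
      hδ2' (i : EuclideanSpace ℝ (Fin n)) hiK' x hxK'
        (by rw [dist_comm]; exact hdist.trans (min_le_right _ _))
    rw [Real.dist_eq]
    exact abs_lt.2 ⟨by linarith, by linarith⟩
  -- uniform one-sided convergence: left limits
  have hgmU : ∀ t ∈ Ioc 0 T, ∀ K : Set (EuclideanSpace ℝ (Fin n)), K ⊆ Ω → IsCompact K →
      TendstoUniformlyOn (fun s => g s) (gm t) (𝓝[<] t) K := by
    intro t ht K hKΩ hK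
    rcases K.eq_empty_or_nonempty with rfl | ⟨x0, hx0⟩
    · exact tendstoUniformlyOn_empty
    rw [Metric.tendstoUniformlyOn_iff]
    intro ε hε
    obtain ⟨r, hr, hrK⟩ := hK.exists_cthickening_subset_open hΩ hKΩ
    have hK' : IsCompact (cthickening r K) := hK.cthickening
    obtain ⟨δ1, hδ1, hδ1'⟩ := hgequi _ hrK hK' (ε/8) (by linarith)
    obtain ⟨δ2, hδ2, hδ2'⟩ := hgmK t ht _ hrK hK' (ε/8) (by linarith)
    set δ : ℝ := min δ1 δ2 with hδdef
    have hδ : 0 < δ := lt_min hδ1 hδ2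
    set ρ : ℝ := min δ r / 2 with hρdef
    have hρ : 0 < ρ := by positivity
    obtain ⟨tfin, htfin⟩ := hK.elim_finite_subcover
      (fun y : K => Metric.ball (y : EuclideanSpace ℝ (Fin n)) ρ)
      (fun y => Metric.isOpen_ball)
      (fun y hy => mem_iUnion.2 ⟨⟨y, hy⟩, Metric.mem_ball_self hρ⟩)
    have hsel : ∀ i : K, ∃ s ∈ Ico 0 t,
        gm t (i : EuclideanSpace ℝ (Fin n)) - ε/4 < g s (i : EuclideanSpace ℝ (Fin n)) :=
      fun i => gm_gt t ht (i : EuclideanSpace ℝ (Fin n))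
        (gm t (i : EuclideanSpace ℝ (Fin n)) - ε/4) (by linarith)
    choose sel hsel1 hsel2 using hsel
    obtain ⟨i0, hi0, -⟩ : ∃ i ∈ tfin, x0 ∈ Metric.ball (i : EuclideanSpace ℝ (Fin n)) ρ := by
      simpa using htfin hx0
    have htne : tfin.Nonempty := ⟨i0, hi0⟩
    have hts : tfin.sup' htne sel < t := (Finset.sup'_lt_iff htne).2 fun i hi => (hsel1 i).2
    have hs0 : 0 ≤ tfin.sup' htne sel := le_trans (hsel1 i0).1 (Finset.le_sup' sel hi0)
    filter_upwards [Ico_mem_nhdsLT hts] with s hs x hx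
    obtain ⟨i, hi, hxi⟩ : ∃ i ∈ tfin, x ∈ Metric.ball (i : EuclideanSpace ℝ (Fin n)) ρ := by
      simpa using htfin hx
    have hsIco : s ∈ Ico 0 t := ⟨hs0.trans hs.1, hs.2⟩
    have hsIcc : s ∈ Icc 0 T := ⟨hsIco.1, hsIco.2.le.trans ht.2⟩
    have h1 : g s x ≤ gm t x := le_gm t ht x (hKΩ hx) s hsIco
    have hxK' : x ∈ cthickening r K := self_subset_cthickening _ hx
    have hiK' : (i : EuclideanSpace ℝ (Fin n)) ∈ cthickening r K :=
      self_subset_cthickening _ i.2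
    have hdist : dist x (i : EuclideanSpace ℝ (Fin n)) ≤ δ := by
      have hb := mem_ball.1 hxi
      have hρδ : ρ ≤ δ / 2 := by
        rw [hρdef]
        have := min_le_left δ r
        linarith
      linarith
    have h2 : g s (i : EuclideanSpace ℝ (Fin n)) ≤ g s x + ε/8 := by
      have := (abs_le.1 (hδ1' s hsIcc x hxK' (i : EuclideanSpace ℝ (Fin n)) hiK'
        (hdist.trans (min_le_left _ _)))).1
      linarith
    have h3 : g (sel i) (i : EuclideanSpace ℝ (Fin n)) ≤ g s (i : EuclideanSpace ℝ (Fin n)) :=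
      hgmono (sel i) s (hsel1 i).1 ((Finset.le_sup' sel hi).trans hs.1) hsIcc.2 _ (hKΩ i.2)
    have h4 := hsel2 i
    have h5 : gm t x ≤ gm t (i : EuclideanSpace ℝ (Fin n)) + ε/8 :=
      hδ2' x hxK' (i : EuclideanSpace ℝ (Fin n)) hiK' (hdist.trans (min_le_right _ _))
    rw [Real.dist_eq]
    exact abs_lt.2 ⟨by linarith, by linarith⟩
  exact ⟨φ, hφm, g, hgcont, hgmono, hUconv, gp, gm,
    fun t ht => ⟨hgpcont t ht, hgmcont t ht⟩, hgpU, hgmU⟩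
end

section
/- (λ-convexity of the cohesive energy.) Let Ω ⊆ ℝⁿ be a bounded measurable set, let γ : Ω → [0,∞) be measurable, and let δ^a, δ^b : Ω → [0,∞) be measurable with δ^a − δ^b ∈ L²(Ω). Then for every θ ∈ [0,1]: ∫_Ω Φ(θδ^a(x) + (1−θ)δ^b(x), γ(x)) dx ≤ θ∫_Ω Φ(δ^a(x), γ(x)) dx + (1−θ)∫_Ω Φ(δ^b(x), γ(x)) dx + (λ/2)·θ(1−θ)·‖δ^a − δ^b‖²_{L²(Ω)}. -/
set_option autoImplicit false

open Set MeasureTheory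


lemma aux_sq_deriv (c : ℝ) {y : ℝ} (s : Set ℝ) :
    HasDerivWithinAt (fun w : ℝ => c * w ^ 2) (2 * c * y) s y := by
  have := ((hasDerivWithinAt_pow 2 y (s := s)).const_mul c)
  exact this.congr_deriv (by simp; ring)

lemma aux_quad_deriv (c K : ℝ) {y : ℝ} (s : Set ℝ) :
    HasDerivWithinAt (fun w : ℝ => c * w ^ 2 + K) (2 * c * y) s y :=
  (aux_sq_deriv c s).add_const K

lemma aux_lin_deriv (c : ℝ) {y : ℝ} (s : Set ℝ) :
    HasDerivWithinAt (fun w : ℝ => c * w) c s y :=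
  ((hasDerivWithinAt_id y s).const_mul c).congr_deriv (mul_one c)

section Aux

variable {ψ ψd ψdd : ℝ → ℝ} {lam : ℝ}

lemma aux_psd_nonneg (hmono : StrictMonoOn ψ (Ici (0:ℝ)))
    (hconc : ConcaveOn ℝ (Ici (0:ℝ)) ψ)
    (hd1 : ∀ z ∈ Ici (0:ℝ), HasDerivWithinAt ψ (ψd z) (Ici (0:ℝ)) z) :
    ∀ z ∈ Ici (0:ℝ), 0 ≤ ψd z := by
  intro z hz
  have h1 : (z:ℝ) < z + 1 := lt_add_one z
  have hz1 : z + 1 ∈ Ici (0:ℝ) := by simp at hz ⊢; linarith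
  have hs := hconc.slope_le_of_hasDerivWithinAt hz hz1 h1 (hd1 z hz)
  rw [slope_def_field] at hs
  have hlt : ψ z < ψ (z + 1) := hmono hz hz1 h1
  have hq : 0 ≤ (ψ (z+1) - ψ z) / (z + 1 - z) := by
    apply div_nonneg <;> linarith
  linarith

lemma aux_tangent (hconc : ConcaveOn ℝ (Ici (0:ℝ)) ψ)
    (hd1 : ∀ z ∈ Ici (0:ℝ), HasDerivWithinAt ψ (ψd z) (Ici (0:ℝ)) z)
    (hψ0 : ψ 0 = 0) :
    ∀ z ∈ Ici (0:ℝ), z * ψd z ≤ ψ z := by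
  intro z hz
  rcases eq_or_lt_of_le (show (0:ℝ) ≤ z from hz) with h0 | h0
  · simp [← h0, hψ0]
  · have hs := hconc.le_slope_of_hasDerivWithinAt (by simp) hz h0 (hd1 z hz)
    rw [slope_def_field, hψ0, sub_zero, sub_zero] at hs
    calc z * ψd z ≤ z * (ψ z / z) := mul_le_mul_of_nonneg_left hs (le_of_lt h0)
      _ = ψ z := by field_simp

lemma aux_h_mono (hlam : 0 < lam)
    (hd2 : ∀ z ∈ Ici (0:ℝ), HasDerivWithinAt ψd (ψdd z) (Ici (0:ℝ)) z)
    (hlow : ∀ z ∈ Ici (0:ℝ), -lam ≤ ψdd z) :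
    MonotoneOn (fun t => ψd t + lam * t) (Ici (0:ℝ)) := by
  apply monotoneOn_of_hasDerivWithinAt_nonneg (f' := fun t => ψdd t + lam) (convex_Ici 0)
  · exact fun t ht => ((hd2 t ht).add (aux_lin_deriv lam _)).continuousWithinAt
  · intro t ht
    exact ((hd2 t (interior_subset ht)).add (aux_lin_deriv lam _)).mono interior_subset
  · intro t ht
    rw [interior_Ici] at ht
    have := hlow t (mem_Ici.2 (le_of_lt ht))
    linarith

/-- The key convexity lemma: `Φ(·,z) + (lam/2)·(·)²` is convex on `[0,∞)`. -/
lemma aux_key (hlam : 0 < lam)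
    (hmono : StrictMonoOn ψ (Ici (0:ℝ)))
    (hconc : ConcaveOn ℝ (Ici (0:ℝ)) ψ)
    (hd1 : ∀ z ∈ Ici (0:ℝ), HasDerivWithinAt ψ (ψd z) (Ici (0:ℝ)) z)
    (hd2 : ∀ z ∈ Ici (0:ℝ), HasDerivWithinAt ψd (ψdd z) (Ici (0:ℝ)) z)
    (hlow : ∀ z ∈ Ici (0:ℝ), -lam ≤ ψdd z)
    (z : ℝ) (hz : 0 ≤ z) :
    ConvexOn ℝ (Ici (0:ℝ))
      (fun y => (if y < z then ψd z / (2*z) * y^2 + ψ z - z * ψd z / 2 else ψ y)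
        + lam/2 * y^2) := by
  have hψdz : 0 ≤ ψd z := aux_psd_nonneg hmono hconc hd1 z hz
  set g : ℝ → ℝ := fun y =>
    (if y < z then ψd z / (2*z) * y^2 + ψ z - z * ψd z / 2 else ψ y) + lam/2 * y^2 with hg
  set D : ℝ → ℝ := fun y => (if y < z then ψd z * y / z else ψd y) + lam * y with hD
  -- derivative of g within Ici 0
  have hpsi_side : ∀ y ∈ Ici (0:ℝ), HasDerivWithinAt (fun w => ψ w + lam/2 * w^2)
      (ψd y + lam * y) (Ici (0:ℝ)) y := by
    intro y hy
    exact ((hd1 y hy).add (aux_sq_deriv (lam/2) _)).congr_deriv (by ring)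
  have hder : ∀ y ∈ Ici (0:ℝ), HasDerivWithinAt g (D y) (Ici (0:ℝ)) y := by
    intro y hy
    rcases lt_trichotomy y z with hyz | hyz | hyz
    · -- y < z : near y (within Iio z), g is the quadratic
      have hz0 : 0 < z := lt_of_le_of_lt hy hyz
      have hbase : HasDerivWithinAt
          (fun w => (ψd z / (2*z) + lam/2) * w ^ 2 + (ψ z - z * ψd z / 2))
          (ψd z * y / z + lam * y) (Ici (0:ℝ)) y := by
        refine (aux_quad_deriv _ _ _).congr_deriv ?_
        field_simp
      have heq : g =ᶠ[nhdsWithin y (Ici (0:ℝ))]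
          (fun w => (ψd z / (2*z) + lam/2) * w ^ 2 + (ψ z - z * ψd z / 2)) := by
        filter_upwards [nhdsWithin_le_nhds (eventually_lt_nhds hyz)] with w hw
        simp only [hg, if_pos hw]; ring
      have := hbase.congr_of_eventuallyEq heq (by simp only [hg, if_pos hyz]; ring)
      simpa only [hD, if_pos hyz] using this
    · -- y = z : glue the two pieces
      by_cases hz0 : z = 0
      · subst hz0
        have hy0 : y = 0 := hyz
        subst hy0
        have : HasDerivWithinAt g (ψd 0 + lam * 0) (Ici (0:ℝ)) 0 :=
          (hpsi_side 0 hy).congr (fun w hw => by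
            simp only [hg, if_neg (not_lt.2 (mem_Ici.1 hw : (0:ℝ) ≤ w))])
          (by simp only [hg, if_neg (lt_irrefl (0:ℝ))])
        simpa only [hD, if_neg (lt_irrefl (0:ℝ))] using this
      · have hz0' : 0 < z := lt_of_le_of_ne hz (Ne.symm hz0)
        subst hyz
        -- left piece on Ici 0 ∩ Iic y
        have hleft : HasDerivWithinAt g (ψd y + lam * y) (Ici (0:ℝ) ∩ Iic y) y := by
          have hbase : HasDerivWithinAt
              (fun w => (ψd y / (2*y) + lam/2) * w ^ 2 + (ψ y - y * ψd y / 2))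
              (ψd y + lam * y) (Ici (0:ℝ) ∩ Iic y) y := by
            refine (aux_quad_deriv _ _ _).congr_deriv ?_
            field_simp
          refine hbase.congr (fun w hw => ?_) ?_
          · rcases lt_or_eq_of_le (mem_Iic.mp hw.2) with hlt | heqw
            · simp only [hg, if_pos hlt]; ring
            · subst heqw; simp only [hg, if_neg (lt_irrefl w)]; field_simp; ring
          · simp only [hg, if_neg (lt_irrefl y)]; field_simp; ring
        -- right piece on Ici 0 ∩ Ici y
        have hright : HasDerivWithinAt g (ψd y + lam * y) (Ici (0:ℝ) ∩ Ici y) y := by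
          refine ((hpsi_side y hy).mono inter_subset_left).congr (fun w hw => ?_) ?_
          · simp only [hg, if_neg (not_lt.2 (mem_Ici.1 hw.2))]
          · simp only [hg, if_neg (lt_irrefl y)]
        have := hleft.union hright
        rw [← inter_union_distrib_left, Iic_union_Ici, inter_univ] at this
        simpa only [hD, if_neg (lt_irrefl y)] using this
    · -- y > z : near y, g = ψ + quadratic
      have heq : g =ᶠ[nhdsWithin y (Ici (0:ℝ))] (fun w => ψ w + lam/2 * w^2) := by
        filter_upwards [nhdsWithin_le_nhds (eventually_gt_nhds hyz)] with w hw
        simp only [hg, if_neg (not_lt.2 (le_of_lt hw))]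
      have := (hpsi_side y hy).congr_of_eventuallyEq heq
        (by simp only [hg, if_neg (not_lt.2 (le_of_lt hyz))])
      simpa only [hD, if_neg (not_lt.2 (le_of_lt hyz))] using this
  -- conclude convexity
  have hcont : ContinuousOn g (Ici (0:ℝ)) := fun y hy => (hder y hy).continuousWithinAt
  have hderiv : ∀ x ∈ interior (Ici (0:ℝ)), deriv g x = D x := by
    intro x hx
    rw [interior_Ici] at hx
    exact ((hder x (mem_Ici.2 (le_of_lt hx))).hasDerivAt (Ici_mem_nhds hx)).deriv
  have hmonoD : ∀ a ∈ Ioi (0:ℝ), ∀ b ∈ Ioi (0:ℝ), a ≤ b → D a ≤ D b := by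
    have hh := aux_h_mono hlam hd2 hlow
    intro a ha b hb hab
    simp only [hD]
    by_cases haz : a < z
    · have hz0 : 0 < z := lt_trans ha haz
      by_cases hbz : b < z
      · rw [if_pos haz, if_pos hbz]
        have h1 : ψd z * a / z ≤ ψd z * b / z :=
          (div_le_div_iff_of_pos_right hz0).mpr (mul_le_mul_of_nonneg_left hab hψdz)
        nlinarith
      · rw [if_pos haz, if_neg hbz]
        push_neg at hbz
        have h1 : ψd z * a / z ≤ ψd z := by
          calc ψd z * a / z ≤ ψd z * z / z :=
                (div_le_div_iff_of_pos_right hz0).mpr (mul_le_mul_of_nonneg_left haz.le hψdz)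
            _ = ψd z := by field_simp
        have h2 := hh (le_of_lt hz0) (le_trans hz hbz) hbz
        simp only at h2
        nlinarith
    · push_neg at haz
      have hbz : ¬ b < z := not_lt.2 (le_trans haz hab)
      rw [if_neg (not_lt.2 haz), if_neg hbz]
      exact hh (le_trans hz haz) (le_trans hz (le_trans haz hab)) hab
  apply MonotoneOn.convexOn_of_deriv (convex_Ici 0) hcont
  · intro x hx
    rw [interior_Ici] at hx
    exact (((hder x (mem_Ici.2 (le_of_lt hx))).hasDerivAt (Ici_mem_nhds hx)).differentiableAt).differentiableWithinAt
  · intro a ha b hb hab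
    rw [hderiv a ha, hderiv b hb]
    rw [interior_Ici] at ha hb
    exact hmonoD a ha b hb hab

end Aux

section Aux2

variable {ψ ψd ψdd : ℝ → ℝ} {lam : ℝ}

lemma aux_pointwise (hlam : 0 < lam)
    (hmono : StrictMonoOn ψ (Ici (0:ℝ)))
    (hconc : ConcaveOn ℝ (Ici (0:ℝ)) ψ)
    (hd1 : ∀ z ∈ Ici (0:ℝ), HasDerivWithinAt ψ (ψd z) (Ici (0:ℝ)) z)
    (hd2 : ∀ z ∈ Ici (0:ℝ), HasDerivWithinAt ψd (ψdd z) (Ici (0:ℝ)) z)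
    (hlow : ∀ z ∈ Ici (0:ℝ), -lam ≤ ψdd z)
    (z : ℝ) (hz : 0 ≤ z) (a : ℝ) (ha : 0 ≤ a) (b : ℝ) (hb : 0 ≤ b)
    (θ : ℝ) (hθ : θ ∈ Icc (0:ℝ) 1) :
    (if θ * a + (1-θ) * b < z then
        ψd z / (2*z) * (θ * a + (1-θ) * b)^2 + ψ z - z * ψd z / 2
      else ψ (θ * a + (1-θ) * b))
      ≤ θ * (if a < z then ψd z / (2*z) * a^2 + ψ z - z * ψd z / 2 else ψ a)
        + (1-θ) * (if b < z then ψd z / (2*z) * b^2 + ψ z - z * ψd z / 2 else ψ b)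
        + lam/2 * θ * (1-θ) * (a - b)^2 := by
  have hkey := aux_key hlam hmono hconc hd1 hd2 hlow z hz
  have h := hkey.2 (mem_Ici.mpr ha) (mem_Ici.mpr hb) hθ.1 (by linarith [hθ.2] : (0:ℝ) ≤ 1 - θ)
    (by ring)
  simp only [smul_eq_mul] at h
  have hid : θ * a^2 + (1-θ) * b^2 - (θ * a + (1-θ) * b)^2 = θ * (1-θ) * (a-b)^2 := by ring
  nlinarith [h]

lemma aux_bound (hψmap : ∀ z ∈ Ici (0:ℝ), 0 ≤ ψ z)
    (hmono : StrictMonoOn ψ (Ici (0:ℝ)))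
    (hbdd : BddAbove (ψ '' Ici (0:ℝ)))
    (hconc : ConcaveOn ℝ (Ici (0:ℝ)) ψ)
    (hd1 : ∀ z ∈ Ici (0:ℝ), HasDerivWithinAt ψ (ψd z) (Ici (0:ℝ)) z)
    (hψ0 : ψ 0 = 0)
    (y : ℝ) (hy : 0 ≤ y) (z : ℝ) (hz : 0 ≤ z) :
    0 ≤ (if y < z then ψd z / (2*z) * y^2 + ψ z - z * ψd z / 2 else ψ y)
      ∧ (if y < z then ψd z / (2*z) * y^2 + ψ z - z * ψd z / 2 else ψ y)
        ≤ sSup (ψ '' Ici (0:ℝ)) := by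
  have hψdz : 0 ≤ ψd z := aux_psd_nonneg hmono hconc hd1 z hz
  have htan : z * ψd z ≤ ψ z := aux_tangent hconc hd1 hψ0 z hz
  have hzM : ψ z ≤ sSup (ψ '' Ici (0:ℝ)) := le_csSup hbdd ⟨z, hz, rfl⟩
  have hyM : ψ y ≤ sSup (ψ '' Ici (0:ℝ)) := le_csSup hbdd ⟨y, hy, rfl⟩
  by_cases h : y < z
  · rw [if_pos h]
    have hz0 : 0 < z := lt_of_le_of_lt hy h
    have hc : 0 ≤ ψd z / (2*z) := div_nonneg hψdz (by linarith)
    constructor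
    · have h1 : 0 ≤ ψd z / (2*z) * y^2 := mul_nonneg hc (sq_nonneg y)
      nlinarith
    · have h2 : ψd z / (2*z) * y^2 ≤ ψd z / (2*z) * z^2 := by
        apply mul_le_mul_of_nonneg_left _ hc
        nlinarith
      have h3 : ψd z / (2*z) * z^2 = z * ψd z / 2 := by field_simp
      nlinarith
  · rw [if_neg h]
    exact ⟨hψmap y hy, hyM⟩

end Aux2

/-- λ-convexity of the cohesive energy: for measurable nonnegative
fields `δᵃ, δᵇ, γ` on a bounded measurable set `Ω` with `δᵃ - δᵇ ∈ L²(Ω)`, and every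
`θ ∈ [0,1]`,
`∫ Φ(θδᵃ + (1-θ)δᵇ, γ) ≤ θ∫ Φ(δᵃ,γ) + (1-θ)∫ Φ(δᵇ,γ) + (λ/2)θ(1-θ)‖δᵃ-δᵇ‖²_{L²}`. -/
theorem stmt_18 (ψ ψd ψdd : ℝ → ℝ) (lam : ℝ) (hlam : 0 < lam)
    (hψmap : ∀ z ∈ Ici (0:ℝ), 0 ≤ ψ z)
    (hmono : StrictMonoOn ψ (Ici (0:ℝ)))
    (hbdd : BddAbove (ψ '' Ici (0:ℝ)))
    (hconc : ConcaveOn ℝ (Ici (0:ℝ)) ψ)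
    (hd1 : ∀ z ∈ Ici (0:ℝ), HasDerivWithinAt ψ (ψd z) (Ici (0:ℝ)) z)
    (hd2 : ∀ z ∈ Ici (0:ℝ), HasDerivWithinAt ψd (ψdd z) (Ici (0:ℝ)) z)
    (hd2cont : ContinuousOn ψdd (Ici (0:ℝ)))
    (hψ0 : ψ 0 = 0) (hψd0 : 0 < ψd 0)
    (hlow : ∀ z ∈ Ici (0:ℝ), -lam ≤ ψdd z)
    (Φ : ℝ → ℝ → ℝ)
    (hΦ : ∀ y ∈ Ici (0:ℝ), ∀ z ∈ Ici (0:ℝ),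
      Φ y z = if y < z then ψd z / (2*z) * y^2 + ψ z - z * ψd z / 2 else ψ y)
    (n : ℕ) (Ω : Set (Fin n → ℝ)) (hΩmeas : MeasurableSet Ω)
    (hΩbdd : Bornology.IsBounded Ω)
    (γ δa δb : (Fin n → ℝ) → ℝ)
    (hγmeas : Measurable γ) (hγ0 : ∀ x, 0 ≤ γ x)
    (hδameas : Measurable δa) (hδa0 : ∀ x, 0 ≤ δa x)
    (hδbmeas : Measurable δb) (hδb0 : ∀ x, 0 ≤ δb x)
    (hL2 : Integrable (fun x => (δa x - δb x)^2) (volume.restrict Ω))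
    (θ : ℝ) (hθ : θ ∈ Icc (0:ℝ) 1) :
    (∫ x in Ω, Φ (θ * δa x + (1 - θ) * δb x) (γ x))
      ≤ θ * (∫ x in Ω, Φ (δa x) (γ x)) + (1 - θ) * (∫ x in Ω, Φ (δb x) (γ x))
        + lam / 2 * θ * (1 - θ) * (∫ x in Ω, (δa x - δb x)^2) := by
  have hθ1 : 0 ≤ 1 - θ := by linarith [hθ.2]
  have hmix0 : ∀ x, 0 ≤ θ * δa x + (1 - θ) * δb x := fun x =>
    add_nonneg (mul_nonneg hθ.1 (hδa0 x)) (mul_nonneg hθ1 (hδb0 x))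
  -- continuous extensions of ψ, ψd
  have hψc : ContinuousOn ψ (Ici (0:ℝ)) := fun z hz => (hd1 z hz).continuousWithinAt
  have hψdc : ContinuousOn ψd (Ici (0:ℝ)) := fun z hz => (hd2 z hz).continuousWithinAt
  set ψm : ℝ → ℝ := fun t => ψ (max t 0) with hψm
  set ψdm : ℝ → ℝ := fun t => ψd (max t 0) with hψdm
  have hψmc : Continuous ψm :=
    hψc.comp_continuous (continuous_id.max continuous_const) (fun t => mem_Ici.2 (le_max_right t 0))
  have hψdmc : Continuous ψdm :=
    hψdc.comp_continuous (continuous_id.max continuous_const) (fun t => mem_Ici.2 (le_max_right t 0))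
  have hψmeq : ∀ t, 0 ≤ t → ψm t = ψ t := fun t ht => by rw [hψm]; simp [max_eq_left ht]
  have hψdmeq : ∀ t, 0 ≤ t → ψdm t = ψd t := fun t ht => by rw [hψdm]; simp [max_eq_left ht]
  -- the three integrands
  set F : ((Fin n → ℝ) → ℝ) → (Fin n → ℝ) → ℝ := fun δ x =>
    if δ x < γ x then ψdm (γ x) / (2 * γ x) * (δ x)^2 + ψm (γ x) - γ x * ψdm (γ x) / 2
    else ψm (δ x) with hF
  have hFeq : ∀ (δ : (Fin n → ℝ) → ℝ), (∀ x, 0 ≤ δ x) →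
      ∀ x, Φ (δ x) (γ x) = F δ x := by
    intro δ hδ x
    rw [hΦ (δ x) (hδ x) (γ x) (hγ0 x), hF]
    simp only [hψmeq _ (hγ0 x), hψdmeq _ (hγ0 x), hψmeq _ (hδ x)]
  have hFmeas : ∀ (δ : (Fin n → ℝ) → ℝ), Measurable δ → Measurable (F δ) := by
    intro δ hδ
    apply Measurable.ite (measurableSet_lt hδ hγmeas)
    · exact ((((hψdmc.measurable.comp hγmeas).div
        ((measurable_const.mul hγmeas))).mul (hδ.pow_const 2)).add
        (hψmc.measurable.comp hγmeas)).sub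
        ((hγmeas.mul (hψdmc.measurable.comp hγmeas)).div measurable_const)
    · exact hψmc.measurable.comp hδ
  set M : ℝ := sSup (ψ '' Ici (0:ℝ)) with hM
  have hFbd : ∀ (δ : (Fin n → ℝ) → ℝ), (∀ x, 0 ≤ δ x) →
      ∀ x, 0 ≤ F δ x ∧ F δ x ≤ M := by
    intro δ hδ x
    have := aux_bound hψmap hmono hbdd hconc hd1 hψ0 (δ x) (hδ x) (γ x) (hγ0 x)
    rw [hF]
    simp only [hψmeq _ (hγ0 x), hψdmeq _ (hγ0 x), hψmeq _ (hδ x)]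
    exact this
  -- finite measure
  have hfin : volume Ω < ⊤ := hΩbdd.measure_lt_top
  haveI : IsFiniteMeasure (volume.restrict Ω) :=
    ⟨by rwa [Measure.restrict_apply_univ]⟩
  have hFint : ∀ (δ : (Fin n → ℝ) → ℝ), Measurable δ → (∀ x, 0 ≤ δ x) →
      Integrable (F δ) (volume.restrict Ω) := by
    intro δ hδm hδ0
    refine Integrable.mono' (integrable_const M) (hFmeas δ hδm).aestronglyMeasurable
      (Filter.Eventually.of_forall fun x => ?_)
    rw [Real.norm_eq_abs, abs_of_nonneg (hFbd δ hδ0 x).1]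
    exact (hFbd δ hδ0 x).2
  have hmixmeas : Measurable (fun x => θ * δa x + (1 - θ) * δb x) :=
    (hδameas.const_mul θ).add (hδbmeas.const_mul (1-θ))
  have hIa := hFint δa hδameas hδa0
  have hIb := hFint δb hδbmeas hδb0
  have hIm := hFint _ hmixmeas hmix0
  -- rewrite the integrals
  rw [integral_congr_ae (Filter.Eventually.of_forall (hFeq _ hmix0)),
    integral_congr_ae (Filter.Eventually.of_forall (hFeq _ hδa0)),
    integral_congr_ae (Filter.Eventually.of_forall (hFeq _ hδb0))]
  -- pointwise inequality
  have hpt : ∀ x, F (fun x => θ * δa x + (1 - θ) * δb x) x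
      ≤ θ * F δa x + (1 - θ) * F δb x + lam/2 * θ * (1-θ) * (δa x - δb x)^2 := by
    intro x
    have := aux_pointwise hlam hmono hconc hd1 hd2 hlow (γ x) (hγ0 x)
      (δa x) (hδa0 x) (δb x) (hδb0 x) θ hθ
    rw [hF]
    simp only [hψmeq _ (hγ0 x), hψdmeq _ (hγ0 x), hψmeq _ (hδa0 x), hψmeq _ (hδb0 x),
      hψmeq _ (hmix0 x)]
    convert this using 2 <;> ring
  calc (∫ x in Ω, F (fun x => θ * δa x + (1 - θ) * δb x) x)
      ≤ ∫ x in Ω, (θ * F δa x + (1 - θ) * F δb x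
          + lam/2 * θ * (1-θ) * (δa x - δb x)^2) := by
        refine integral_mono hIm ?_ hpt
        exact ((hIa.const_mul θ).add (hIb.const_mul (1-θ))).add
          (hL2.const_mul (lam/2 * θ * (1-θ)))
    _ = θ * (∫ x in Ω, F δa x) + (1 - θ) * (∫ x in Ω, F δb x)
        + lam / 2 * θ * (1 - θ) * (∫ x in Ω, (δa x - δb x)^2) := by
        have h1 : Integrable (fun x => θ * F δa x + (1 - θ) * F δb x)
            (volume.restrict Ω) := (hIa.const_mul θ).add (hIb.const_mul (1-θ))
        have h2 : Integrable (fun x => lam/2 * θ * (1-θ) * (δa x - δb x)^2)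
            (volume.restrict Ω) := hL2.const_mul _
        rw [integral_add h1 h2, integral_add (hIa.const_mul θ) (hIb.const_mul (1-θ)),
          integral_const_mul, integral_const_mul, integral_const_mul]
end
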